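/- arXiv:1808.04830 — 8 statements merged into one kernel-verified Lean document; each statement's English description precedes it below -/
import Mathlib

section
/- For every homeomorphism ψ : 𝕋 → 𝕋 of the unit circle onto itself there exists a Möbius transformation μ(z) = ν·(z−a)/(1−ā·z), with |a| < 1 and ν ∈ 𝕋, such that the composition ψ ∘ μ is a normalized circle homeomorphism. -/
open Complex Metric Set Real

/-- The closed arc of the unit circle `{e^{it} : a ≤ t ≤ b}`. -/
noncomputable def arcCC (a b : ℝ) : Set ℂ :=
  (fun t : ℝ => Complex.exp (t * Complex.I)) '' Set.Icc a b

/-- A circle homeomorphism `ψ : 𝕋 → 𝕋` is *normalized* if the image of every arc of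
length `2π/3` is an arc of length at most `4π/3` (equivalently, is contained in some
arc of length `4π/3`). -/
def IsNormalized (ψ : ℂ → ℂ) : Prop :=
  ∀ θ : ℝ, ∃ θ' : ℝ, ψ '' arcCC θ (θ + 2 * π / 3) ⊆ arcCC θ' (θ' + 4 * π / 3)

namespace MNorm

noncomputable def zi (i : ℤ) : ℂ := Complex.exp ((2*π*i/3 : ℝ) * Complex.I)

def Ecube : Set ℂ := Set.range zi

noncomputable def Aarc (j : ℤ) : Set ℂ := arcCC (2*π*j/3) (2*π*(j+1)/3)

lemma expI_sphere (t : ℝ) : Complex.exp ((t:ℝ) * Complex.I) ∈ sphere (0:ℂ) 1 := by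
  simp [Complex.norm_exp_ofReal_mul_I]

lemma arc_sub_sphere (a b : ℝ) : arcCC a b ⊆ sphere (0:ℂ) 1 := by
  rintro z ⟨t, _, rfl⟩; exact expI_sphere t

lemma arc_mono {a b a' b' : ℝ} (h1 : a' ≤ a) (h2 : b ≤ b') : arcCC a b ⊆ arcCC a' b' :=
  Set.image_mono (Set.Icc_subset_Icc h1 h2)

lemma arc_union {a b c : ℝ} (h1 : a ≤ b) (h2 : b ≤ c) :
    arcCC a c = arcCC a b ∪ arcCC b c := by
  rw [arcCC, arcCC, arcCC, ← Set.image_union, Set.Icc_union_Icc_eq_Icc h1 h2]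

lemma exp_shift (t : ℝ) (n : ℤ) :
    Complex.exp (((t + 2*π*n : ℝ)) * Complex.I) = Complex.exp ((t:ℝ) * Complex.I) := by
  push_cast
  rw [add_mul, Complex.exp_add]
  have : ((2*(π:ℂ)*n) * Complex.I) = (n:ℤ) * (2*π*Complex.I) := by push_cast; ring
  rw [this, Complex.exp_int_mul_two_pi_mul_I, mul_one]

lemma arc_shift (a b : ℝ) (n : ℤ) : arcCC (a + 2*π*n) (b + 2*π*n) = arcCC a b := by
  ext z
  constructor
  · rintro ⟨t, ⟨ht1, ht2⟩, rfl⟩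
    refine ⟨t - 2*π*n, ⟨by linarith, by linarith⟩, ?_⟩
    show Complex.exp _ = _
    rw [← exp_shift (t - 2*π*n) n]
    norm_num
  · rintro ⟨t, ⟨ht1, ht2⟩, rfl⟩
    exact ⟨t + 2*π*n, ⟨by linarith, by linarith⟩, exp_shift t n⟩

lemma zinj {i j : ℤ} (h : zi i = zi j) : ∃ n : ℤ, i = j + 3*n := by
  rw [zi, zi, Complex.exp_eq_exp_iff_exists_int] at h
  obtain ⟨n, hn⟩ := h
  have h2 : ((2*π*i/3 : ℝ) : ℂ) = ((2*π*j/3 + 2*π*n : ℝ) : ℂ) := by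
    push_cast at hn ⊢
    have hI : (Complex.I : ℂ) ≠ 0 := Complex.I_ne_zero
    have hn' : ((2*(π:ℂ)*i/3) - (2*π*j/3 + 2*π*n)) * Complex.I = 0 := by
      linear_combination hn
    rcases mul_eq_zero.1 hn' with h | h
    · linear_combination h
    · exact absurd h hI
  have h3 : (2*π*i/3 : ℝ) = 2*π*j/3 + 2*π*n := by exact_mod_cast h2
  have hπ : (0:ℝ) < π := Real.pi_pos
  refine ⟨n, ?_⟩
  have : ((i:ℝ)) = j + 3*n := by
    field_simp at h3
    nlinarith [h3]
  exact_mod_cast this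

lemma zper (i : ℤ) : zi i = zi (i % 3) := by
  rw [zi, zi]
  have : (2*π*(i:ℝ)/3) = 2*π*((i % 3 : ℤ):ℝ)/3 + 2*π*((i/3 : ℤ):ℝ) := by
    have : (i:ℝ) = ((i % 3 : ℤ):ℝ) + 3*((i/3 : ℤ):ℝ) := by
      push_cast [Int.emod_def]; ring
    rw [this]; ring
  rw [this, exp_shift]

lemma expmul (x y : ℝ) :
    Complex.exp ((x:ℝ) * Complex.I) * Complex.exp ((y:ℝ) * Complex.I)
      = Complex.exp (((x+y : ℝ)) * Complex.I) := by
  rw [← Complex.exp_add]; push_cast; ring_nf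

lemma conj_expI (y : ℝ) :
    (starRingEnd ℂ) (Complex.exp ((y:ℝ) * Complex.I)) = Complex.exp (((-y : ℝ)) * Complex.I) := by
  rw [← Complex.exp_conj]
  congr 1
  simp [map_mul, Complex.conj_ofReal, Complex.conj_I]

lemma unit_expI (y : ℝ) :
    Complex.exp ((y:ℝ) * Complex.I) * (starRingEnd ℂ) (Complex.exp ((y:ℝ) * Complex.I)) = 1 := by
  rw [conj_expI, expmul]; simp

-- the half-angle trig identity

lemma trig_id (u0 u1 u2 : ℝ) :
    ((Real.sin (u2-u0) : ℝ) : ℂ) * Complex.exp ((u1:ℝ) * Complex.I)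
      = ((Real.sin (u2-u1) : ℝ) : ℂ) * Complex.exp ((u0:ℝ) * Complex.I)
        + ((Real.sin (u1-u0) : ℝ) : ℂ) * Complex.exp ((u2:ℝ) * Complex.I) := by
  rw [Complex.exp_mul_I, Complex.exp_mul_I, Complex.exp_mul_I]
  rw [← Complex.ofReal_cos, ← Complex.ofReal_sin,
      ← Complex.ofReal_cos, ← Complex.ofReal_sin,
      ← Complex.ofReal_cos, ← Complex.ofReal_sin]
  rw [Real.sin_sub, Real.sin_sub, Real.sin_sub]
  push_cast
  ring

lemma sin2_id (u0 u1 : ℝ) :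
    Complex.exp ((u1:ℝ) * Complex.I) * (starRingEnd ℂ) (Complex.exp ((u0:ℝ) * Complex.I))
      - Complex.exp ((u0:ℝ) * Complex.I) * (starRingEnd ℂ) (Complex.exp ((u1:ℝ) * Complex.I))
      = 2 * Complex.I * ((Real.sin (u1 - u0) : ℝ) : ℂ) := by
  rw [conj_expI, conj_expI, expmul, expmul]
  rw [Complex.exp_mul_I, Complex.exp_mul_I]
  rw [← Complex.ofReal_cos, ← Complex.ofReal_sin, ← Complex.ofReal_cos, ← Complex.ofReal_sin]
  rw [show u0 + -u1 = -(u1 - u0) from by ring, show u1 + -u0 = u1 - u0 from by ring]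
  rw [Real.cos_neg, Real.sin_neg]
  push_cast
  ring

lemma sphere_abs {z : ℂ} (hz : z ∈ sphere (0:ℂ) 1) : ‖z‖ = 1 := by
  simpa using mem_sphere_zero_iff_norm.1 hz

lemma abs_sphere {z : ℂ} (hz : ‖z‖ = 1) : z ∈ sphere (0:ℂ) 1 := by
  rw [mem_sphere_zero_iff_norm, hz]

lemma moeb_den_ne {a z : ℂ} (ha : ‖a‖ < 1) (hz : ‖z‖ = 1) :
    1 - (starRingEnd ℂ) a * z ≠ 0 := by
  intro h
  have h1 : (1:ℂ) = (starRingEnd ℂ) a * z := by linear_combination h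
  have : (1:ℝ) = ‖a‖ := by
    calc (1:ℝ) = ‖(1:ℂ)‖ := by simp
    _ = ‖(starRingEnd ℂ) a * z‖ := by rw [← h1]
    _ = ‖a‖ := by rw [norm_mul, Complex.norm_conj, hz, mul_one]
  linarith

lemma moeb_maps {a ν : ℂ} (ha : ‖a‖ < 1) (hν : ‖ν‖ = 1) :
    ∀ z ∈ sphere (0:ℂ) 1, ν * (z - a) / (1 - (starRingEnd ℂ) a * z) ∈ sphere (0:ℂ) 1 := by
  intro z hz
  have habsz := sphere_abs hz
  have hzz : z * (starRingEnd ℂ) z = 1 := by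
    rw [Complex.mul_conj]
    norm_cast
    rw [← Complex.sq_norm, habsz]; norm_num
  have hid : 1 - (starRingEnd ℂ) a * z = z * ((starRingEnd ℂ) z - (starRingEnd ℂ) a) := by
    rw [mul_sub, hzz]; ring
  have habs_den : ‖1 - (starRingEnd ℂ) a * z‖ = ‖z - a‖ := by
    rw [hid, norm_mul, habsz, one_mul, ← map_sub (starRingEnd ℂ) z a, Complex.norm_conj]
  have hza : ‖z - a‖ ≠ 0 := by
    intro h
    have : z = a := by
      have := norm_eq_zero.1 h
      linear_combination this
    rw [← this, habsz] at ha
    linarith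
  apply abs_sphere
  rw [norm_div, norm_mul, hν, one_mul, habs_den, div_self hza]

lemma moeb_inj {a ν : ℂ} (ha : ‖a‖ < 1) (hν0 : ν ≠ 0) :
    Set.InjOn (fun z => ν * (z - a) / (1 - (starRingEnd ℂ) a * z)) (sphere (0:ℂ) 1) := by
  intro z hz w hw h
  have hdz := moeb_den_ne ha (sphere_abs hz)
  have hdw := moeb_den_ne ha (sphere_abs hw)
  simp only at h
  rw [div_eq_div_iff hdz hdw] at h
  have h2 : (z - w) * (1 - a * (starRingEnd ℂ) a) = 0 := by
    have h3 := mul_left_cancel₀ hν0 (by linear_combination h :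
      ν * ((z - a) * (1 - (starRingEnd ℂ) a * w)) = ν * ((w - a) * (1 - (starRingEnd ℂ) a * z)))
    linear_combination h3
  have h4 : 1 - a * (starRingEnd ℂ) a ≠ 0 := by
    rw [Complex.mul_conj]
    intro h5
    have h6 : ((Complex.normSq a : ℝ) : ℂ) = 1 := by linear_combination -h5
    have h7 : Complex.normSq a = 1 := by exact_mod_cast h6
    have : ‖a‖ ^ 2 = 1 := by rw [Complex.sq_norm, h7]
    nlinarith [norm_nonneg a]
  have := (mul_eq_zero.1 h2).resolve_right h4
  exact sub_eq_zero.1 this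

lemma Aper (j n : ℤ) : Aarc (j + 3*n) = Aarc j := by
  have h1 : (2*π*((j + 3*n : ℤ):ℝ)/3) = 2*π*(j:ℝ)/3 + 2*π*n := by push_cast; ring
  have h2 : (2*π*(((j + 3*n : ℤ):ℝ)+1)/3) = 2*π*((j:ℝ)+1)/3 + 2*π*n := by push_cast; ring
  rw [Aarc, Aarc]
  push_cast
  rw [show 2*π*((j:ℝ) + 3*(n:ℝ))/3 = 2*π*(j:ℝ)/3 + 2*π*n from by ring,
      show 2*π*(((j:ℝ) + 3*(n:ℝ))+1)/3 = 2*π*((j:ℝ)+1)/3 + 2*π*n from by ring,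
      arc_shift]

lemma A_sub_D {l j : ℤ} (h1 : l ≤ j) (h2 : j + 1 ≤ l + 2) :
    Aarc j ⊆ arcCC (2*π*l/3) (2*π*l/3 + 4*π/3) := by
  have hπ := Real.pi_pos
  apply arc_mono
  · have : (l:ℝ) ≤ j := by exact_mod_cast h1
    nlinarith
  · have : (j:ℝ) + 1 ≤ l + 2 := by exact_mod_cast h2
    nlinarith

lemma E_sub_D (l i : ℤ) : zi i ∈ arcCC (2*π*l/3) (2*π*l/3 + 4*π/3) := by
  have hπ := Real.pi_pos
  set d : ℤ := (i - l) % 3 with hd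
  have hd0 : 0 ≤ d := Int.emod_nonneg _ (by norm_num)
  have hd2 : d ≤ 2 := by omega
  refine ⟨2*π*((l + d : ℤ):ℝ)/3, ⟨?_, ?_⟩, ?_⟩
  · have : (l:ℝ) ≤ ((l + d : ℤ):ℝ) := by exact_mod_cast (by omega : l ≤ l + d)
    nlinarith
  · have : ((l + d : ℤ):ℝ) ≤ l + 2 := by exact_mod_cast (by omega : l + d ≤ l + 2)
    nlinarith
  · show Complex.exp _ = zi i
    have hk : ∃ k : ℤ, l + d = i + 3 * k := by
      refine ⟨-((i-l)/3), ?_⟩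
      omega
    obtain ⟨k, hk⟩ := hk
    rw [zi, hk]
    have : (2*π*((i + 3*k : ℤ):ℝ)/3) = 2*π*(i:ℝ)/3 + 2*π*k := by push_cast; ring
    rw [this, exp_shift]

lemma pairD (k k' : ℤ) : ∃ l : ℤ,
    Aarc k ∪ Aarc k' ∪ Ecube ⊆ arcCC (2*π*l/3) (2*π*l/3 + 4*π/3) := by
  have hE : ∀ l : ℤ, Ecube ⊆ arcCC (2*π*l/3) (2*π*l/3 + 4*π/3) := by
    rintro l z ⟨i, rfl⟩; exact E_sub_D l i
  set d : ℤ := (k' - k) % 3 with hd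
  have hdiv : k' = k + d + 3 * ((k' - k)/3) := by omega
  have hd0 : 0 ≤ d := Int.emod_nonneg _ (by norm_num)
  have hd2 : d ≤ 2 := by omega
  interval_cases d
  · refine ⟨k, ?_⟩
    rw [show k' = (k : ℤ) + 3 * ((k' - k)/3) from by omega, Aper]
    exact union_subset (union_subset (A_sub_D le_rfl (by omega)) (A_sub_D le_rfl (by omega))) (hE k)
  · refine ⟨k, ?_⟩
    rw [show k' = (k + 1 : ℤ) + 3 * ((k' - k)/3) from by omega, Aper]
    exact union_subset (union_subset (A_sub_D le_rfl (by omega)) (A_sub_D (by omega) (by omega))) (hE k)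
  · refine ⟨k - 1, ?_⟩
    rw [show k' = (k - 1 : ℤ) + 3 * ((k' - k)/3 + 1) from by omega, Aper]
    exact union_subset (union_subset (A_sub_D (by omega) (by omega)) (A_sub_D le_rfl (by omega))) (hE (k-1))

noncomputable def mkp (k : ℤ) : ℂ := Complex.exp ((2*π*k/3 + π/3 : ℝ) * Complex.I)

lemma hRe (x y : ℝ) :
    (Complex.exp ((x:ℝ) * Complex.I) * (starRingEnd ℂ) (Complex.exp ((y:ℝ) * Complex.I))).re
      = Real.cos (x - y) := by
  rw [conj_expI, expmul]
  rw [show x + -y = x - y from by ring]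
  exact Complex.exp_ofReal_mul_I_re _

lemma cos_gt {x : ℝ} (h : |x| < π/3) : 1/2 < Real.cos x := by
  have h1 : Real.cos (π/3) < Real.cos |x| := by
    apply Real.cos_lt_cos_of_nonneg_of_le_pi (abs_nonneg x) _ h
    linarith [Real.pi_pos]
  rw [Real.cos_abs] at h1
  rwa [Real.cos_pi_div_three] at h1

-- C1

lemma chord (k : ℤ) {z : ℂ} (hz : z ∈ sphere (0:ℂ) 1)
    (h : (z * (starRingEnd ℂ) (mkp k)).re = 1/2) : z = zi k ∨ z = zi (k+1) := by
  set w := z * (starRingEnd ℂ) (mkp k) with hw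
  have habsz : ‖z‖ = 1 := by
    simpa using mem_sphere_zero_iff_norm.1 hz
  have habsm : ‖mkp k‖ = 1 := Complex.norm_exp_ofReal_mul_I _
  have habsw : ‖w‖ = 1 := by
    rw [hw, norm_mul, Complex.norm_conj, habsz, habsm, one_mul]
  have hsq : w.re^2 + w.im^2 = 1 := by
    have := Complex.sq_norm w
    rw [habsw, Complex.normSq_apply] at this
    nlinarith
  have h3 : (0:ℝ) ≤ 3 := by norm_num
  have hsqrt : (Real.sqrt 3)^2 = 3 := Real.sq_sqrt h3
  have him : (w.im - Real.sqrt 3/2) * (w.im + Real.sqrt 3/2) = 0 := by nlinarith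
  have hzw : z = w * mkp k := by
    have : w * mkp k = z * ((starRingEnd ℂ) (mkp k) * mkp k) := by rw [hw]; ring
    rw [this, mul_comm ((starRingEnd ℂ) (mkp k)), show mkp k * (starRingEnd ℂ) (mkp k) = 1 from unit_expI (2*π*k/3 + π/3), mul_one]
  rcases mul_eq_zero.1 him with h4 | h4
  · right
    have hwval : w = Complex.exp (((π/3 : ℝ)) * Complex.I) := by
      apply Complex.ext
      · rw [Complex.exp_ofReal_mul_I_re, Real.cos_pi_div_three]; exact h
      · rw [Complex.exp_ofReal_mul_I_im, Real.sin_pi_div_three]; linarith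
    rw [hzw, hwval, mkp, expmul, zi]
    congr 1
    push_cast; ring
  · left
    have hwval : w = Complex.exp (((-(π/3) : ℝ)) * Complex.I) := by
      apply Complex.ext
      · rw [Complex.exp_ofReal_mul_I_re, Real.cos_neg, Real.cos_pi_div_three]; exact h
      · rw [Complex.exp_ofReal_mul_I_im, Real.sin_neg, Real.sin_pi_div_three]; linarith
    rw [hzw, hwval, mkp, expmul, zi]
    congr 1
    push_cast; ring

-- C4

lemma in_halfplane_arc (k : ℤ) {z : ℂ} (hz : z ∈ sphere (0:ℂ) 1)
    (h : 1/2 < (z * (starRingEnd ℂ) (mkp k)).re) : z ∈ Aarc k := by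
  set w := z * (starRingEnd ℂ) (mkp k) with hw
  have habsz : ‖z‖ = 1 := by
    simpa using mem_sphere_zero_iff_norm.1 hz
  have habsm : ‖mkp k‖ = 1 := Complex.norm_exp_ofReal_mul_I _
  have habsw : ‖w‖ = 1 := by
    rw [hw, norm_mul, Complex.norm_conj, habsz, habsm, one_mul]
  have hw0 : w ≠ 0 := by
    intro h0; rw [h0] at habsw; simp at habsw
  set y := Complex.arg w with hy
  have hcos : Real.cos y = w.re := by
    rw [hy, Complex.cos_arg hw0, habsw]; simp
  have hylt : |y| < π/3 := by
    by_contra hc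
    push_neg at hc
    have h1 : Real.cos |y| ≤ Real.cos (π/3) := by
      apply Real.cos_le_cos_of_nonneg_of_le_pi _ (Complex.abs_arg_le_pi w) hc
      linarith [Real.pi_pos]
    rw [Real.cos_abs, hcos, Real.cos_pi_div_three] at h1
    linarith
  have hwexp : w = Complex.exp ((y:ℝ) * Complex.I) := by
    have := Complex.norm_mul_exp_arg_mul_I w
    rw [habsw] at this
    simpa using this.symm
  have hzw : z = w * mkp k := by
    have : w * mkp k = z * ((starRingEnd ℂ) (mkp k) * mkp k) := by rw [hw]; ring
    rw [this, mul_comm ((starRingEnd ℂ) (mkp k)), show mkp k * (starRingEnd ℂ) (mkp k) = 1 from unit_expI (2*π*k/3 + π/3), mul_one]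
  have habs := abs_lt.1 hylt
  refine ⟨y + (2*π*k/3 + π/3), ⟨by linarith, ?_⟩, ?_⟩
  · push_cast; linarith
  · show Complex.exp _ = z
    rw [hzw, hwexp, mkp, expmul]
  

-- C2

lemma exists_halfplane {z : ℂ} (hz : z ∈ sphere (0:ℂ) 1) (hE : z ∉ Ecube) :
    ∃ k : ℤ, 1/2 < (z * (starRingEnd ℂ) (mkp k)).re := by
  have habsz : ‖z‖ = 1 := by
    simpa using mem_sphere_zero_iff_norm.1 hz
  set θ := Complex.arg z with hθ
  have hzexp : z = Complex.exp ((θ:ℝ) * Complex.I) := by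
    have := Complex.norm_mul_exp_arg_mul_I z
    rw [habsz] at this
    simpa using this.symm
  have hθ1 : -π < θ := Complex.neg_pi_lt_arg z
  have hθ2 : θ ≤ π := Complex.arg_le_pi z
  have hπ := Real.pi_pos
  have hne : ∀ i : ℤ, z ≠ zi i := fun i hi => hE ⟨i, hi.symm⟩
  have hRe' : ∀ k : ℤ, (z * (starRingEnd ℂ) (mkp k)).re = Real.cos (θ - (2*π*k/3 + π/3)) := by
    intro k
    rw [hzexp, mkp, hRe]
  rcases lt_trichotomy θ 0 with hneg | hzero | hpos
  · rcases lt_trichotomy θ (-(2*π/3)) with h1 | h1 | h1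
    · refine ⟨1, ?_⟩
      rw [hRe' 1]
      have : θ - (2*π*(1:ℤ)/3 + π/3) = (θ + π) - 2*π := by push_cast; ring
      rw [this, Real.cos_sub_two_pi]
      apply cos_gt
      rw [abs_lt]; constructor <;> [linarith; linarith]
    · exfalso
      apply hne (-1)
      rw [hzexp, zi, h1]
      congr 1; push_cast; ring
    · refine ⟨2, ?_⟩
      rw [hRe' 2]
      have : θ - (2*π*(2:ℤ)/3 + π/3) = (θ + π/3) - 2*π := by push_cast; ring
      rw [this, Real.cos_sub_two_pi]
      apply cos_gt
      rw [abs_lt]; constructor <;> [linarith; linarith]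
  · exfalso
    apply hne 0
    rw [hzexp, zi, hzero]
    congr 1; push_cast; ring
  · rcases lt_trichotomy θ (2*π/3) with h1 | h1 | h1
    · refine ⟨0, ?_⟩
      rw [hRe' 0]
      apply cos_gt
      have : θ - (2*π*(0:ℤ)/3 + π/3) = θ - π/3 := by push_cast; ring
      rw [this, abs_lt]; constructor <;> [linarith; linarith]
    · exfalso
      apply hne 1
      rw [hzexp, zi, h1]
      congr 1; push_cast; ring
    · refine ⟨1, ?_⟩
      rw [hRe' 1]
      apply cos_gt
      have : θ - (2*π*(1:ℤ)/3 + π/3) = θ - π := by push_cast; ring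
      rw [this, abs_lt]; constructor <;> [linarith; linarith]

noncomputable def Uarc (j : ℤ) : Set ℂ :=
  (fun t : ℝ => Complex.exp (t * Complex.I)) '' Set.Ioo (2*π*j/3) (2*π*(j+1)/3)

lemma Uarc_sub_sphere (j : ℤ) : Uarc j ⊆ sphere (0:ℂ) 1 := by
  rintro z ⟨t, _, rfl⟩; exact expI_sphere t

lemma Uarc_nonempty (j : ℤ) : (Uarc j).Nonempty := by
  have hπ := Real.pi_pos
  refine ⟨_, ⟨2*π*j/3 + π/3, ⟨by linarith, by push_cast; linarith⟩, rfl⟩⟩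

lemma Uarc_sub_A (j : ℤ) : Uarc j ⊆ Aarc j :=
  Set.image_mono Set.Ioo_subset_Icc_self

lemma Uarc_no_grid {j i : ℤ} : zi i ∉ Uarc j := by
  rintro ⟨t, ⟨ht1, ht2⟩, ht⟩
  have h := Complex.exp_eq_exp_iff_exists_int.1 ht
  obtain ⟨n, hn⟩ := h
  have h2 : ((t : ℂ) - (2*π*i/3 + 2*π*n : ℝ)) * Complex.I = 0 := by
    push_cast at hn ⊢
    linear_combination hn
  rcases mul_eq_zero.1 h2 with h3 | h3
  · have h4 : t = 2*π*i/3 + 2*π*n := by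
      have := sub_eq_zero.1 h3
      exact_mod_cast this
    rw [h4] at ht1 ht2
    have hπ := Real.pi_pos
    have hi1 : (j:ℝ) < i + 3*n := by nlinarith
    have hi2 : (i:ℝ) + 3*n < j + 1 := by nlinarith
    have hi1' : j < i + 3*n := by exact_mod_cast hi1
    have hi2' : i + 3*n < j + 1 := by exact_mod_cast hi2
    omega
  · exact Complex.I_ne_zero h3

lemma Aarc_sub_U_endpoints (j : ℤ) : Aarc j ⊆ Uarc j ∪ {zi j, zi (j+1)} := by
  rintro z ⟨t, ⟨ht1, ht2⟩, rfl⟩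
  rcases eq_or_lt_of_le ht1 with h | h
  · right; left
    rw [zi, ← h]
  rcases eq_or_lt_of_le ht2 with h' | h'
  · right; right
    rw [zi, h']
    norm_num
  · left; exact ⟨t, ⟨h, h'⟩, rfl⟩

lemma keyA (f : ℂ → ℂ) (hc : ContinuousOn f (sphere (0:ℂ) 1))
    (hinj : Set.InjOn f (sphere (0:ℂ) 1))
    (h1 : ∀ i : ℤ, f (zi i) ∈ Ecube)
    (h2 : ∀ x ∈ sphere (0:ℂ) 1, f x ∈ Ecube → ∃ i : ℤ, x = zi i)
    (hm : Set.MapsTo f (sphere (0:ℂ) 1) (sphere (0:ℂ) 1)) (j : ℤ) :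
    ∃ k : ℤ, f '' (Aarc j) ⊆ Aarc k ∪ Ecube := by
  set S := f '' (Uarc j) with hS
  -- S avoids Ecube
  have hSE : ∀ x ∈ Uarc j, f x ∉ Ecube := by
    intro x hx hfx
    obtain ⟨i, hi⟩ := h2 x (Uarc_sub_sphere j hx) hfx
    rw [hi] at hx
    exact Uarc_no_grid hx
  have hSsphere : S ⊆ sphere (0:ℂ) 1 := by
    rintro y ⟨x, hx, rfl⟩
    exact hm (Uarc_sub_sphere j hx)
  -- S preconnected
  have hUpre : IsPreconnected (Uarc j) := by
    apply IsPreconnected.image isPreconnected_Ioo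
    apply Continuous.continuousOn
    exact Complex.continuous_exp.comp (continuous_ofReal.mul continuous_const)
  have hSpre : IsPreconnected S :=
    hUpre.image f (hc.mono (Uarc_sub_sphere j))
  -- pick a point
  obtain ⟨x0, hx0⟩ := Uarc_nonempty j
  have hy0 : f x0 ∈ S := ⟨x0, hx0, rfl⟩
  obtain ⟨k, hk⟩ := exists_halfplane (hSsphere hy0) (hSE x0 hx0)
  -- S in halfplane k
  have hopen1 : IsOpen {z : ℂ | 1/2 < (z * (starRingEnd ℂ) (mkp k)).re} :=
    isOpen_lt continuous_const (Complex.continuous_re.comp (continuous_mul_right _))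
  have hopen2 : IsOpen {z : ℂ | (z * (starRingEnd ℂ) (mkp k)).re < 1/2} :=
    isOpen_lt (Complex.continuous_re.comp (continuous_mul_right _)) continuous_const
  have hdisj : Disjoint {z : ℂ | 1/2 < (z * (starRingEnd ℂ) (mkp k)).re}
      {z : ℂ | (z * (starRingEnd ℂ) (mkp k)).re < 1/2} := by
    rw [Set.disjoint_left]
    intro z hz1 hz2
    simp only [Set.mem_setOf_eq] at hz1 hz2
    linarith
  have hcover : S ⊆ {z : ℂ | 1/2 < (z * (starRingEnd ℂ) (mkp k)).re}
      ∪ {z : ℂ | (z * (starRingEnd ℂ) (mkp k)).re < 1/2} := by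
    rintro y ⟨x, hx, rfl⟩
    rcases lt_trichotomy (1/2 : ℝ) ((f x * (starRingEnd ℂ) (mkp k)).re) with h | h | h
    · left; exact h
    · exfalso
      rcases chord k (hm (Uarc_sub_sphere j hx)) h.symm with hc' | hc'
      · exact hSE x hx (hc' ▸ ⟨k, rfl⟩)
      · exact hSE x hx (hc' ▸ ⟨k+1, rfl⟩)
    · right; exact h
  have hSH : S ⊆ {z : ℂ | 1/2 < (z * (starRingEnd ℂ) (mkp k)).re} := by
    apply IsPreconnected.subset_left_of_subset_union hopen1 hopen2 hdisj hcover ⟨f x0, hy0, hk⟩ hSpre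
  -- conclude
  refine ⟨k, ?_⟩
  intro y hy
  obtain ⟨x, hx, rfl⟩ := hy
  rcases Aarc_sub_U_endpoints j hx with hU | hend
  · left
    exact in_halfplane_arc k (hSsphere ⟨x, hU, rfl⟩) (hSH ⟨x, hU, rfl⟩)
  · right
    rcases hend with h | h
    · rw [h]; exact h1 j
    · rw [Set.mem_singleton_iff] at h
      rw [h]; exact h1 (j+1)

lemma key (f : ℂ → ℂ) (hc : ContinuousOn f (sphere (0:ℂ) 1))
    (hinj : Set.InjOn f (sphere (0:ℂ) 1))
    (hm : Set.MapsTo f (sphere (0:ℂ) 1) (sphere (0:ℂ) 1))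
    (h1 : ∀ i : ℤ, f (zi i) ∈ Ecube)
    (h2 : ∀ x ∈ sphere (0:ℂ) 1, f x ∈ Ecube → ∃ i : ℤ, x = zi i) :
    IsNormalized f := by
  intro θ
  have hπ := Real.pi_pos
  set m : ℤ := ⌊θ / (2*π/3)⌋ with hm'
  have hm1 : (m:ℝ) * (2*π/3) ≤ θ := by
    rw [hm']
    have := Int.floor_le (θ / (2*π/3))
    calc (⌊θ / (2*π/3)⌋:ℝ) * (2*π/3) ≤ (θ / (2*π/3)) * (2*π/3) := by
          apply mul_le_mul_of_nonneg_right this; linarith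
    _ = θ := by field_simp
  have hm2 : θ < ((m:ℝ) + 1) * (2*π/3) := by
    rw [hm']
    have := Int.lt_floor_add_one (θ / (2*π/3))
    calc θ = (θ / (2*π/3)) * (2*π/3) := by field_simp
    _ < ((⌊θ / (2*π/3)⌋:ℝ) + 1) * (2*π/3) := by
          apply mul_lt_mul_of_pos_right this; linarith
  -- the arc is inside Aarc m ∪ Aarc (m+1)
  have hsub : arcCC θ (θ + 2*π/3) ⊆ Aarc m ∪ Aarc (m+1) := by
    have e1 : Aarc m = arcCC (2*π*m/3) (2*π*m/3 + 2*π/3) := by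
      rw [Aarc]
      congr 1
      push_cast; ring
    have e2 : Aarc (m+1) = arcCC (2*π*m/3 + 2*π/3) (2*π*m/3 + 4*π/3) := by
      rw [Aarc]
      congr 1 <;> (push_cast; ring)
    rw [e1, e2, ← arc_union (by linarith) (by linarith)]
    apply arc_mono
    · linarith
    · have : θ < 2*π*m/3 + 2*π/3 := by linarith
      linarith
  obtain ⟨k, hk⟩ := keyA f hc hinj h1 h2 hm m
  obtain ⟨k', hk'⟩ := keyA f hc hinj h1 h2 hm (m+1)
  obtain ⟨l, hl⟩ := pairD k k'
  refine ⟨2*π*l/3, ?_⟩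
  have : 2*π*l/3 + 4*π/3 = 2*π*l/3 + 4*π/3 := rfl
  intro y hy
  obtain ⟨x, hx, rfl⟩ := hy
  rcases hsub hx with h | h
  · rcases hk ⟨x, h, rfl⟩ with h' | h'
    · exact hl (Or.inl (Or.inl h'))
    · exact hl (Or.inr h')
  · rcases hk' ⟨x, h, rfl⟩ with h' | h'
    · exact hl (Or.inl (Or.inr h'))
    · exact hl (Or.inr h')

lemma moeb_val {α β z p q : ℂ} {r : ℝ} (hα0 : α ≠ 0) (hcα0 : (starRingEnd ℂ) α ≠ 0)
    (hr : r ≠ 0) (hz : z * (starRingEnd ℂ) z = 1) (hq : q * (starRingEnd ℂ) q = 1)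
    (hq2 : q^2 = z*p) (heq : α*z + β = (r:ℝ)*q) :
    (α/(starRingEnd ℂ) α) * (z - (-β/α)) / (1 - (starRingEnd ℂ) (-β/α) * z) = p := by
  have hz0 : z ≠ 0 := by intro h; rw [h] at hz; simp at hz
  have hcq0 : (starRingEnd ℂ) q ≠ 0 := by
    intro h; rw [h, mul_zero] at hq; exact one_ne_zero hq.symm
  have hrC : (r : ℂ) ≠ 0 := Complex.ofReal_ne_zero.2 hr
  have hconj2 : (starRingEnd ℂ) α + (starRingEnd ℂ) β * z = (r:ℝ) * z * (starRingEnd ℂ) q := by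
    have hc := congrArg (starRingEnd ℂ) heq
    simp only [map_add, map_mul, Complex.conj_ofReal] at hc
    linear_combination z * hc - (starRingEnd ℂ) α * hz
  have hnum : (α/(starRingEnd ℂ) α) * (z - (-β/α)) = ((r:ℝ)*q)/(starRingEnd ℂ) α := by
    rw [← heq]
    field_simp
    ring
  have hden : (1:ℂ) - (starRingEnd ℂ) (-β/α) * z = ((r:ℝ) * z * (starRingEnd ℂ) q)/(starRingEnd ℂ) α := by
    rw [map_div₀, map_neg]
    rw [← hconj2]
    field_simp
    ring
  rw [hnum, hden]
  rw [div_div_div_cancel_right₀]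
  · field_simp
    linear_combination (-q) * hq + (starRingEnd ℂ) q * hq2
  · exact hcα0

lemma construct (t0 t1 t2 : ℝ) (h01 : t0 < t1) (h12 : t1 < t2) (h02 : t2 - t0 < 2*π) :
    ∃ a ν : ℂ, ‖a‖ < 1 ∧ ‖ν‖ = 1 ∧
      ν * (zi 0 - a) / (1 - (starRingEnd ℂ) a * zi 0) = Complex.exp ((t0:ℝ)*Complex.I) ∧
      ν * (zi 1 - a) / (1 - (starRingEnd ℂ) a * zi 1) = Complex.exp ((t1:ℝ)*Complex.I) ∧
      ν * (zi 2 - a) / (1 - (starRingEnd ℂ) a * zi 2) = Complex.exp ((t2:ℝ)*Complex.I) := by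
  have hπ := Real.pi_pos
  obtain ⟨u0, hu0⟩ : ∃ x : ℝ, x = t0/2 := ⟨_, rfl⟩
  obtain ⟨u1, hu1⟩ : ∃ x : ℝ, x = t1/2 := ⟨_, rfl⟩
  obtain ⟨u2, hu2⟩ : ∃ x : ℝ, x = t2/2 := ⟨_, rfl⟩
  have hs0 : 0 < Real.sin (u2-u1) :=
    Real.sin_pos_of_pos_of_lt_pi (by rw [hu1, hu2]; linarith) (by rw [hu1, hu2]; linarith)
  have hs1 : 0 < Real.sin (u2-u0) :=
    Real.sin_pos_of_pos_of_lt_pi (by rw [hu0, hu2]; linarith) (by rw [hu0, hu2]; linarith)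
  have hs2 : 0 < Real.sin (u1-u0) :=
    Real.sin_pos_of_pos_of_lt_pi (by rw [hu0, hu1]; linarith) (by rw [hu0, hu1]; linarith)
  obtain ⟨r0, hr0def⟩ : ∃ x : ℝ, x = -Real.sin (u2-u1) := ⟨_, rfl⟩
  obtain ⟨r1, hr1def⟩ : ∃ x : ℝ, x = -Real.sin (u2-u0) := ⟨_, rfl⟩
  obtain ⟨r2, hr2def⟩ : ∃ x : ℝ, x = -Real.sin (u1-u0) := ⟨_, rfl⟩
  have hr0 : r0 < 0 := by rw [hr0def]; linarith
  have hr1 : r1 < 0 := by rw [hr1def]; linarith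
  have hr2 : r2 < 0 := by rw [hr2def]; linarith
  obtain ⟨E0, hE0def⟩ : ∃ x : ℂ, x = Complex.exp ((u0:ℝ) * Complex.I) := ⟨_, rfl⟩
  obtain ⟨E1, hE1def⟩ : ∃ x : ℂ, x = Complex.exp ((u1:ℝ) * Complex.I) := ⟨_, rfl⟩
  obtain ⟨E2, hE2def⟩ : ∃ x : ℂ, x = Complex.exp ((u2:ℝ) * Complex.I) := ⟨_, rfl⟩
  obtain ⟨ρ, hρdef⟩ : ∃ x : ℂ, x = Complex.exp (((π/3 : ℝ)) * Complex.I) := ⟨_, rfl⟩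
  obtain ⟨w3, hw3def⟩ : ∃ x : ℝ, x = Real.sqrt 3 := ⟨_, rfl⟩
  have hw3 : w3^2 = 3 := by rw [hw3def]; exact Real.sq_sqrt (by norm_num)
  have hw3pos : 0 < w3 := by rw [hw3def]; exact Real.sqrt_pos.2 (by norm_num)
  have hρval : ρ = 1/2 + ((w3:ℝ):ℂ)/2 * Complex.I := by
    rw [hρdef]
    apply Complex.ext
    · rw [Complex.exp_ofReal_mul_I_re, Real.cos_pi_div_three]
      simp
    · rw [Complex.exp_ofReal_mul_I_im, Real.sin_pi_div_three]
      simp [hw3def]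
  have hI : Complex.I^2 = -1 := Complex.I_sq
  have hw3C : ((w3:ℝ):ℂ)^2 = 3 := by
    rw [show ((w3:ℝ):ℂ)^2 = ((w3^2 : ℝ) : ℂ) from by push_cast; ring, hw3]
    norm_num
  have hρ2 : ρ^2 = ρ - 1 := by
    rw [hρval]
    linear_combination (-(1:ℂ)/4) * hw3C + (((w3:ℝ):ℂ)^2/4) * hI
  have hρ3 : ρ^3 = -1 := by linear_combination (ρ+1) * hρ2
  have hUρ : ρ * (starRingEnd ℂ) ρ = 1 := by rw [hρdef]; exact unit_expI _
  have hU0 : E0 * (starRingEnd ℂ) E0 = 1 := by rw [hE0def]; exact unit_expI _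
  have hU1 : E1 * (starRingEnd ℂ) E1 = 1 := by rw [hE1def]; exact unit_expI _
  have hU2 : E2 * (starRingEnd ℂ) E2 = 1 := by rw [hE2def]; exact unit_expI _
  have hcρ : (starRingEnd ℂ) ρ = 1 - ρ := by
    rw [hρval]
    simp only [map_add, map_mul, map_div₀, map_one, map_ofNat, Complex.conj_ofReal,
      Complex.conj_I]
    ring
  have h2ρ : (2:ℂ) - ρ ≠ 0 := by
    rw [hρval]
    intro h
    have := congrArg Complex.re h
    simp at this
    norm_num at this
  have hHq : ((r1:ℝ):ℂ) * E1 = ((r0:ℝ):ℂ) * E0 + ((r2:ℝ):ℂ) * E2 := by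
    rw [hr0def, hr1def, hr2def, hE0def, hE1def, hE2def,
      Complex.ofReal_neg, Complex.ofReal_neg, Complex.ofReal_neg]
    linear_combination -(trig_id u0 u1 u2)
  obtain ⟨α, hαdef⟩ : ∃ x : ℂ, x = (((r0:ℝ):ℂ) * E0 - ((r1:ℝ):ℂ) * (ρ * E1)) / (2 - ρ) := ⟨_, rfl⟩
  obtain ⟨β, hβdef⟩ : ∃ x : ℂ, x = ((r0:ℝ):ℂ) * E0 - α := ⟨_, rfl⟩
  have hαeq : α * (2 - ρ) = ((r0:ℝ):ℂ) * E0 - ((r1:ℝ):ℂ) * (ρ * E1) := by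
    rw [hαdef]; field_simp
  have Eq0 : α * zi 0 + β = ((r0:ℝ):ℂ) * E0 := by
    have hzi0 : zi 0 = 1 := by
      rw [zi, show (2*π*((0:ℤ):ℝ)/3) = 0 from by push_cast; ring]
      simp
    rw [hzi0, hβdef]; ring
  have hzi1 : zi 1 = ρ^2 := by
    rw [zi, hρdef, sq, expmul]
    congr 1
    push_cast; ring
  have hzi2 : zi 2 = -ρ := by
    have h3 : zi 2 = Complex.exp (((π + π/3 : ℝ)) * Complex.I) := by
      rw [zi]; congr 1; push_cast; ring
    rw [h3, ← expmul, Complex.exp_pi_mul_I, hρdef]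
    ring
  have Eq1 : α * zi 1 + β = ((r1:ℝ):ℂ) * (ρ * E1) := by
    rw [hzi1, hβdef]
    linear_combination α * hρ2 - hαeq
  have Eq2 : α * zi 2 + β = ((r2:ℝ):ℂ) * (ρ^2 * E2) := by
    rw [hzi2, hβdef]
    linear_combination (-ρ) * hαeq + (((r0:ℝ):ℂ)*E0 - α) * hρ2 + ρ^2 * hHq
  have hβeq : β * (2 - ρ) = ((r0:ℝ):ℂ) * E0 * (1-ρ) + ((r1:ℝ):ℂ) * (ρ * E1) := by
    rw [hβdef]
    linear_combination -hαeq
  -- conjugated equations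
  have hαc : (starRingEnd ℂ) α * (2 - (1-ρ)) =
      ((r0:ℝ):ℂ) * (starRingEnd ℂ) E0 - ((r1:ℝ):ℂ) * ((1-ρ) * (starRingEnd ℂ) E1) := by
    have h := congrArg (starRingEnd ℂ) hαeq
    simp only [map_mul, map_sub, Complex.conj_ofReal, map_ofNat] at h
    rw [hcρ] at h
    exact h
  have hβc : (starRingEnd ℂ) β * (2 - (1-ρ)) =
      ((r0:ℝ):ℂ) * (starRingEnd ℂ) E0 * (1-(1-ρ)) + ((r1:ℝ):ℂ) * ((1-ρ) * (starRingEnd ℂ) E1) := by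
    have h := congrArg (starRingEnd ℂ) hβeq
    simp only [map_mul, map_sub, map_add, map_one, Complex.conj_ofReal, map_ofNat] at h
    rw [hcρ] at h
    exact h
  have h3α : 3*(α*(starRingEnd ℂ) α) =
      (((r0:ℝ):ℂ)*E0 - ((r1:ℝ):ℂ)*(ρ*E1)) *
      (((r0:ℝ):ℂ)*(starRingEnd ℂ) E0 - ((r1:ℝ):ℂ)*((1-ρ)*(starRingEnd ℂ) E1)) := by
    linear_combination ((starRingEnd ℂ) α * (2-(1-ρ))) * hαeq +
      (((r0:ℝ):ℂ)*E0 - ((r1:ℝ):ℂ)*(ρ*E1)) * hαc + (α * (starRingEnd ℂ) α) * hρ2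
  have h3β : 3*(β*(starRingEnd ℂ) β) =
      (((r0:ℝ):ℂ)*E0*(1-ρ) + ((r1:ℝ):ℂ)*(ρ*E1)) *
      (((r0:ℝ):ℂ)*(starRingEnd ℂ) E0*(1-(1-ρ)) + ((r1:ℝ):ℂ)*((1-ρ)*(starRingEnd ℂ) E1)) := by
    linear_combination ((starRingEnd ℂ) β * (2-(1-ρ))) * hβeq +
      (((r0:ℝ):ℂ)*E0*(1-ρ) + ((r1:ℝ):ℂ)*(ρ*E1)) * hβc + (β * (starRingEnd ℂ) β) * hρ2
  have hs2' : E1 * (starRingEnd ℂ) E0 - E0 * (starRingEnd ℂ) E1 = -2*Complex.I*((r2:ℝ):ℂ) := by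
    rw [hr2def, hE0def, hE1def, Complex.ofReal_neg]
    linear_combination sin2_id u0 u1
  have h2ρ1 : 2*ρ - 1 = ((w3:ℝ):ℂ)*Complex.I := by rw [hρval]; ring
  have hfinal : 3*(α*(starRingEnd ℂ) α) - 3*(β*(starRingEnd ℂ) β)
      = ((-2*w3*r0*r1*r2 : ℝ) : ℂ) := by
    push_cast
    linear_combination h3α - h3β +
      (((r0:ℝ):ℂ)^2*E0*(starRingEnd ℂ) E0 - ((r0:ℝ):ℂ)*((r1:ℝ):ℂ)*E0*(starRingEnd ℂ) E1
        - ((r0:ℝ):ℂ)*((r1:ℝ):ℂ)*E1*(starRingEnd ℂ) E0) * hρ2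
      - (((r0:ℝ):ℂ)*((r1:ℝ):ℂ)*(2*ρ-1)) * hs2'
      + (2*Complex.I*((r2:ℝ):ℂ)*((r0:ℝ):ℂ)*((r1:ℝ):ℂ)) * h2ρ1
      + (2*((w3:ℝ):ℂ)*((r2:ℝ):ℂ)*((r0:ℝ):ℂ)*((r1:ℝ):ℂ)) * hI
  -- real form of the determinant
  have hns : Complex.normSq α - Complex.normSq β = -2*w3*r0*r1*r2/3 := by
    have h' : ((3*(Complex.normSq α) - 3*(Complex.normSq β) : ℝ) : ℂ)
        = ((-2*w3*r0*r1*r2 : ℝ) : ℂ) := by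
      push_cast
      rw [← Complex.mul_conj, ← Complex.mul_conj]
      push_cast at hfinal
      linear_combination hfinal
    have h'' := Complex.ofReal_inj.1 h'
    linear_combination h''/3
  have hlt : Complex.normSq β < Complex.normSq α := by
    have hprod : 0 < w3 * (-r0 * -r1 * -r2) :=
      mul_pos hw3pos (mul_pos (mul_pos (neg_pos.2 hr0) (neg_pos.2 hr1)) (neg_pos.2 hr2))
    have h2 : 0 < -2*w3*r0*r1*r2/3 := by nlinarith [hprod]
    linarith [hns, h2]
  have hα0 : α ≠ 0 := by
    intro h
    rw [h] at hlt
    simp only [Complex.normSq_zero] at hlt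
    have := Complex.normSq_nonneg β
    linarith
  have hcα0 : (starRingEnd ℂ) α ≠ 0 := by
    intro h
    apply hα0
    have := congrArg (starRingEnd ℂ) h
    simpa using this
  have habsa : ‖-β/α‖ < 1 := by
    rw [norm_div, norm_neg, div_lt_one (by
      have : 0 < Complex.normSq α := lt_of_le_of_lt (Complex.normSq_nonneg β) hlt
      rw [Complex.norm_def]
      exact Real.sqrt_pos.2 this)]
    rw [Complex.norm_def, Complex.norm_def]
    exact Real.sqrt_lt_sqrt (Complex.normSq_nonneg β) hlt
  have habsν : ‖α/(starRingEnd ℂ) α‖ = 1 := by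
    rw [norm_div, Complex.norm_conj, div_self]
    intro h
    exact hα0 (norm_eq_zero.1 h)
  have hzu : ∀ i : ℤ, zi i * (starRingEnd ℂ) (zi i) = 1 := fun i => unit_expI _
  refine ⟨-β/α, α/(starRingEnd ℂ) α, habsa, habsν, ?_, ?_, ?_⟩
  · -- j = 0
    apply moeb_val hα0 hcα0 (ne_of_lt hr0) (hzu 0) hU0 _ Eq0
    have hzi0 : zi 0 = 1 := by
      rw [zi, show (2*π*((0:ℤ):ℝ)/3) = 0 from by push_cast; ring]
      simp
    rw [hzi0, one_mul, hE0def, sq, expmul]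
    congr 1
    rw [hu0]; push_cast; ring
  · -- j = 1
    apply moeb_val hα0 hcα0 (ne_of_lt hr1) (hzu 1) _ _ Eq1
    · rw [map_mul]
      calc ρ * E1 * ((starRingEnd ℂ) ρ * (starRingEnd ℂ) E1)
          = (ρ * (starRingEnd ℂ) ρ) * (E1 * (starRingEnd ℂ) E1) := by ring
      _ = 1 := by rw [hUρ, hU1, mul_one]
    · rw [hzi1, mul_pow]
      have hE1sq : E1^2 = Complex.exp ((t1:ℝ) * Complex.I) := by
        rw [hE1def, sq, expmul]
        congr 1
        rw [hu1]; push_cast; ring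
      rw [hE1sq]
  · -- j = 2
    apply moeb_val hα0 hcα0 (ne_of_lt hr2) (hzu 2) _ _ Eq2
    · rw [map_mul]
      calc ρ^2 * E2 * ((starRingEnd ℂ) (ρ^2) * (starRingEnd ℂ) E2)
          = (ρ * (starRingEnd ℂ) ρ)^2 * (E2 * (starRingEnd ℂ) E2) := by
            rw [map_pow]; ring
      _ = 1 := by rw [hUρ, hU2]; norm_num
    · rw [hzi2, mul_pow]
      have hE2sq : E2^2 = Complex.exp ((t2:ℝ) * Complex.I) := by
        rw [hE2def, sq, expmul]
        congr 1
        rw [hu2]; push_cast; ring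
      rw [hE2sq]
      linear_combination (ρ * Complex.exp ((t2:ℝ) * Complex.I)) * hρ3

lemma sort3 (a b c : ℝ) (hab : a ≠ b) (hac : a ≠ c) (hbc : b ≠ c) :
    ∃ t0 t1 t2 : ℝ, t0 < t1 ∧ t1 < t2 ∧ ({t0, t1, t2} : Set ℝ) = {a, b, c} := by
  rcases lt_trichotomy a b with h1 | h1 | h1
  · rcases lt_trichotomy b c with h2 | h2 | h2
    · exact ⟨a, b, c, h1, h2, rfl⟩
    · exact absurd h2 hbc
    · rcases lt_trichotomy a c with h3 | h3 | h3
      · exact ⟨a, c, b, h3, h2, by ext x; simp; tauto⟩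
      · exact absurd h3 hac
      · exact ⟨c, a, b, h3, h1, by ext x; simp; tauto⟩
  · exact absurd h1 hab
  · rcases lt_trichotomy a c with h2 | h2 | h2
    · exact ⟨b, a, c, h1, h2, by ext x; simp; tauto⟩
    · exact absurd h2 hac
    · rcases lt_trichotomy b c with h3 | h3 | h3
      · exact ⟨b, c, a, h3, h2, by ext x; simp; tauto⟩
      · exact absurd h3 hbc
      · exact ⟨c, b, a, h3, h1, by ext x; simp; tauto⟩

end MNorm

open MNorm

/-- **Lemma 2.2 (normalization).** For every circle homeomorphism `ψ : 𝕋 → 𝕋` there is a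
Möbius transformation `μ(z) = ν (z − a)/(1 − ā z)`, with `|a| < 1` and `ν ∈ 𝕋`, such that
`ψ ∘ μ` is normalized. -/
theorem exists_moebius_normalizing (ψ : ℂ → ℂ)
    (hcont : ContinuousOn ψ (sphere (0:ℂ) 1))
    (hbij : BijOn ψ (sphere (0:ℂ) 1) (sphere (0:ℂ) 1)) :
    ∃ a ν : ℂ, ‖a‖ < 1 ∧ ‖ν‖ = 1 ∧
      IsNormalized (fun z => ψ (ν * (z - a) / (1 - (starRingEnd ℂ) a * z))) := by
  have hζs : ∀ i : ℤ, zi i ∈ sphere (0:ℂ) 1 := fun i => expI_sphere _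
  obtain ⟨q1, hq1s, hq1⟩ := hbij.2.2 (hζs 0)
  obtain ⟨q2, hq2s, hq2⟩ := hbij.2.2 (hζs 1)
  obtain ⟨q3, hq3s, hq3⟩ := hbij.2.2 (hζs 2)
  have he1 : Complex.exp ((Complex.arg q1 : ℝ) * Complex.I) = q1 := by
    have h := Complex.norm_mul_exp_arg_mul_I q1
    rw [sphere_abs hq1s] at h
    simpa using h
  have he2 : Complex.exp ((Complex.arg q2 : ℝ) * Complex.I) = q2 := by
    have h := Complex.norm_mul_exp_arg_mul_I q2
    rw [sphere_abs hq2s] at h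
    simpa using h
  have he3 : Complex.exp ((Complex.arg q3 : ℝ) * Complex.I) = q3 := by
    have h := Complex.norm_mul_exp_arg_mul_I q3
    rw [sphere_abs hq3s] at h
    simpa using h
  have hne12 : Complex.arg q1 ≠ Complex.arg q2 := by
    intro h
    have hq : q1 = q2 := by rw [← he1, ← he2, h]
    have : zi 0 = zi 1 := by rw [← hq1, ← hq2, hq]
    obtain ⟨n, hn⟩ := zinj this
    omega
  have hne13 : Complex.arg q1 ≠ Complex.arg q3 := by
    intro h
    have hq : q1 = q3 := by rw [← he1, ← he3, h]
    have : zi 0 = zi 2 := by rw [← hq1, ← hq3, hq]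
    obtain ⟨n, hn⟩ := zinj this
    omega
  have hne23 : Complex.arg q2 ≠ Complex.arg q3 := by
    intro h
    have hq : q2 = q3 := by rw [← he2, ← he3, h]
    have : zi 1 = zi 2 := by rw [← hq2, ← hq3, hq]
    obtain ⟨n, hn⟩ := zinj this
    omega
  obtain ⟨t0, t1, t2, h01, h12, hset⟩ := sort3 _ _ _ hne12 hne13 hne23
  have hmem : ∀ x ∈ ({t0,t1,t2} : Set ℝ),
      x = Complex.arg q1 ∨ x = Complex.arg q2 ∨ x = Complex.arg q3 := by
    intro x hx
    have : x ∈ ({Complex.arg q1, Complex.arg q2, Complex.arg q3} : Set ℝ) := hset ▸ hx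
    simpa using this
  have h02 : t2 - t0 < 2*π := by
    have hb0 := hmem t0 (by simp)
    have hb2 := hmem t2 (by simp)
    have hr : ∀ x : ℝ, (x = Complex.arg q1 ∨ x = Complex.arg q2 ∨ x = Complex.arg q3) →
        -π < x ∧ x ≤ π := by
      rintro x (rfl | rfl | rfl) <;>
        exact ⟨Complex.neg_pi_lt_arg _, Complex.arg_le_pi _⟩
    have h1 := hr t0 hb0
    have h2 := hr t2 hb2
    linarith [h1.1, h2.2]
  obtain ⟨a, ν, ha, hν, M0, M1, M2⟩ := construct t0 t1 t2 h01 h12 h02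
  refine ⟨a, ν, ha, hν, ?_⟩
  have hν0 : ν ≠ 0 := by
    intro h; rw [h] at hν; simp at hν
  -- ψ of the p points lies in Ecube
  have hpq : ∀ x ∈ ({t0,t1,t2} : Set ℝ), ∃ j : ℤ,
      ψ (Complex.exp ((x:ℝ)*Complex.I)) = zi j := by
    intro x hx
    rcases hmem x hx with h | h | h
    · exact ⟨0, by rw [h, he1, hq1]⟩
    · exact ⟨1, by rw [h, he2, hq2]⟩
    · exact ⟨2, by rw [h, he3, hq3]⟩
  -- q's are among the p's
  have hq1mem : Complex.arg q1 = t0 ∨ Complex.arg q1 = t1 ∨ Complex.arg q1 = t2 := by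
    have : Complex.arg q1 ∈ ({t0,t1,t2} : Set ℝ) := by rw [hset]; simp
    simpa using this
  have hq2mem : Complex.arg q2 = t0 ∨ Complex.arg q2 = t1 ∨ Complex.arg q2 = t2 := by
    have : Complex.arg q2 ∈ ({t0,t1,t2} : Set ℝ) := by rw [hset]; simp
    simpa using this
  have hq3mem : Complex.arg q3 = t0 ∨ Complex.arg q3 = t1 ∨ Complex.arg q3 = t2 := by
    have : Complex.arg q3 ∈ ({t0,t1,t2} : Set ℝ) := by rw [hset]; simp
    simpa using this
  -- each q equals μ (zi j) for some j
  have hqval : ∀ q : ℂ, (Complex.exp ((Complex.arg q : ℝ) * Complex.I) = q) →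
      (Complex.arg q = t0 ∨ Complex.arg q = t1 ∨ Complex.arg q = t2) →
      ∃ j : ℤ, ν * (zi j - a) / (1 - (starRingEnd ℂ) a * zi j) = q := by
    rintro q he (h | h | h)
    · exact ⟨0, by rw [M0, ← he, h]⟩
    · exact ⟨1, by rw [M1, ← he, h]⟩
    · exact ⟨2, by rw [M2, ← he, h]⟩
  apply key
  · -- continuity
    have hμcont : ContinuousOn (fun z => ν * (z - a) / (1 - (starRingEnd ℂ) a * z))
        (sphere (0:ℂ) 1) := by
      apply ContinuousOn.div
      · exact (continuous_const.mul (continuous_id.sub continuous_const)).continuousOn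
      · exact (continuous_const.sub (continuous_const.mul continuous_id)).continuousOn
      · intro z hz; exact moeb_den_ne ha (sphere_abs hz)
    exact hcont.comp hμcont (fun z hz => moeb_maps ha hν z hz)
  · -- injectivity
    intro x hx y hy hxy
    simp only at hxy
    have hμx := moeb_maps ha hν x hx
    have hμy := moeb_maps ha hν y hy
    have := hbij.injOn hμx hμy hxy
    exact moeb_inj ha hν0 hx hy this
  · exact fun z hz => hbij.mapsTo (moeb_maps ha hν z hz)
  · -- h1
    intro i
    show ψ (ν * (zi i - a) / (1 - (starRingEnd ℂ) a * zi i)) ∈ Ecube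
    rw [zper i]
    have h3 : i % 3 = 0 ∨ i % 3 = 1 ∨ i % 3 = 2 := by omega
    rcases h3 with h | h | h <;> rw [h]
    · rw [M0]
      obtain ⟨j, hj⟩ := hpq t0 (by simp)
      exact ⟨j, hj.symm⟩
    · rw [M1]
      obtain ⟨j, hj⟩ := hpq t1 (by simp)
      exact ⟨j, hj.symm⟩
    · rw [M2]
      obtain ⟨j, hj⟩ := hpq t2 (by simp)
      exact ⟨j, hj.symm⟩
  · -- h2
    intro x hx hfx
    obtain ⟨i, hi⟩ := hfx
    -- hi : zi i = ψ (μ x)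
    rw [zper i] at hi
    have hμx := moeb_maps ha hν x hx
    have h3 : i % 3 = 0 ∨ i % 3 = 1 ∨ i % 3 = 2 := by omega
    have hxq : ∃ q : ℂ, q ∈ sphere (0:ℂ) 1 ∧
        (Complex.exp ((Complex.arg q : ℝ) * Complex.I) = q) ∧
        (Complex.arg q = t0 ∨ Complex.arg q = t1 ∨ Complex.arg q = t2) ∧
        ψ q = ψ (ν * (x - a) / (1 - (starRingEnd ℂ) a * x)) := by
      rcases h3 with h | h | h <;> rw [h] at hi
      · exact ⟨q1, hq1s, he1, hq1mem, by rw [hq1, hi]⟩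
      · exact ⟨q2, hq2s, he2, hq2mem, by rw [hq2, hi]⟩
      · exact ⟨q3, hq3s, he3, hq3mem, by rw [hq3, hi]⟩
    obtain ⟨q, hqs, hqe, hqm, hqψ⟩ := hxq
    have hμxq : ν * (x - a) / (1 - (starRingEnd ℂ) a * x) = q :=
      hbij.injOn hμx hqs (by simpa using hqψ.symm)
    obtain ⟨j, hj⟩ := hqval q hqe hqm
    refine ⟨j, ?_⟩
    have : ν * (x - a) / (1 - (starRingEnd ℂ) a * x)
        = ν * (zi j - a) / (1 - (starRingEnd ℂ) a * zi j) := by rw [hμxq, hj]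
    exact moeb_inj ha hν0 hx (hζs j) this
end

section
/- Let φ : 𝕋 → 𝕋 be a homeomorphism of the unit circle whose mean value with respect to arclength measure is zero, i.e., ∫_𝕋 φ(ζ) |dζ| = 0. Then φ is normalized, i.e., for every arc γ ⊂ 𝕋 of length 2π/3 the image φ(γ) has length at most 4π/3. -/
open Complex Metric Set Real MeasureTheory

section CircAux

/-- The standard parametrization of the unit circle. -/
noncomputable def ee (t : ℝ) : ℂ := Complex.exp (t * Complex.I)

lemma ee_mem_sphere (t : ℝ) : ee t ∈ sphere (0:ℂ) 1 := by
  simp [ee, mem_sphere_zero_iff_norm, Complex.norm_exp_ofReal_mul_I]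

lemma ee_eq_iff {s t : ℝ} : ee s = ee t ↔ ∃ n : ℤ, s = t + n * (2*π) := by
  rw [ee, ee, Complex.exp_eq_exp_iff_exists_int]
  constructor
  · rintro ⟨n, h⟩
    refine ⟨n, ?_⟩
    have h2 : ((s : ℂ)) = ((t + n * (2*π) : ℝ) : ℂ) := by
      apply mul_right_cancel₀ Complex.I_ne_zero
      push_cast
      rw [h]; ring
    exact_mod_cast h2
  · rintro ⟨n, h⟩
    refine ⟨n, ?_⟩
    rw [h]; push_cast; ring

lemma ee_rep {z : ℂ} (hz : z ∈ sphere (0:ℂ) 1) (a : ℝ) :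
    ∃ t ∈ Ico a (a + 2*π), ee t = z := by
  have habs : ‖z‖ = 1 := by
    simpa using mem_sphere_zero_iff_norm.1 hz
  have hz' : ee (Complex.arg z) = z := by
    rw [ee]
    conv_rhs => rw [← Complex.norm_mul_exp_arg_mul_I z]
    rw [habs, Complex.ofReal_one, one_mul]
  have h2π : (0:ℝ) < 2*π := by positivity
  refine ⟨toIcoMod h2π a (Complex.arg z), toIcoMod_mem_Ico h2π a _, ?_⟩
  have heq : ee (toIcoMod h2π a (Complex.arg z)) = ee (Complex.arg z) := by
    rw [ee_eq_iff]
    exact ⟨-(toIcoDiv h2π a (Complex.arg z)), by rw [toIcoMod, zsmul_eq_mul]; push_cast; ring⟩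
  rw [heq, hz']

lemma arcCC_eq (a b : ℝ) : arcCC a b = ee '' Icc a b := rfl

lemma arcCC_subset_sphere (a b : ℝ) : arcCC a b ⊆ sphere (0:ℂ) 1 := by
  rintro z ⟨t, -, rfl⟩; exact ee_mem_sphere t

/-- The complement of a closed arc is the open complementary arc. -/
lemma sphere_diff_arcCC {a b : ℝ} (hab : a ≤ b) (hb : b ≤ a + 2*π) :
    sphere (0:ℂ) 1 \ arcCC a b = ee '' Ioo b (a + 2*π) := by
  ext z
  constructor
  · rintro ⟨hz, hzarc⟩
    obtain ⟨t, ht, rfl⟩ := ee_rep hz a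
    have htb : b < t := by
      by_contra hbt
      exact hzarc ⟨t, ⟨ht.1, not_lt.1 hbt⟩, rfl⟩
    exact ⟨t, ⟨htb, ht.2⟩, rfl⟩
  · rintro ⟨t, ht, rfl⟩
    refine ⟨ee_mem_sphere t, ?_⟩
    rintro ⟨s, hs, hse⟩
    have hse' : ee s = ee t := hse
    obtain ⟨n, hn⟩ := ee_eq_iff.1 hse'
    have h1 : (0:ℝ) < t - s := by
      have := hs.2; have := ht.1; linarith
    have h2 : t - s < 2*π := by
      have := hs.1; have := ht.2; linarith
    have hn' : t - s = (-n : ℤ) * (2*π) := by push_cast; linarith [hn]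
    rcases lt_trichotomy (-n : ℤ) 0 with h | h | h
    · have : ((-n : ℤ) : ℝ) * (2*π) ≤ 0 := by
        apply mul_nonpos_of_nonpos_of_nonneg
        · exact_mod_cast h.le
        · positivity
      linarith [hn' ▸ h1]
    · rw [h] at hn'; simp at hn'; linarith
    · have h1n : (1:ℝ) ≤ ((-n : ℤ) : ℝ) := by exact_mod_cast h
      have : (2*π : ℝ) ≤ ((-n : ℤ) : ℝ) * (2*π) := by nlinarith [Real.pi_pos]
      linarith [hn' ▸ h2]

/-- The complement of an open arc is the closed complementary arc. -/
lemma sphere_diff_ioo {a b : ℝ} (hab : a ≤ b) (hb : b ≤ a + 2*π) :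
    sphere (0:ℂ) 1 \ ee '' Ioo a b = arcCC b (a + 2*π) := by
  ext z
  rw [arcCC_eq]
  constructor
  · rintro ⟨hz, hzarc⟩
    obtain ⟨t, ht, rfl⟩ := ee_rep hz a
    rcases eq_or_lt_of_le ht.1 with h | h
    · refine ⟨a + 2*π, ⟨hb, le_refl _⟩, ?_⟩
      rw [ee_eq_iff]
      exact ⟨1, by rw [← h]; push_cast; ring⟩
    · have htb : b ≤ t := by
        by_contra hbt
        exact hzarc ⟨t, ⟨h, not_le.1 hbt⟩, rfl⟩
      exact ⟨t, ⟨htb, ht.2.le⟩, rfl⟩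
  · rintro ⟨t, ht, rfl⟩
    refine ⟨ee_mem_sphere t, ?_⟩
    rintro ⟨s, hs, hse⟩
    have hse' : ee s = ee t := hse
    obtain ⟨n, hn⟩ := ee_eq_iff.1 hse'
    have h1 : (0:ℝ) < t - s := by have := hs.2; have := ht.1; linarith
    have h2 : t - s < 2*π := by have := hs.1; have := ht.2; linarith
    have hn' : t - s = (-n : ℤ) * (2*π) := by push_cast; linarith [hn]
    rcases lt_trichotomy (-n : ℤ) 0 with h | h | h
    · have : ((-n : ℤ) : ℝ) * (2*π) ≤ 0 := by
        apply mul_nonpos_of_nonpos_of_nonneg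
        · exact_mod_cast h.le
        · positivity
      linarith [hn' ▸ h1]
    · rw [h] at hn'; simp at hn'; linarith
    · have h1n : (1:ℝ) ≤ ((-n : ℤ) : ℝ) := by exact_mod_cast h
      have : (2*π : ℝ) ≤ ((-n : ℤ) : ℝ) * (2*π) := by nlinarith [Real.pi_pos]
      linarith [hn' ▸ h2]

lemma abs_eq_one_of_mem_sphere {z : ℂ} (hz : z ∈ sphere (0:ℂ) 1) : ‖z‖ = 1 := by
  simpa using mem_sphere_zero_iff_norm.1 hz

lemma ee_arg {z : ℂ} (hz : z ∈ sphere (0:ℂ) 1) : ee (Complex.arg z) = z := by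
  rw [ee]
  conv_rhs => rw [← Complex.norm_mul_exp_arg_mul_I z]
  rw [abs_eq_one_of_mem_sphere hz, Complex.ofReal_one, one_mul]

lemma ee_add (s t : ℝ) : ee (s + t) = ee s * ee t := by
  rw [ee, ee, ee, ← Complex.exp_add]; push_cast; ring_nf

lemma ee_conj (t : ℝ) : (starRingEnd ℂ) (ee t) = ee (-t) := by
  rw [ee, ee, ← Complex.exp_conj]
  congr 1
  simp [Complex.conj_I]

lemma ee_re (t : ℝ) : (ee t).re = Real.cos t := Complex.exp_ofReal_mul_I_re t

/-- Angle coordinate on the circle minus the point `p`. -/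
noncomputable def tau (p : ℂ) (w : ℂ) : ℝ :=
  Complex.arg p + π + Complex.arg (-(starRingEnd ℂ) p * w)

section tauprops
variable {p w : ℂ} (hp : p ∈ sphere (0:ℂ) 1) (hw : w ∈ sphere (0:ℂ) 1) (hne : w ≠ p)

include hp hw in
lemma abs_c : ‖(-(starRingEnd ℂ) p * w)‖ = 1 := by
  simp [map_mul, abs_eq_one_of_mem_sphere hp, abs_eq_one_of_mem_sphere hw]

include hp hw hne in
lemma arg_c_ne_pi : Complex.arg (-(starRingEnd ℂ) p * w) ≠ π := by
  intro h
  apply hne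
  have hc : -(starRingEnd ℂ) p * w = -1 := by
    have h2 := Complex.norm_mul_exp_arg_mul_I (-(starRingEnd ℂ) p * w)
    rw [abs_c hp hw, h, Complex.ofReal_one, one_mul, Complex.exp_pi_mul_I] at h2
    exact h2.symm
  have hpc : p * (starRingEnd ℂ) p = 1 := by
    rw [Complex.mul_conj]
    norm_cast
    rw [Complex.normSq_eq_norm_sq, abs_eq_one_of_mem_sphere hp]; norm_num
  calc w = (p * (starRingEnd ℂ) p) * w := by rw [hpc, one_mul]
    _ = -p * (-(starRingEnd ℂ) p * w) := by ring
    _ = p := by rw [hc]; ring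

include hp hw hne in
lemma tau_mem_Ioo : tau p w ∈ Ioo (Complex.arg p) (Complex.arg p + 2*π) := by
  have h1 := Complex.arg_mem_Ioc (-(starRingEnd ℂ) p * w)
  have h2 := arg_c_ne_pi hp hw hne
  have h3 : Complex.arg (-(starRingEnd ℂ) p * w) < π := lt_of_le_of_ne h1.2 h2
  have h4 := h1.1
  constructor <;> rw [tau] <;> linarith

include hp hw in
omit hne in
lemma ee_tau : ee (tau p w) = w := by
  have hc : ee (Complex.arg (-(starRingEnd ℂ) p * w)) = -(starRingEnd ℂ) p * w := by
    have h2 := Complex.norm_mul_exp_arg_mul_I (-(starRingEnd ℂ) p * w)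
    rw [abs_c hp hw, Complex.ofReal_one, one_mul] at h2
    exact h2
  have hpc : p * (starRingEnd ℂ) p = 1 := by
    rw [Complex.mul_conj]
    norm_cast
    rw [Complex.normSq_eq_norm_sq, abs_eq_one_of_mem_sphere hp]; norm_num
  rw [tau, ee_add, ee_add, hc, ee_arg hp]
  have hpi : ee π = -1 := by rw [ee]; exact_mod_cast Complex.exp_pi_mul_I
  rw [hpi]
  calc p * -1 * (-(starRingEnd ℂ) p * w) = (p * (starRingEnd ℂ) p) * w := by ring
    _ = w := by rw [hpc, one_mul]

include hp in
omit hw hne in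
lemma tau_continuousOn : ContinuousOn (tau p) (sphere (0:ℂ) 1 \ {p}) := by
  apply continuousOn_of_forall_continuousAt
  intro w hw'
  obtain ⟨hw, hwp⟩ := hw'
  have hwp' : w ≠ p := hwp
  have hslit : (-(starRingEnd ℂ) p * w) ∈ Complex.slitPlane := by
    rw [Complex.mem_slitPlane_iff_arg]
    refine ⟨arg_c_ne_pi hp hw hwp', ?_⟩
    intro h0
    have := abs_c hp hw
    rw [h0] at this; simp at this
  have harg : ContinuousAt (fun z : ℂ => Complex.arg (-(starRingEnd ℂ) p * z)) w :=
    (Complex.continuousAt_arg hslit).comp ((continuous_const.mul continuous_id).continuousAt)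
  exact continuousAt_const.add harg

end tauprops

end CircAux

/-- A circle homeomorphism with zero mean value with respect to arclength
(`∫_𝕋 φ(ζ) |dζ| = ∫₀^{2π} φ(e^{it}) dt = 0`) is normalized. -/
theorem isNormalized_of_mean_zero (φ : ℂ → ℂ)
    (hcont : ContinuousOn φ (sphere (0:ℂ) 1))
    (hbij : BijOn φ (sphere (0:ℂ) 1) (sphere (0:ℂ) 1))
    (hmean : (∫ t in (0:ℝ)..(2 * π), φ (Complex.exp (t * Complex.I))) = 0) :
    IsNormalized φ := by
  intro θ
  by_contra hno
  rw [not_exists] at hno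
  have hπ : (0:ℝ) < π := Real.pi_pos
  have hecont : Continuous ee := by
    unfold ee
    exact Complex.continuous_exp.comp (Complex.continuous_ofReal.mul continuous_const)
  set γ : Set ℂ := arcCC θ (θ + 2 * π / 3) with hγdef
  have hγs : γ ⊆ sphere (0:ℂ) 1 := arcCC_subset_sphere _ _
  set K : Set ℂ := φ '' γ with hKdef
  have hKs : K ⊆ sphere (0:ℂ) 1 := by rintro z ⟨x, hx, rfl⟩; exact hbij.mapsTo (hγs hx)
  set δ : Set ℂ := ee '' Ioo (θ + 2 * π / 3) (θ + 2*π) with hδdef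
  have hδeq : sphere (0:ℂ) 1 \ γ = δ :=
    sphere_diff_arcCC (by linarith) (by linarith)
  set U : Set ℂ := sphere (0:ℂ) 1 \ K with hUdef
  have hUeq : U = φ '' δ := by
    rw [← hδeq, hUdef]
    ext w
    constructor
    · rintro ⟨hw, hwK⟩
      obtain ⟨x, hx, rfl⟩ := hbij.surjOn hw
      exact ⟨x, ⟨hx, fun hxγ => hwK ⟨x, hxγ, rfl⟩⟩, rfl⟩
    · rintro ⟨x, ⟨hx, hxγ⟩, rfl⟩
      refine ⟨hbij.mapsTo hx, ?_⟩
      rintro ⟨y, hy, hyx⟩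
      exact hxγ (hbij.injOn (hγs hy) hx hyx ▸ hy)
  have hδs : δ ⊆ sphere (0:ℂ) 1 := by rintro z ⟨t, -, rfl⟩; exact ee_mem_sphere t
  have hUconn : IsPreconnected U := by
    rw [hUeq]
    exact ((isPreconnected_Ioo).image ee hecont.continuousOn).image φ (hcont.mono hδs)
  have hUne : U.Nonempty := by
    rw [hUeq]
    exact ⟨φ (ee (θ + π)), ⟨ee (θ + π), ⟨θ + π, ⟨by linarith, by linarith⟩, rfl⟩, rfl⟩⟩
  set p : ℂ := φ (Complex.exp (θ * Complex.I)) with hpdef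
  have hpK : p ∈ K := ⟨Complex.exp (θ*Complex.I), ⟨θ, ⟨le_refl θ, by linarith⟩, rfl⟩, rfl⟩
  have hps : p ∈ sphere (0:ℂ) 1 := hKs hpK
  have hUsub' : U ⊆ sphere (0:ℂ) 1 \ {p} := by
    intro w hw
    exact ⟨hw.1, fun h => hw.2 (by rw [show w = p from h]; exact hpK)⟩
  set α : ℝ := Complex.arg p with hα
  set S : Set ℝ := tau p '' U with hSdef
  have hSconn : IsPreconnected S := hUconn.image _ ((tau_continuousOn hps).mono hUsub')
  have hSsub : S ⊆ Ioo α (α + 2*π) := by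
    rintro s ⟨w, hw, rfl⟩
    exact tau_mem_Ioo hps hw.1 (fun h => hw.2 (by rw [show w = p from h]; exact hpK))
  have hSne : S.Nonempty := hUne.image _
  have hbdd_below : BddBelow S := ⟨α, fun s hs => (hSsub hs).1.le⟩
  have hbdd_above : BddAbove S := ⟨α + 2*π, fun s hs => (hSsub hs).2.le⟩
  set a : ℝ := sInf S with hadef
  set b : ℝ := sSup S with hbdef
  have hab : a ≤ b := by
    obtain ⟨s₀, hs₀⟩ := hSne
    exact le_trans (csInf_le hbdd_below hs₀) (le_csSup hbdd_above hs₀)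
  have haα : α ≤ a := le_csInf hSne fun s hs => (hSsub hs).1.le
  have hbα : b ≤ α + 2*π := csSup_le hSne fun s hs => (hSsub hs).2.le
  have hUIcc : U ⊆ ee '' Icc a b := by
    intro w hw
    exact ⟨tau p w, ⟨csInf_le hbdd_below ⟨w, hw, rfl⟩, le_csSup hbdd_above ⟨w, hw, rfl⟩⟩,
      ee_tau hps hw.1⟩
  have hIooU : ee '' Ioo a b ⊆ U := by
    rintro z ⟨t, ht, rfl⟩
    have htS : t ∈ S :=
      (IsConnected.Ioo_csInf_csSup_subset ⟨hSne, hSconn⟩ hbdd_below hbdd_above) ht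
    obtain ⟨w, hw, rfl⟩ := htS
    rw [ee_tau hps hw.1]
    exact hw
  by_cases hcase : a + 2 * π / 3 ≤ b
  · -- then K fits in the arc from b of length 4π/3
    apply hno b
    have hKsub : K ⊆ sphere (0:ℂ) 1 \ ee '' Ioo a b := by
      intro z hz
      exact ⟨hKs hz, fun h => (hIooU h).2 hz⟩
    rw [sphere_diff_ioo hab (by linarith)] at hKsub
    refine hKsub.trans ?_
    rw [arcCC_eq, arcCC_eq]
    exact image_mono (Icc_subset_Icc le_rfl (by linarith))
  · push_neg at hcase
    -- the image of the complementary arc is trapped in a short arc; integral contradiction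
    set m : ℝ := (a+b)/2 with hmdef
    set ζ : ℂ := ee m with hζdef
    set c₀ : ℝ := Real.cos ((b-a)/2) with hc₀def
    have hc₀ : 1/2 < c₀ := by
      rw [hc₀def, ← Real.cos_pi_div_three]
      exact Real.cos_lt_cos_of_nonneg_of_le_pi (by linarith) (by linarith) (by linarith)
    have hRebound : ∀ w ∈ U, c₀ ≤ ((starRingEnd ℂ) ζ * w).re := by
      intro w hw
      obtain ⟨s, hs, rfl⟩ := hUIcc hw
      rw [hζdef, ee_conj, ← ee_add, ee_re]
      have h1 : |(-m) + s| ≤ (b-a)/2 := by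
        rw [abs_le]
        constructor
        · rw [hmdef]; have := hs.1; linarith
        · rw [hmdef]; have := hs.2; linarith
      have h2 := Real.cos_le_cos_of_nonneg_of_le_pi (abs_nonneg ((-m) + s)) (by linarith) h1
      rwa [Real.cos_abs] at h2
    set F : ℝ → ℝ := fun t => ((starRingEnd ℂ) ζ * φ (ee t)).re with hFdef
    have hφe : Continuous fun t : ℝ => φ (ee t) :=
      hcont.comp_continuous hecont ee_mem_sphere
    have hGcont : Continuous fun t : ℝ => (starRingEnd ℂ) ζ * φ (ee t) :=
      continuous_const.mul hφe
    have hFcont : Continuous F := Complex.continuous_re.comp hGcont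
    have hFbound : ∀ t : ℝ, -1 ≤ F t := by
      intro t
      have h1 : ‖(starRingEnd ℂ) ζ * φ (ee t)‖ = 1 := by
        rw [norm_mul, Complex.norm_conj, hζdef,
          abs_eq_one_of_mem_sphere (ee_mem_sphere m),
          abs_eq_one_of_mem_sphere (hbij.mapsTo (ee_mem_sphere t)), one_mul]
      have h2 := Complex.abs_re_le_norm ((starRingEnd ℂ) ζ * φ (ee t))
      rw [h1] at h2
      have := abs_le.1 h2
      simpa [hFdef] using this.1
    have heper : ∀ t : ℝ, ee (t + 2*π) = ee t := fun t =>
      ee_eq_iff.2 ⟨1, by push_cast; ring⟩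
    have hFper : Function.Periodic F (2*π) := by
      intro t
      simp only [hFdef]
      rw [heper]
    have hmean0 : (∫ t in (0:ℝ)..(2*π), F t) = 0 := by
      have hint : IntervalIntegrable (fun t => (starRingEnd ℂ) ζ * φ (ee t)) volume 0 (2*π) :=
        hGcont.intervalIntegrable _ _
      have h2 : (∫ t in (0:ℝ)..(2*π), (starRingEnd ℂ) ζ * φ (ee t)) = 0 := by
        rw [intervalIntegral.integral_const_mul]
        have hm : (∫ t in (0:ℝ)..(2 * π), φ (ee t)) = 0 := hmean
        rw [hm, mul_zero]
      have h3 := Complex.reCLM.intervalIntegral_comp_comm hint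
      rw [h2] at h3
      simpa [hFdef] using h3
    have hshift : (∫ t in θ..(θ + 2*π), F t) = 0 := by
      rw [← hmean0]
      have h := hFper.intervalIntegral_add_eq θ 0
      simpa using h
    have hsplit : (∫ t in θ..(θ + 2 * π / 3), F t) + (∫ t in (θ + 2 * π / 3)..(θ + 2*π), F t)
        = ∫ t in θ..(θ + 2*π), F t :=
      intervalIntegral.integral_add_adjacent_intervals (hFcont.intervalIntegrable _ _)
        (hFcont.intervalIntegrable _ _)
    have hB1 : -(2*π/3) ≤ ∫ t in θ..(θ + 2 * π / 3), F t := by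
      have h : (∫ _ in θ..(θ + 2 * π / 3), (-1:ℝ)) ≤ ∫ t in θ..(θ + 2 * π / 3), F t :=
        intervalIntegral.integral_mono_on (by linarith : θ ≤ θ + 2 * π / 3)
        intervalIntegrable_const (hFcont.intervalIntegrable _ _)
        (fun t _ => hFbound t)
      have h0 : (∫ _ in θ..(θ + 2 * π / 3), (-1:ℝ)) = -(2*π/3) := by
        rw [intervalIntegral.integral_const, smul_eq_mul]; ring
      rw [h0] at h
      exact h
    have hpoint : ∀ t ∈ Ioo (θ + 2 * π / 3) (θ + 2*π), c₀ ≤ F t := by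
      intro t ht
      have hmem : φ (ee t) ∈ U := by
        rw [hUeq]
        exact ⟨ee t, ⟨t, ht, rfl⟩, rfl⟩
      exact hRebound _ hmem
    have hne1 : ∀ c : ℝ, ∀ᵐ (t : ℝ), t ≠ c := by
      intro c
      have h0 : {t : ℝ | ¬ t ≠ c} = {c} := by ext x; simp
      rw [ae_iff, h0]
      exact Real.volume_singleton
    have hae : (fun _ => c₀) ≤ᵐ[volume.restrict (Icc (θ + 2 * π / 3) (θ + 2*π))] F := by
      filter_upwards [ae_restrict_mem measurableSet_Icc,
        ae_restrict_of_ae (hne1 (θ + 2 * π / 3)), ae_restrict_of_ae (hne1 (θ + 2*π))]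
        with t ht h1 h2
      exact hpoint t ⟨lt_of_le_of_ne ht.1 (Ne.symm h1), lt_of_le_of_ne ht.2 h2⟩
    have hB2 : c₀ * (4*π/3) ≤ ∫ t in (θ + 2 * π / 3)..(θ + 2*π), F t := by
      have h : (∫ _ in (θ + 2 * π / 3)..(θ + 2*π), c₀) ≤ ∫ t in (θ + 2 * π / 3)..(θ + 2*π), F t :=
        intervalIntegral.integral_mono_ae_restrict
        (by linarith : θ + 2 * π / 3 ≤ θ + 2*π)
        intervalIntegrable_const
        (hFcont.intervalIntegrable _ _) hae
      have h0 : (∫ _ in (θ + 2 * π / 3)..(θ + 2*π), c₀) = c₀ * (4*π/3) := by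
        rw [intervalIntegral.integral_const, smul_eq_mul]; ring
      rw [h0] at h
      exact h
    have hc4 : (1/2) * (4*π/3) < c₀ * (4*π/3) :=
      mul_lt_mul_of_pos_right hc₀ (by positivity)
    have hzero : (∫ t in θ..(θ + 2 * π / 3), F t) + (∫ t in (θ + 2 * π / 3)..(θ + 2*π), F t) = 0 := by
      rw [hsplit, hshift]
    linarith
end

section
/- Let z = re^{iθ} ∈ 𝔻 with e^{−4π} ≤ r < 1, and let γ₂, γ₃ be the arcs associated with z. Then the harmonic measure satisfies ω(z, γ_j, 𝔻) = (1/(2π)) ∫_{γ_j} (1−|z|²)/|ζ−z|² |dζ| ≥ 1/(112π) for j = 2, 3. -/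
open Complex Metric Set Real MeasureTheory

lemma cos_sq_bound (r s δ : ℝ) (hr0 : 0 < r) (hr2 : r < 1)
    (h1r : 1 - r ≤ δ) (hδ : 0 < δ) (hs2 : s ^ 2 ≤ δ ^ 2) :
    (Real.cos s - r) ^ 2 + Real.sin s ^ 2 ≤ 2 * δ ^ 2 := by
  have hcosb : 1 - Real.cos s ≤ s ^ 2 / 2 := by
    have e1 : Real.cos s = 2 * Real.cos (s / 2) ^ 2 - 1 := by
      rw [← Real.cos_two_mul]; congr 1; ring
    have e2 := Real.sin_sq_add_cos_sq (s / 2)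
    have e3 := Real.sin_sq_le_sq (x := s / 2)
    nlinarith
  have e2 := Real.sin_sq_add_cos_sq s
  have p1 : 0 ≤ (1 - r) * (1 - Real.cos s) :=
    mul_nonneg (by linarith) (by linarith [Real.cos_le_one s])
  have p2 : (1 - r) ^ 2 ≤ δ ^ 2 := by nlinarith
  have expand : (Real.cos s - r) ^ 2 + Real.sin s ^ 2
      = (1 - r) ^ 2 + 2 * r * (1 - Real.cos s) := by linear_combination e2
  have h3 : 2 * r * (1 - Real.cos s) ≤ s ^ 2 := by nlinarith
  linarith

lemma aux_harmonic (r θ a b : ℝ) (hr0 : 0 < r) (hr2 : r < 1)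
    (h14 : Real.log (1 / r) ≤ 14 * (1 - r))
    (hab : b - a = Real.log (1 / r) / 2)
    (hIcc : ∀ t ∈ Set.Icc a b, |t - θ| ≤ Real.log (1 / r)) :
    1 / (112 * π) ≤ (1 / (2 * π)) *
      ∫ t in a..b,
        (1 - ‖((r : ℂ) * Complex.exp (θ * Complex.I))‖ ^ 2) /
          ‖(Complex.exp (t * Complex.I) -
            (r : ℂ) * Complex.exp (θ * Complex.I))‖ ^ 2 := by
  set δ := Real.log (1 / r) with hδdef
  have hδ : 0 < δ := Real.log_pos (by rw [lt_div_iff₀ hr0]; linarith)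
  have h1r : 1 - r ≤ δ := by
    have := Real.log_le_sub_one_of_pos hr0
    have hlog : δ = -Real.log r := by rw [hδdef, one_div, Real.log_inv]
    linarith
  set z : ℂ := (r : ℂ) * Complex.exp (θ * Complex.I) with hz
  have habsz : ‖z‖ = r := by
    rw [hz, norm_mul, Complex.norm_real, Complex.norm_exp_ofReal_mul_I,
      mul_one, Real.norm_eq_abs, abs_of_pos hr0]
  have hzne : ∀ t : ℝ, Complex.exp ((t : ℂ) * Complex.I) - z ≠ 0 := by
    intro t
    rw [sub_ne_zero]
    intro h
    have := Complex.norm_exp_ofReal_mul_I t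
    rw [h, habsz] at this
    linarith
  set c : ℝ := (1 - r ^ 2) / (2 * δ ^ 2) with hc
  have hcpos : 0 < c := by
    apply div_pos (by nlinarith) (by positivity)
  -- pointwise bound
  have hpt : ∀ t ∈ Set.Icc a b, c ≤
      (1 - ‖z‖ ^ 2) / ‖(Complex.exp ((t : ℂ) * Complex.I) - z)‖ ^ 2 := by
    intro t ht
    have hs := hIcc t ht
    set s := t - θ with hs'
    have hfac : Complex.exp ((t : ℂ) * Complex.I) - z
        = Complex.exp ((θ : ℂ) * Complex.I) * (Complex.exp ((s : ℂ) * Complex.I) - (r : ℂ)) := by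
      have e : ((θ : ℂ) * Complex.I + (s : ℂ) * Complex.I) = (t : ℂ) * Complex.I := by
        push_cast [hs']; ring
      rw [hz, mul_sub, ← Complex.exp_add, e]; ring
    have habs2 : ‖(Complex.exp ((t : ℂ) * Complex.I) - z)‖ ^ 2
        = (Real.cos s - r) ^ 2 + Real.sin s ^ 2 := by
      rw [hfac, norm_mul, Complex.norm_exp_ofReal_mul_I, one_mul, Complex.sq_norm,
        Complex.normSq_apply]
      simp [Complex.exp_ofReal_mul_I_re, Complex.exp_ofReal_mul_I_im]
      ring
    have hs2 : s ^ 2 ≤ δ ^ 2 := by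
      have h' := abs_le.mp hs
      nlinarith [h'.1, h'.2]
    have hden : ‖(Complex.exp ((t : ℂ) * Complex.I) - z)‖ ^ 2 ≤ 2 * δ ^ 2 := by
      rw [habs2]
      exact cos_sq_bound r s δ hr0 hr2 h1r hδ hs2
    have hdpos : 0 < ‖(Complex.exp ((t : ℂ) * Complex.I) - z)‖ ^ 2 :=
      pow_pos (norm_pos_iff.mpr (hzne t)) 2
    rw [habsz, hc]
    gcongr
    nlinarith
  -- integrability / continuity
  have hcont : Continuous fun t : ℝ =>
      (1 - ‖z‖ ^ 2) / ‖(Complex.exp ((t : ℂ) * Complex.I) - z)‖ ^ 2 := by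
    have h1 : Continuous fun t : ℝ => Complex.exp ((t : ℂ) * Complex.I) - z := by fun_prop
    exact continuous_const.div ((continuous_norm.comp h1).pow 2)
      (fun t => pow_ne_zero 2 (norm_ne_zero_iff.mpr (hzne t)))
  have hle : a ≤ b := by nlinarith
  have hint : (b - a) * c ≤ ∫ t in a..b,
      (1 - ‖z‖ ^ 2) / ‖(Complex.exp ((t : ℂ) * Complex.I) - z)‖ ^ 2 := by
    have := intervalIntegral.integral_mono_on hle
      (intervalIntegrable_const (μ := MeasureTheory.volume) (c := c) (a := a) (b := b)) (hcont.intervalIntegrable a b) hpt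
    rwa [intervalIntegral.integral_const, smul_eq_mul] at this
  have hπ : 0 < π := Real.pi_pos
  have key : (1 : ℝ) / 56 ≤ (b - a) * c := by
    rw [hab, hc]
    have h14' : δ ≤ 14 * (1 - r ^ 2) := by nlinarith
    rw [show δ / 2 * ((1 - r ^ 2) / (2 * δ ^ 2)) = (1 - r ^ 2) / (4 * δ) by
      field_simp; ring]
    rw [div_le_div_iff₀ (by norm_num) (by positivity)]
    nlinarith
  calc 1 / (112 * π) = 1 / (2 * π) * (1 / 56) := by ring
    _ ≤ 1 / (2 * π) * ((b - a) * c) := by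
        apply mul_le_mul_of_nonneg_left key (by positivity)
    _ ≤ _ := by
        apply mul_le_mul_of_nonneg_left hint (by positivity)

/-- **Lemma (lower harmonic measure bound, arcs γ₂, γ₃).**
For `z = r e^{iθ}` with `e^{−4π} ≤ r < 1` and `δ = log(1/r)`, the harmonic measure of
each of the arcs `γ₂ = {e^{it} : θ−δ ≤ t ≤ θ−δ/2}` and `γ₃ = {e^{it} : θ+δ/2 ≤ t ≤ θ+δ}`
at `z` in the unit disk, `ω(z,γⱼ,𝔻) = (1/2π)∫_{γⱼ} (1−|z|²)/|ζ−z|² |dζ|`,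
is at least `1/(112π)`. -/
theorem harmonic_measure_gamma23_lower (r θ : ℝ)
    (hr1 : Real.exp (-(4 * π)) ≤ r) (hr2 : r < 1) :
    1 / (112 * π) ≤ (1 / (2 * π)) *
      ∫ t in (θ - Real.log (1 / r))..(θ - Real.log (1 / r) / 2),
        (1 - ‖((r : ℂ) * Complex.exp (θ * Complex.I))‖ ^ 2) /
          ‖(Complex.exp (t * Complex.I) -
            (r : ℂ) * Complex.exp (θ * Complex.I))‖ ^ 2 ∧
    1 / (112 * π) ≤ (1 / (2 * π)) *
      ∫ t in (θ + Real.log (1 / r) / 2)..(θ + Real.log (1 / r)),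
        (1 - ‖((r : ℂ) * Complex.exp (θ * Complex.I))‖ ^ 2) /
          ‖(Complex.exp (t * Complex.I) -
            (r : ℂ) * Complex.exp (θ * Complex.I))‖ ^ 2 := by
  have hr0 : 0 < r := lt_of_lt_of_le (Real.exp_pos _) hr1
  have hδ : 0 < Real.log (1 / r) := Real.log_pos (by rw [lt_div_iff₀ hr0]; linarith)
  have h14 : Real.log (1 / r) ≤ 14 * (1 - r) := by
    rcases le_or_gt (1 / 14 : ℝ) r with h | h
    · have h1 : Real.log (1 / r) ≤ 1 / r - 1 :=
        Real.log_le_sub_one_of_pos (by positivity)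
      have h2 : 1 / r - 1 ≤ 14 * (1 - r) := by
        rw [div_sub_one (ne_of_gt hr0), div_le_iff₀ hr0]
        nlinarith
      linarith
    · have hlog : Real.log (1 / r) ≤ 4 * π := by
        rw [one_div, Real.log_inv, neg_le]
        exact (Real.le_log_iff_exp_le hr0).mpr hr1
      have hπ : π < 3.141593 := Real.pi_lt_d6
      nlinarith
  constructor
  · apply aux_harmonic r θ _ _ hr0 hr2 h14 (by ring)
    intro t ht
    simp only [Set.mem_Icc] at ht
    rw [abs_le]
    constructor <;> linarith [ht.1, ht.2]
  · apply aux_harmonic r θ _ _ hr0 hr2 h14 (by ring)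
    intro t ht
    simp only [Set.mem_Icc] at ht
    rw [abs_le]
    constructor <;> linarith [ht.1, ht.2]
end

section
/- Let z = re^{iθ} ∈ 𝔻 with e^{−π/6} ≤ r < 1, and let γ₁, γ₄ be the arcs associated with z. Then the harmonic measure satisfies ω(z, γ_j, 𝔻) = (1/(2π)) ∫_{γ_j} (1−|z|²)/|ζ−z|² |dζ| ≥ 1/(30π) for j = 1, 4. -/
open Complex Metric Set Real MeasureTheory

lemma hm_abs_sq (r θ t : ℝ) :
    ‖Complex.exp (t * Complex.I) - (r : ℂ) * Complex.exp (θ * Complex.I)‖ ^ 2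
      = (Real.cos (t - θ) - r) ^ 2 + (Real.sin (t - θ)) ^ 2 := by
  have hfac : Complex.exp (t * Complex.I) - (r : ℂ) * Complex.exp (θ * Complex.I)
      = (Complex.exp (((t - θ : ℝ) : ℂ) * Complex.I) - (r : ℂ)) * Complex.exp (θ * Complex.I) := by
    rw [sub_mul, ← Complex.exp_add]
    push_cast
    ring_nf
  rw [hfac, norm_mul, Complex.norm_exp_ofReal_mul_I, mul_one, ← Complex.normSq_eq_norm_sq,
    Complex.normSq_apply]
  simp only [Complex.sub_re, Complex.sub_im, Complex.exp_ofReal_mul_I_re,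
    Complex.exp_ofReal_mul_I_im, Complex.ofReal_re, Complex.ofReal_im]
  ring

set_option maxHeartbeats 1000000 in
lemma hm_key (r θ a b : ℝ) (hr1 : Real.exp (-(π / 6)) ≤ r) (hr2 : r < 1)
    (hab : b - a = Real.log (1 / r))
    (hmem : ∀ t ∈ Set.Icc a b, |t - θ| ≤ 2 * Real.log (1 / r)) :
    1 / (30 * π) ≤ (1 / (2 * π)) *
      ∫ t in a..b,
        (1 - ‖(r : ℂ) * Complex.exp (θ * Complex.I)‖ ^ 2) /
          ‖Complex.exp (t * Complex.I) -
            (r : ℂ) * Complex.exp (θ * Complex.I)‖ ^ 2 := by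
  have hrpos : 0 < r := lt_of_lt_of_le (Real.exp_pos _) hr1
  set δ := Real.log (1 / r) with hδdef
  have hδpos : 0 < δ := Real.log_pos (by rw [lt_div_iff₀ hrpos]; linarith)
  -- r ≥ 1/3
  have hr3 : (1:ℝ)/3 ≤ r := by
    have h1 : Real.exp (-1 : ℝ) ≤ Real.exp (-(π/6)) := by
      apply Real.exp_le_exp.2
      have := Real.pi_le_four
      linarith
    have h2 : (1:ℝ)/3 ≤ Real.exp (-1) := by
      rw [Real.exp_neg]
      rw [div_le_iff₀ (by positivity : (0:ℝ) < 3), inv_mul_eq_div, le_div_iff₀ (Real.exp_pos 1)]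
      nlinarith [Real.exp_one_lt_d9]
    linarith
  -- 1 - r ≤ δ and r * δ ≤ 1 - r
  have h1r : 1 - r ≤ δ := by
    have hlog : Real.log (1/r) = -Real.log r := by
      rw [Real.log_div one_ne_zero (ne_of_gt hrpos), Real.log_one]; ring
    have h2 := Real.log_le_sub_one_of_pos hrpos
    rw [hδdef, hlog]; linarith
  have hrδ : r * δ ≤ 1 - r := by
    have h := Real.log_le_sub_one_of_pos (show (0:ℝ) < 1/r by positivity)
    have : r * Real.log (1/r) ≤ r * (1/r - 1) := by
      exact mul_le_mul_of_nonneg_left h (le_of_lt hrpos)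
    calc r * δ ≤ r * (1/r - 1) := this
      _ = 1 - r := by field_simp
  -- numerator value
  have hnum : ‖(r : ℂ) * Complex.exp (θ * Complex.I)‖ = r := by
    rw [norm_mul, Complex.norm_exp_ofReal_mul_I, mul_one, Complex.norm_of_nonneg hrpos.le]
  -- pointwise lower bound
  have hpt : ∀ t ∈ Set.Icc a b,
      1 / (15 * δ) ≤ (1 - ‖(r : ℂ) * Complex.exp (θ * Complex.I)‖ ^ 2) /
          ‖Complex.exp (t * Complex.I) -
            (r : ℂ) * Complex.exp (θ * Complex.I)‖ ^ 2 := by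
    intro t ht
    rw [hnum, hm_abs_sq]
    obtain ⟨s, hsgen⟩ : ∃ s, t - θ = s := ⟨t - θ, rfl⟩
    rw [hsgen]
    have hsb : |s| ≤ 2 * δ := hsgen ▸ hmem t ht
    have hcos : 1 - Real.cos s ≤ s ^ 2 / 2 := by
      have := Real.one_sub_sq_div_two_le_cos (x := s)
      linarith
    have hD : (Real.cos s - r) ^ 2 + Real.sin s ^ 2 = (1 - r)^2 + 2 * r * (1 - Real.cos s) := by
      have := Real.sin_sq_add_cos_sq s
      nlinarith [this]
    have hs2 : s ^ 2 ≤ 4 * δ ^ 2 := by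
      nlinarith [abs_mul_abs_self s,
        mul_le_mul hsb hsb (abs_nonneg s) (by positivity : (0:ℝ) ≤ 2 * δ)]
    have e1 : (1 - r) ^ 2 ≤ δ ^ 2 := by nlinarith
    have e2 : 2 * r * (1 - Real.cos s) ≤ s ^ 2 := by
      have a1 : r * (1 - Real.cos s) ≤ r * (s ^ 2 / 2) :=
        mul_le_mul_of_nonneg_left hcos hrpos.le
      have a2 : r * (s ^ 2 / 2) ≤ s ^ 2 / 2 := by
        nlinarith [sq_nonneg s]
      linarith
    have hDle : (Real.cos s - r) ^ 2 + Real.sin s ^ 2 ≤ 5 * δ ^ 2 := by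
      rw [hD]; linarith
    have hDpos : 0 < (Real.cos s - r) ^ 2 + Real.sin s ^ 2 := by
      rw [hD]
      have h1 : 0 < (1 - r) ^ 2 := pow_pos (by linarith) 2
      have h2 : 0 ≤ 2 * r * (1 - Real.cos s) :=
        mul_nonneg (by positivity) (sub_nonneg.2 (Real.cos_le_one s))
      linarith
    have hnumlb : δ / 3 ≤ 1 - r ^ 2 := by nlinarith [hrδ, hr3, hδpos, hrpos]
    have key : (δ / 3) / (5 * δ ^ 2) ≤ (1 - r ^ 2) / ((Real.cos s - r) ^ 2 + Real.sin s ^ 2) :=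
      div_le_div₀ (by nlinarith) hnumlb hDpos hDle
    have heq : (1:ℝ) / (15 * δ) = (δ / 3) / (5 * δ ^ 2) := by
      field_simp; ring
    rw [heq]; exact key
  -- continuity / integrability
  have hcont : ContinuousOn (fun t : ℝ =>
      (1 - ‖(r : ℂ) * Complex.exp (θ * Complex.I)‖ ^ 2) /
        ‖Complex.exp (t * Complex.I) -
          (r : ℂ) * Complex.exp (θ * Complex.I)‖ ^ 2) (Set.uIcc a b) := by
    apply ContinuousOn.div continuousOn_const
    · exact ((continuous_norm.comp (by continuity)).pow 2).continuousOn
    · intro t _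
      have hne : Complex.exp (t * Complex.I) - (r : ℂ) * Complex.exp (θ * Complex.I) ≠ 0 := by
        intro h
        have h2 : ‖Complex.exp (t * Complex.I)‖ =
            ‖(r : ℂ) * Complex.exp (θ * Complex.I)‖ := by
          rw [sub_eq_zero] at h; rw [h]
        rw [Complex.norm_exp_ofReal_mul_I, hnum] at h2
        linarith
      exact pow_ne_zero 2 (norm_ne_zero_iff.mpr hne)
  have hint : IntervalIntegrable (fun t : ℝ =>
      (1 - ‖(r : ℂ) * Complex.exp (θ * Complex.I)‖ ^ 2) /
        ‖Complex.exp (t * Complex.I) -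
          (r : ℂ) * Complex.exp (θ * Complex.I)‖ ^ 2) MeasureTheory.volume a b :=
    hcont.intervalIntegrable
  have haleb : a ≤ b := by linarith [hδpos, hab]
  have hmono := intervalIntegral.integral_mono_on haleb
    (intervalIntegrable_const (c := 1 / (15 * δ))) hint hpt
  rw [intervalIntegral.integral_const, smul_eq_mul, hab] at hmono
  have hI : (1:ℝ)/15 ≤ ∫ t in a..b,
      (1 - ‖(r : ℂ) * Complex.exp (θ * Complex.I)‖ ^ 2) /
        ‖Complex.exp (t * Complex.I) -
          (r : ℂ) * Complex.exp (θ * Complex.I)‖ ^ 2 := by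
    have : δ * (1 / (15 * δ)) = 1/15 := by field_simp
    linarith [this ▸ hmono]
  have hπ : 0 < π := Real.pi_pos
  calc 1 / (30 * π) = (1 / (2 * π)) * (1/15) := by field_simp; ring
    _ ≤ _ := by
        apply mul_le_mul_of_nonneg_left hI
        positivity

/-- **Lemma 3.2 (lower harmonic measure bound, arcs γ₁, γ₄).**
For `z = r e^{iθ}` with `e^{−π/6} ≤ r < 1` and `δ = log(1/r)`, the harmonic measure of
each of the arcs `γ₁ = {e^{it} : θ−2δ ≤ t ≤ θ−δ}` and `γ₄ = {e^{it} : θ+δ ≤ t ≤ θ+2δ}`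
at `z` in the unit disk, `ω(z,γⱼ,𝔻) = (1/2π)∫_{γⱼ} (1−|z|²)/|ζ−z|² |dζ|`,
is at least `1/(30π)`. -/
theorem harmonic_measure_gamma14_lower (r θ : ℝ)
    (hr1 : Real.exp (-(π / 6)) ≤ r) (hr2 : r < 1) :
    1 / (30 * π) ≤ (1 / (2 * π)) *
      ∫ t in (θ - 2 * Real.log (1 / r))..(θ - Real.log (1 / r)),
        (1 - ‖(r : ℂ) * Complex.exp (θ * Complex.I)‖ ^ 2) /
          ‖Complex.exp (t * Complex.I) -
            (r : ℂ) * Complex.exp (θ * Complex.I)‖ ^ 2 ∧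
    1 / (30 * π) ≤ (1 / (2 * π)) *
      ∫ t in (θ + Real.log (1 / r))..(θ + 2 * Real.log (1 / r)),
        (1 - ‖(r : ℂ) * Complex.exp (θ * Complex.I)‖ ^ 2) /
          ‖Complex.exp (t * Complex.I) -
            (r : ℂ) * Complex.exp (θ * Complex.I)‖ ^ 2 := by
  have hrpos : 0 < r := lt_of_lt_of_le (Real.exp_pos _) hr1
  have hδpos : 0 < Real.log (1 / r) := Real.log_pos (by rw [lt_div_iff₀ hrpos]; linarith)
  constructor
  · apply hm_key r θ _ _ hr1 hr2 (by ring)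
    intro t ht
    rw [abs_le]
    constructor <;> [linarith [ht.1]; linarith [ht.2, hδpos]]
  · apply hm_key r θ _ _ hr1 hr2 (by ring)
    intro t ht
    rw [abs_le]
    constructor <;> [linarith [ht.1, hδpos]; linarith [ht.2]]
end

section
/- Let g be a diffeomorphism of the upper half-plane ℍ onto itself satisfying g(z+2π) = g(z) + 2π and |Im g(z) − Im z| ≤ 4π for all z ∈ ℍ. Then the formula Ψ(e^{iz}) = exp(i·g(z)) gives a well-defined diffeomorphism Ψ of the punctured disk 𝔻∖{0} onto itself, and for every z ∈ ℍ one has ‖DΨ(e^{iz})‖ ≤ e^{4π}·‖Dg(z)‖ and ‖DΨ(e^{iz})⁻¹‖ ≤ e^{4π}·‖Dg(z)⁻¹‖. -/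
open Complex Metric Set Real

/-- Multiplication by a unit of `ℂ`, as a real-linear continuous equivalence. -/
noncomputable def mulE (u : ℂˣ) : ℂ ≃L[ℝ] ℂ :=
{ toLinearEquiv :=
  { toFun := fun x => (u : ℂ) * x
    map_add' := fun x y => mul_add _ x y
    map_smul' := fun r x => by simp; ring
    invFun := fun x => ((u⁻¹ : ℂˣ) : ℂ) * x
    left_inv := fun x => by
      show ((u⁻¹ : ℂˣ) : ℂ) * ((u : ℂ) * x) = x
      rw [← mul_assoc]
      simp
    right_inv := fun x => by
      show (u : ℂ) * (((u⁻¹ : ℂˣ) : ℂ) * x) = x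
      rw [← mul_assoc]
      simp }
  continuous_toFun := continuous_mul_left _
  continuous_invFun := continuous_mul_left _ }

lemma mulE_apply (u : ℂˣ) (x : ℂ) : mulE u x = (u : ℂ) * x := rfl

lemma mulE_symm_apply (u : ℂˣ) (x : ℂ) : (mulE u).symm x = ((u⁻¹ : ℂˣ) : ℂ) * x := rfl

lemma mulE_norm_le (u : ℂˣ) : ‖((mulE u) : ℂ →L[ℝ] ℂ)‖ ≤ ‖(u : ℂ)‖ := by
  refine ContinuousLinearMap.opNorm_le_bound _ (by positivity) (fun x => ?_)
  have : ((mulE u) : ℂ →L[ℝ] ℂ) x = (u : ℂ) * x := rfl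
  rw [this, norm_mul]

/-- **Transfer from the half-plane to the punctured disk.**
Let `g` be a diffeomorphism of the upper half-plane `ℍ` onto itself with
`g(z+2π) = g(z)+2π` and `|Im g(z) − Im z| ≤ 4π`.  Then `Ψ(e^{iz}) := exp(i·g(z))` is a
well-defined diffeomorphism of the punctured disk `𝔻 ∖ {0}` onto itself, and
`‖DΨ(e^{iz})‖ ≤ e^{4π}·‖Dg(z)‖`, `‖DΨ(e^{iz})⁻¹‖ ≤ e^{4π}·‖Dg(z)⁻¹‖` for `z ∈ ℍ`. -/
theorem punctured_disk_transfer (g : ℂ → ℂ)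
    (hbij : BijOn g {z : ℂ | 0 < z.im} {z : ℂ | 0 < z.im})
    (hdiff : ∀ z : ℂ, 0 < z.im → ∃ D : ℂ ≃L[ℝ] ℂ, HasFDerivAt g (D : ℂ →L[ℝ] ℂ) z)
    (hper : ∀ z : ℂ, 0 < z.im → g (z + 2 * π) = g z + 2 * π)
    (him : ∀ z : ℂ, 0 < z.im → |(g z).im - z.im| ≤ 4 * π) :
    ∃ Ψ : ℂ → ℂ,
      (∀ z : ℂ, 0 < z.im → Ψ (Complex.exp (Complex.I * z)) =
        Complex.exp (Complex.I * g z)) ∧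
      BijOn Ψ (ball (0:ℂ) 1 \ {0}) (ball (0:ℂ) 1 \ {0}) ∧
      ∀ z : ℂ, 0 < z.im → ∀ Dg : ℂ ≃L[ℝ] ℂ, HasFDerivAt g (Dg : ℂ →L[ℝ] ℂ) z →
        ∃ D : ℂ ≃L[ℝ] ℂ,
          HasFDerivAt Ψ (D : ℂ →L[ℝ] ℂ) (Complex.exp (Complex.I * z)) ∧
          ‖(D : ℂ →L[ℝ] ℂ)‖ ≤ Real.exp (4 * π) * ‖(Dg : ℂ →L[ℝ] ℂ)‖ ∧
          ‖(D.symm : ℂ →L[ℝ] ℂ)‖ ≤ Real.exp (4 * π) * ‖(Dg.symm : ℂ →L[ℝ] ℂ)‖ := by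
  -- extended periodicity
  have hper' : ∀ n : ℤ, ∀ z : ℂ, 0 < z.im →
      g (z + ((n * (2 * π) : ℝ) : ℂ)) = g z + ((n * (2 * π) : ℝ) : ℂ) := by
    intro n
    induction n using Int.induction_on with
    | zero => intro z hz; simp
    | succ k ih =>
        intro z hz
        have hzk : 0 < (z + ((k * (2 * π) : ℝ) : ℂ)).im := by simp [hz]
        have h1 := hper _ hzk
        have h2 : z + (((k : ℝ) + 1) * (2 * π) : ℝ) = (z + ((k * (2 * π) : ℝ) : ℂ)) + 2 * π := by
          push_cast; ring
        have ih' := ih z hz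
        push_cast at h1 h2 ih' ⊢
        rw [h2, h1, ih']
        ring
    | pred k ih =>
        intro z hz
        have hzk : 0 < (z + ((((-k : ℝ) - 1) * (2 * π) : ℝ) : ℂ)).im := by simp [hz]
        have h1 := hper _ hzk
        have h2 : (z + ((((-k : ℝ) - 1) * (2 * π) : ℝ) : ℂ)) + 2 * π
            = z + ((((-k : ℝ)) * (2 * π) : ℝ) : ℂ) := by push_cast; ring
        rw [h2] at h1
        have ih' := ih z hz
        push_cast at h1 ih' ⊢
        rw [ih'] at h1
        rw [eq_sub_of_add_eq h1.symm]
        ring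
  -- exponential equality
  have expeq : ∀ z z' : ℂ, Complex.exp (Complex.I * z) = Complex.exp (Complex.I * z') ↔
      ∃ n : ℤ, z = z' + n * (2 * π) := by
    intro z z'
    rw [Complex.exp_eq_exp_iff_exists_int]
    constructor
    · rintro ⟨n, h⟩
      exact ⟨n, mul_left_cancel₀ Complex.I_ne_zero (by rw [h]; ring)⟩
    · rintro ⟨n, h⟩
      exact ⟨n, by rw [h]; ring⟩
  -- membership of exponentials in the punctured disk
  have memD : ∀ z : ℂ, 0 < z.im → Complex.exp (Complex.I * z) ∈ ball (0:ℂ) 1 \ {0} := by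
    intro z hz
    refine ⟨?_, by simp [Complex.exp_ne_zero]⟩
    rw [mem_ball, dist_eq_norm, sub_zero, Complex.norm_exp]
    have : (Complex.I * z).re = -z.im := by simp
    rw [this]
    calc Real.exp (-z.im) < Real.exp 0 := Real.exp_lt_exp.mpr (by linarith)
    _ = 1 := Real.exp_zero
  -- the logarithmic chart
  have hlog : ∀ w : ℂ, w ∈ ball (0:ℂ) 1 \ {0} →
      0 < ((-Complex.I) * Complex.log w).im ∧
      Complex.exp (Complex.I * ((-Complex.I) * Complex.log w)) = w := by
    rintro w ⟨hw1, hw2⟩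
    have hw0 : w ≠ 0 := hw2
    have habs : ‖w‖ < 1 := by
      rwa [mem_ball, dist_eq_norm, sub_zero] at hw1
    constructor
    · have h1 : ((-Complex.I) * Complex.log w).im = -(Complex.log w).re := by simp
      rw [h1, Complex.log_re]
      have := Real.log_neg (norm_pos_iff.mpr hw0) habs
      linarith
    · rw [show Complex.I * ((-Complex.I) * Complex.log w) = Complex.log w by
        rw [← mul_assoc]; simp [Complex.I_mul_I]]
      exact Complex.exp_log hw0
  -- the map Ψ
  set Ψ : ℂ → ℂ := fun w => Complex.exp (Complex.I * g ((-Complex.I) * Complex.log w)) with hΨdef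
  -- well-definedness
  have hA : ∀ z : ℂ, 0 < z.im → Ψ (Complex.exp (Complex.I * z)) =
      Complex.exp (Complex.I * g z) := by
    intro z hz
    obtain ⟨him', hexp⟩ := hlog _ (memD z hz)
    set z' := (-Complex.I) * Complex.log (Complex.exp (Complex.I * z)) with hz'
    obtain ⟨n, hn⟩ := (expeq z' z).mp (by rw [hexp])
    have hz'' : z' = z + ((n * (2 * π) : ℝ) : ℂ) := by rw [hn]; push_cast; ring
    show Complex.exp (Complex.I * g z') = Complex.exp (Complex.I * g z)
    rw [hz'', hper' n z hz]
    exact (expeq _ _).mpr ⟨n, by push_cast; ring⟩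
  refine ⟨Ψ, hA, ⟨?_, ?_, ?_⟩, ?_⟩
  · -- MapsTo
    intro w hw
    obtain ⟨him', hexp⟩ := hlog w hw
    exact memD _ (hbij.mapsTo him')
  · -- InjOn
    intro w1 h1 w2 h2 heq
    obtain ⟨hi1, he1⟩ := hlog w1 h1
    obtain ⟨hi2, he2⟩ := hlog w2 h2
    set z1 := (-Complex.I) * Complex.log w1
    set z2 := (-Complex.I) * Complex.log w2
    have heq' : Complex.exp (Complex.I * g z1) = Complex.exp (Complex.I * g z2) := heq
    obtain ⟨n, hn⟩ := (expeq _ _).mp heq'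
    have hkey : g z1 = g (z2 + ((n * (2 * π) : ℝ) : ℂ)) := by
      rw [hper' n z2 hi2, hn]; push_cast; ring
    have hz12 : z1 = z2 + ((n * (2 * π) : ℝ) : ℂ) :=
      hbij.injOn hi1 (by simpa using hi2) hkey
    rw [← he1, ← he2, hz12]
    exact (expeq _ _).mpr ⟨n, by push_cast; ring⟩
  · -- SurjOn
    intro w' hw'
    obtain ⟨hiζ, heζ⟩ := hlog w' hw'
    obtain ⟨z, hz, hgz⟩ := hbij.surjOn hiζ
    refine ⟨Complex.exp (Complex.I * z), memD z hz, ?_⟩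
    rw [hA z hz, hgz, heζ]
  · -- derivatives
    intro z hz Dg hDg
    set w0 := Complex.exp (Complex.I * z) with hw0def
    have hw0 : w0 ≠ 0 := Complex.exp_ne_zero _
    set c1 := Complex.I * Complex.exp (Complex.I * g z) with hc1def
    set c2 := -Complex.I * w0⁻¹ with hc2def
    have hc1 : c1 ≠ 0 := mul_ne_zero Complex.I_ne_zero (Complex.exp_ne_zero _)
    have hc2 : c2 ≠ 0 := mul_ne_zero (neg_ne_zero.mpr Complex.I_ne_zero) (inv_ne_zero hw0)
    set u1 := Units.mk0 c1 hc1
    set u2 := Units.mk0 c2 hc2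
    set D : ℂ ≃L[ℝ] ℂ := (mulE u2).trans (Dg.trans (mulE u1)) with hDdef
    set φ : ℂ → ℂ := fun w => z + (-Complex.I) * Complex.log (w * w0⁻¹) with hφdef
    have hφ0 : φ w0 = z := by
      simp [hφdef, mul_inv_cancel₀ hw0, Complex.log_one]
    -- derivative of φ
    have hφd : HasFDerivAt φ ((mulE u2) : ℂ →L[ℝ] ℂ) w0 := by
      have hL : HasDerivAt Complex.log (1 : ℂ)⁻¹ 1 :=
        Complex.hasDerivAt_log Complex.one_mem_slitPlane
      have hm : HasDerivAt (fun w : ℂ => w * w0⁻¹) w0⁻¹ w0 := by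
        simpa using (hasDerivAt_id w0).mul_const w0⁻¹
      have hcomp : HasDerivAt (fun w : ℂ => Complex.log (w * w0⁻¹)) ((1:ℂ)⁻¹ * w0⁻¹) w0 := by
        have := HasDerivAt.comp w0 (by simpa [mul_inv_cancel₀ hw0] using hL) hm
        rw [inv_one, one_mul]
        exact (by simpa using this : HasDerivAt (Complex.log ∘ fun w : ℂ => w * w0⁻¹) w0⁻¹ w0)
      have hφ' : HasDerivAt φ c2 w0 := by
        have := (hcomp.const_mul (-Complex.I)).const_add z
        simpa [hφdef, hc2def] using this
      have := (hφ'.hasFDerivAt).restrictScalars ℝ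
      refine this.congr_fderiv (Eq.symm ?_)
      ext x
      show (u2 : ℂ) * x = x • c2
      simp [u2, smul_eq_mul, mul_comm]
    -- derivative of g at φ w0
    have hgd : HasFDerivAt g (Dg : ℂ →L[ℝ] ℂ) (φ w0) := by rw [hφ0]; exact hDg
    -- derivative of the exponential
    have hEd : HasFDerivAt (fun ζ : ℂ => Complex.exp (Complex.I * ζ))
        ((mulE u1) : ℂ →L[ℝ] ℂ) (g z) := by
      have h1 : HasDerivAt (fun ζ : ℂ => Complex.I * ζ) Complex.I (g z) := by
        simpa using (hasDerivAt_id (g z)).const_mul Complex.I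
      have h2 : HasDerivAt (fun ζ : ℂ => Complex.exp (Complex.I * ζ))
          (Complex.exp (Complex.I * g z) * Complex.I) (g z) :=
        HasDerivAt.comp (g z) (Complex.hasDerivAt_exp _) h1
      have := (h2.hasFDerivAt).restrictScalars ℝ
      refine this.congr_fderiv (Eq.symm ?_)
      ext x
      show (u1 : ℂ) * x = x • (Complex.exp (Complex.I * g z) * Complex.I)
      simp [u1, hc1def, smul_eq_mul]
      ring
    -- composition
    have hF : HasFDerivAt (fun w => Complex.exp (Complex.I * g (φ w)))
        (((mulE u1) : ℂ →L[ℝ] ℂ).comp (((Dg : ℂ →L[ℝ] ℂ)).comp ((mulE u2) : ℂ →L[ℝ] ℂ))) w0 := by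
      have hE' : HasFDerivAt (fun ζ : ℂ => Complex.exp (Complex.I * ζ))
          ((mulE u1) : ℂ →L[ℝ] ℂ) ((g ∘ φ) w0) := by
        show HasFDerivAt _ _ (g (φ w0))
        rw [hφ0]; exact hEd
      exact (HasFDerivAt.comp w0 hE' (hgd.comp w0 hφd) :)
    -- local agreement with Ψ
    have hEq : (fun w => Complex.exp (Complex.I * g (φ w))) =ᶠ[nhds w0] Ψ := by
      have hcont : ContinuousAt φ w0 := hφd.continuousAt
      have h1 : ∀ᶠ w in nhds w0, 0 < (φ w).im := by
        have hopen : IsOpen {x : ℂ | 0 < x.im} := isOpen_lt continuous_const Complex.continuous_im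
        exact hcont.eventually_mem (hopen.mem_nhds (by rw [hφ0]; exact hz))
      have h2 : ∀ᶠ w in nhds w0, w ≠ 0 := eventually_ne_nhds hw0
      filter_upwards [h1, h2] with w hwim hwne
      have hexpφ : Complex.exp (Complex.I * φ w) = w := by
        have hiz : Complex.I * φ w = Complex.I * z + Complex.log (w * w0⁻¹) := by
          rw [hφdef]
          have : Complex.I * (-Complex.I) = 1 := by simp [Complex.I_mul_I]
          calc Complex.I * (z + (-Complex.I) * Complex.log (w * w0⁻¹))
              = Complex.I * z + (Complex.I * (-Complex.I)) * Complex.log (w * w0⁻¹) := by ring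
            _ = Complex.I * z + Complex.log (w * w0⁻¹) := by rw [this, one_mul]
        rw [hiz, Complex.exp_add, Complex.exp_log (mul_ne_zero hwne (inv_ne_zero hw0)),
          ← hw0def]
        field_simp
      calc Complex.exp (Complex.I * g (φ w)) = Ψ (Complex.exp (Complex.I * φ w)) :=
            (hA (φ w) hwim).symm
        _ = Ψ w := by rw [hexpφ]
    have hΨd : HasFDerivAt Ψ
        (((mulE u1) : ℂ →L[ℝ] ℂ).comp (((Dg : ℂ →L[ℝ] ℂ)).comp ((mulE u2) : ℂ →L[ℝ] ℂ))) w0 :=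
      hF.congr_of_eventuallyEq hEq.symm
    -- norms
    have habs1 : ‖c1‖ = Real.exp (-(g z).im) := by
      rw [hc1def, norm_mul, Complex.norm_I, one_mul, Complex.norm_exp]
      congr 1
      simp
    have habsw0 : ‖w0‖ = Real.exp (-z.im) := by
      rw [hw0def, Complex.norm_exp]
      congr 1
      simp
    have habs2 : ‖c2‖ = Real.exp z.im := by
      rw [hc2def, norm_mul, norm_neg, Complex.norm_I, one_mul, norm_inv, habsw0,
        ← Real.exp_neg, neg_neg]
    have hDcoe : (D : ℂ →L[ℝ] ℂ) =
        ((mulE u1) : ℂ →L[ℝ] ℂ).comp (((Dg : ℂ →L[ℝ] ℂ)).comp ((mulE u2) : ℂ →L[ℝ] ℂ)) := by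
      ext x; rfl
    have hDsymm : (D.symm : ℂ →L[ℝ] ℂ) =
        ((mulE u2).symm : ℂ →L[ℝ] ℂ).comp
          (((Dg.symm : ℂ →L[ℝ] ℂ)).comp ((mulE u1).symm : ℂ →L[ℝ] ℂ)) := by
      ext x; rfl
    have hieq := him z hz
    have h1le : z.im - (g z).im ≤ 4 * π := by
      have := abs_le.mp hieq
      linarith [this.1]
    have h2le : (g z).im - z.im ≤ 4 * π := by
      have := abs_le.mp hieq
      linarith [this.2]
    refine ⟨D, by rw [hDcoe]; exact hΨd, ?_, ?_⟩
    · rw [hDcoe]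
      calc ‖((mulE u1) : ℂ →L[ℝ] ℂ).comp (((Dg : ℂ →L[ℝ] ℂ)).comp ((mulE u2) : ℂ →L[ℝ] ℂ))‖
          ≤ ‖((mulE u1) : ℂ →L[ℝ] ℂ)‖ * (‖(Dg : ℂ →L[ℝ] ℂ)‖ * ‖((mulE u2) : ℂ →L[ℝ] ℂ)‖) :=
            le_trans (ContinuousLinearMap.opNorm_comp_le _ _)
              (by gcongr; exact ContinuousLinearMap.opNorm_comp_le _ _)
        _ ≤ ‖c1‖ * (‖(Dg : ℂ →L[ℝ] ℂ)‖ * ‖c2‖) := by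
            gcongr
            · exact mulE_norm_le u1
            · exact mulE_norm_le u2
        _ = (Real.exp (-(g z).im) * Real.exp z.im) * ‖(Dg : ℂ →L[ℝ] ℂ)‖ := by
            rw [habs1, habs2]; ring
        _ = Real.exp (z.im - (g z).im) * ‖(Dg : ℂ →L[ℝ] ℂ)‖ := by
            rw [← Real.exp_add]; ring_nf
        _ ≤ Real.exp (4 * π) * ‖(Dg : ℂ →L[ℝ] ℂ)‖ := by
            gcongr
    · rw [hDsymm]
      have hsym2 : ((mulE u2).symm : ℂ →L[ℝ] ℂ) = ((mulE u2⁻¹) : ℂ →L[ℝ] ℂ) := by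
        ext x
        show ((u2⁻¹ : ℂˣ) : ℂ) * x = ((u2⁻¹ : ℂˣ) : ℂ) * x
        rfl
      have hsym1 : ((mulE u1).symm : ℂ →L[ℝ] ℂ) = ((mulE u1⁻¹) : ℂ →L[ℝ] ℂ) := by
        ext x
        show ((u1⁻¹ : ℂˣ) : ℂ) * x = ((u1⁻¹ : ℂˣ) : ℂ) * x
        rfl
      have habsi1 : ‖((u1⁻¹ : ℂˣ) : ℂ)‖ = Real.exp ((g z).im) := by
        show ‖c1⁻¹‖ = _
        rw [norm_inv, habs1, ← Real.exp_neg, neg_neg]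
      have habsi2 : ‖((u2⁻¹ : ℂˣ) : ℂ)‖ = Real.exp (-z.im) := by
        show ‖c2⁻¹‖ = _
        rw [norm_inv, habs2, ← Real.exp_neg]
      rw [hsym1, hsym2]
      calc ‖((mulE u2⁻¹) : ℂ →L[ℝ] ℂ).comp
            (((Dg.symm : ℂ →L[ℝ] ℂ)).comp ((mulE u1⁻¹) : ℂ →L[ℝ] ℂ))‖
          ≤ ‖((mulE u2⁻¹) : ℂ →L[ℝ] ℂ)‖ * (‖(Dg.symm : ℂ →L[ℝ] ℂ)‖ * ‖((mulE u1⁻¹) : ℂ →L[ℝ] ℂ)‖) :=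
            le_trans (ContinuousLinearMap.opNorm_comp_le _ _)
              (by gcongr; exact ContinuousLinearMap.opNorm_comp_le _ _)
        _ ≤ ‖((u2⁻¹ : ℂˣ) : ℂ)‖ * (‖(Dg.symm : ℂ →L[ℝ] ℂ)‖ * ‖((u1⁻¹ : ℂˣ) : ℂ)‖) := by
            gcongr
            · exact mulE_norm_le _
            · exact mulE_norm_le _
        _ = (Real.exp (-z.im) * Real.exp ((g z).im)) * ‖(Dg.symm : ℂ →L[ℝ] ℂ)‖ := by
            rw [habsi1, habsi2]; ring
        _ = Real.exp ((g z).im - z.im) * ‖(Dg.symm : ℂ →L[ℝ] ℂ)‖ := by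
            rw [← Real.exp_add]; ring_nf
        _ ≤ Real.exp (4 * π) * ‖(Dg.symm : ℂ →L[ℝ] ℂ)‖ := by
            gcongr
end

section
/- Let Ω ⊂ ℂ be a nonempty open set, M ≥ 0, and let G be a continuous map from the closure of Ω to ℂ which is differentiable on Ω with ‖DG(z)‖ ≤ M for all z ∈ Ω, and whose restriction to ∂Ω satisfies |G(c) − G(d)| ≤ M·|c−d| for all c, d ∈ ∂Ω. Then G is M-Lipschitz on the closure of Ω: |G(a) − G(b)| ≤ M·|a−b| for all a, b in the closure of Ω. -/
open Complex Metric Set AffineMap Filter Topology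

/-- Key lemma: if the open part of the segment from `u` to `v` lies in `Ω`, the
Lipschitz bound holds between `u` and `v`. -/
lemma key_seg (Ω : Set ℂ) (M : ℝ) (hM : 0 ≤ M) (G : ℂ → ℂ)
    (hcont : ContinuousOn G (closure Ω))
    (hdiff : ∀ z ∈ Ω, DifferentiableAt ℝ G z ∧ ‖fderiv ℝ G z‖ ≤ M)
    {u v : ℂ} (hu : u ∈ closure Ω) (hv : v ∈ closure Ω)
    (hseg : ∀ t ∈ Ioo (0:ℝ) 1, lineMap u v t ∈ Ω) :
    dist (G u) (G v) ≤ M * dist u v := by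
  -- the bound at interior parameters ε, 1-ε
  have step : ∀ ε ∈ Ioo (0:ℝ) (1/2:ℝ),
      dist (G (lineMap u v ε)) (G (lineMap u v (1-ε))) ≤ M * dist u v := by
    intro ε hε
    set p : ℂ := lineMap u v ε with hp
    set q : ℂ := lineMap u v (1-ε) with hq
    have hpq : ∀ s : ℝ, lineMap p q s = lineMap u v (ε + s * (1 - 2*ε)) := by
      intro s
      simp only [hp, hq, lineMap_apply, vsub_eq_sub, vadd_eq_add, smul_eq_mul,
        Complex.real_smul]
      push_cast
      ring
    have hsub : segment ℝ p q ⊆ Ω := by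
      intro z hz
      rw [segment_eq_image_lineMap] at hz
      obtain ⟨s, hs, rfl⟩ := hz
      rw [hpq s]
      refine hseg _ ⟨?_, ?_⟩
      · nlinarith [hs.1, hs.2, hε.1, hε.2]
      · nlinarith [hs.1, hs.2, hε.1, hε.2]
    have hps : p ∈ segment ℝ p q := left_mem_segment ℝ p q
    have hqs : q ∈ segment ℝ p q := right_mem_segment ℝ p q
    have h1 : ‖G q - G p‖ ≤ M * ‖q - p‖ := by
      refine (convex_segment p q).norm_image_sub_le_of_norm_hasFDerivWithin_le
        (f' := fun z => fderiv ℝ G z) (fun x hx => ?_) (fun x hx => (hdiff x (hsub hx)).2)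
        hps hqs
      exact ((hdiff x (hsub hx)).1.hasFDerivAt).hasFDerivWithinAt
    have h2 : dist p q ≤ dist u v := by
      rw [hp, hq, dist_lineMap_lineMap]
      have : dist ε (1-ε) ≤ 1 := by
        rw [Real.dist_eq]
        rw [abs_le]; constructor <;> nlinarith [hε.1, hε.2]
      calc dist ε (1-ε) * dist u v ≤ 1 * dist u v :=
            mul_le_mul_of_nonneg_right this dist_nonneg
        _ = dist u v := one_mul _
    calc dist (G p) (G q) = ‖G q - G p‖ := by rw [dist_eq_norm']
      _ ≤ M * ‖q - p‖ := h1
      _ = M * dist p q := by rw [dist_eq_norm']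
      _ ≤ M * dist u v := mul_le_mul_of_nonneg_left h2 hM
  -- take the limit as ε → 0⁺
  have hIoo : Ioo (0:ℝ) (1/2) ∈ 𝓝[>] (0:ℝ) :=
    Ioo_mem_nhdsGT_of_mem ⟨le_refl _, by norm_num⟩
  have tp : Tendsto (fun ε : ℝ => lineMap u v ε) (𝓝[>] (0:ℝ)) (𝓝[closure Ω] u) := by
    refine tendsto_nhdsWithin_of_tendsto_nhds_of_eventually_within _ ?_ ?_
    · have h0 : Tendsto (fun ε : ℝ => lineMap u v ε) (𝓝 (0:ℝ)) (𝓝 u) := by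
        have := (AffineMap.lineMap_continuous (R := ℝ) (p := u) (q := v)).tendsto 0
        simpa using this
      exact h0.mono_left nhdsWithin_le_nhds
    · filter_upwards [hIoo] with ε hε
      exact subset_closure (hseg ε ⟨hε.1, by linarith [hε.2]⟩)
  have tq : Tendsto (fun ε : ℝ => lineMap u v (1-ε)) (𝓝[>] (0:ℝ)) (𝓝[closure Ω] v) := by
    refine tendsto_nhdsWithin_of_tendsto_nhds_of_eventually_within _ ?_ ?_
    · have h1 : Tendsto (fun ε : ℝ => 1 - ε) (𝓝[>] (0:ℝ)) (𝓝 (1:ℝ)) := by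
        have h2 : Tendsto (fun ε : ℝ => 1 - ε) (𝓝 (0:ℝ)) (𝓝 ((1:ℝ) - 0)) :=
          tendsto_const_nhds.sub tendsto_id
        rw [sub_zero] at h2
        exact h2.mono_left nhdsWithin_le_nhds
      have := ((AffineMap.lineMap_continuous (R := ℝ) (p := u) (q := v)).tendsto 1).comp h1
      rw [AffineMap.lineMap_apply_one] at this; exact this
    · filter_upwards [hIoo] with ε hε
      exact subset_closure (hseg _ ⟨by linarith [hε.2], by linarith [hε.1]⟩)
  have tG : Tendsto (fun ε : ℝ => dist (G (lineMap u v ε)) (G (lineMap u v (1-ε))))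
      (𝓝[>] (0:ℝ)) (𝓝 (dist (G u) (G v))) :=
    Tendsto.dist ((hcont u hu).tendsto.comp tp) ((hcont v hv).tendsto.comp tq)
  refine le_of_tendsto tG ?_
  filter_upwards [hIoo] with ε hε using step ε hε

/-- **Lipschitz bound on a non-convex closure.** Let `Ω ⊆ ℂ` be a nonempty open set and
`M ≥ 0`.  If `G` is continuous on `closure Ω`, differentiable on `Ω` with `‖DG(z)‖ ≤ M`,
and `M`-Lipschitz on the boundary `∂Ω`, then `G` is `M`-Lipschitz on `closure Ω`. -/
theorem lipschitz_on_closure_of_deriv_and_boundary (Ω : Set ℂ) (hΩ : IsOpen Ω)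
    (hne : Ω.Nonempty) (M : ℝ) (hM : 0 ≤ M) (G : ℂ → ℂ)
    (hcont : ContinuousOn G (closure Ω))
    (hdiff : ∀ z ∈ Ω, DifferentiableAt ℝ G z ∧ ‖fderiv ℝ G z‖ ≤ M)
    (hbdry : ∀ c ∈ frontier Ω, ∀ d ∈ frontier Ω, dist (G c) (G d) ≤ M * dist c d) :
    ∀ a ∈ closure Ω, ∀ b ∈ closure Ω, dist (G a) (G b) ≤ M * dist a b := by
  intro a ha b hb
  by_cases hall : ∀ t ∈ Ioo (0:ℝ) 1, lineMap a b t ∈ Ω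
  · exact key_seg Ω M hM G hcont hdiff ha hb hall
  -- the segment meets the complement of Ω
  push_neg at hall
  obtain ⟨t0, ht0, ht0Ω⟩ := hall
  set K : Set ℝ := {t ∈ Icc (0:ℝ) 1 | lineMap a b t ∉ Ω} with hK
  have hKne : K.Nonempty := ⟨t0, ⟨Ioo_subset_Icc_self ht0, ht0Ω⟩⟩
  have hKclosed : IsClosed K := by
    have : K = Icc (0:ℝ) 1 ∩ (⇑(lineMap a b) ⁻¹' Ωᶜ) := by
      ext t; simp [hK, mem_preimage]
    rw [this]
    exact isClosed_Icc.inter (hΩ.isClosed_compl.preimage (AffineMap.lineMap_continuous))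
  have hKcompact : IsCompact K := by
    refine IsCompact.of_isClosed_subset isCompact_Icc hKclosed (fun t ht => ht.1)
  set t1 := sInf K with ht1def
  set t2 := sSup K with ht2def
  have ht1K : t1 ∈ K := hKcompact.sInf_mem hKne
  have ht2K : t2 ∈ K := hKcompact.sSup_mem hKne
  have ht12 : t1 ≤ t2 := csInf_le_csSup hKne hKcompact.bddBelow hKcompact.bddAbove
  set c : ℂ := lineMap a b t1 with hc
  set d : ℂ := lineMap a b t2 with hd
  -- points below t1 (in (0,1)) lie in Ω, similarly above t2
  have hlow : ∀ t, 0 ≤ t → t < t1 → lineMap a b t ∈ Ω := by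
    intro t h0 hlt
    by_contra hnot
    have : t ∈ K := ⟨⟨h0, le_trans hlt.le ht1K.1.2⟩, hnot⟩
    exact absurd (csInf_le hKcompact.bddBelow this) (not_le.mpr hlt)
  have hhigh : ∀ t, t ≤ 1 → t2 < t → lineMap a b t ∈ Ω := by
    intro t h1 hlt
    by_contra hnot
    have : t ∈ K := ⟨⟨le_trans ht2K.1.1 hlt.le, h1⟩, hnot⟩
    exact absurd (le_csSup hKcompact.bddAbove this) (not_le.mpr hlt)
  -- c and d are in the closure
  have hcclos : c ∈ closure Ω := by
    rcases eq_or_lt_of_le ht1K.1.1 with heq | hpos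
    · -- t1 = 0 : then c ∉ Ω but c = a ∈ closure Ω
      rw [hc, ← heq]
      simpa using ha
    · have hne' : (𝓝[<] t1).NeBot := nhdsLT_neBot t1
      refine mem_closure_of_tendsto (f := fun t : ℝ => lineMap a b t) (b := 𝓝[<] t1) ?_ ?_
      · exact ((AffineMap.lineMap_continuous).tendsto t1).mono_left nhdsWithin_le_nhds
      · filter_upwards [Ioo_mem_nhdsLT_of_mem (⟨hpos, le_refl _⟩ : t1 ∈ Ioc 0 t1)]
          with t ht
        exact hlow t ht.1.le ht.2
  have hdclos : d ∈ closure Ω := by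
    rcases eq_or_lt_of_le ht2K.1.2 with heq | hlt
    · rw [hd, heq]; simpa using hb
    · have hne' : (𝓝[>] t2).NeBot := nhdsGT_neBot t2
      refine mem_closure_of_tendsto (f := fun t : ℝ => lineMap a b t) (b := 𝓝[>] t2) ?_ ?_
      · exact ((AffineMap.lineMap_continuous).tendsto t2).mono_left nhdsWithin_le_nhds
      · filter_upwards [Ioo_mem_nhdsGT_of_mem (⟨le_refl _, hlt⟩ : t2 ∈ Ico t2 1)]
          with t ht
        exact hhigh t ht.2.le ht.1
  -- c, d are frontier points
  have hfr : frontier Ω = closure Ω \ Ω := hΩ.frontier_eq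
  have hcfr : c ∈ frontier Ω := by rw [hfr]; exact ⟨hcclos, ht1K.2⟩
  have hdfr : d ∈ frontier Ω := by rw [hfr]; exact ⟨hdclos, ht2K.2⟩
  -- reparametrization identities
  have hlm : ∀ s u : ℝ, lineMap (lineMap a b u) b s = lineMap a b (u + s * (1 - u)) := by
    intro s u
    simp only [lineMap_apply, vsub_eq_sub, vadd_eq_add, Complex.real_smul]
    push_cast; ring
  have hlm' : ∀ s u : ℝ, lineMap a (lineMap a b u) s = lineMap a b (s * u) := by
    intro s u
    simp only [lineMap_apply, vsub_eq_sub, vadd_eq_add, Complex.real_smul]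
    push_cast; ring
  -- the three estimates
  have hac : dist (G a) (G c) ≤ M * dist a c := by
    rcases eq_or_lt_of_le ht1K.1.1 with heq | hpos
    · have : c = a := by rw [hc, ← heq]; simp
      rw [this]; simp [mul_nonneg hM dist_nonneg]
    · refine key_seg Ω M hM G hcont hdiff ha hcclos ?_
      intro t ht
      rw [hc, hlm' t t1]
      exact hlow (t * t1) (mul_nonneg ht.1.le hpos.le)
        (by nlinarith [ht.2, hpos])
  have hdb : dist (G d) (G b) ≤ M * dist d b := by
    rcases eq_or_lt_of_le ht2K.1.2 with heq | hlt
    · have : d = b := by rw [hd, heq]; simp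
      rw [this]; simp [mul_nonneg hM dist_nonneg]
    · refine key_seg Ω M hM G hcont hdiff hdclos hb ?_
      intro t ht
      rw [hd, hlm t t2]
      refine hhigh _ (by nlinarith [ht.1, ht.2, hlt]) (by nlinarith [ht.1, ht.2, hlt])
  have hcd : dist (G c) (G d) ≤ M * dist c d := hbdry c hcfr d hdfr
  -- distances add up along the segment
  have hdistac : dist a c = t1 * dist a b := by
    rw [hc]
    have : a = lineMap a b (0:ℝ) := by simp
    nth_rewrite 1 [this]
    rw [dist_lineMap_lineMap, Real.dist_eq, abs_of_nonpos (by linarith [ht1K.1.1])]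
    ring
  have hdistcd : dist c d = (t2 - t1) * dist a b := by
    rw [hc, hd, dist_lineMap_lineMap, Real.dist_eq, abs_of_nonpos (by linarith)]
    ring
  have hdistdb : dist d b = (1 - t2) * dist a b := by
    rw [hd]
    have : b = lineMap a b (1:ℝ) := by simp
    nth_rewrite 2 [this]
    rw [dist_lineMap_lineMap, Real.dist_eq, abs_of_nonpos (by linarith [ht2K.1.2])]
    ring
  calc dist (G a) (G b) ≤ dist (G a) (G c) + dist (G c) (G d) + dist (G d) (G b) :=
        dist_triangle4 _ _ _ _
    _ ≤ M * dist a c + M * dist c d + M * dist d b := by linarith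
    _ = M * dist a b := by rw [hdistac, hdistcd, hdistdb]; ring
end

section
/- For every constant C < √2 there exists an injective 1-Lipschitz map f : 𝕋 → ℂ such that every homeomorphism F from the closed unit disk onto its image in ℂ extending f satisfies Lip(F) > C. Hence any universal constant C with the property that every Lipschitz embedding f : 𝕋 → ℂ admits a homeomorphic extension F to the closed disk with Lip(F) ≤ C·Lip(f) must satisfy C ≥ √2. -/
open Complex Metric Set Real

/-
The proof follows the crescent example: `f = fmap a` folds the part of the unit circle
right of the line `x = a` across that line.  If `F` is a continuous injective extension
with Lipschitz constant `C' < √2`, the parallelogram law forces `|F 0|² ≤ C'² - 1`,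
which places `F 0` strictly inside the unit circle, off the thin crescent.  A hand-rolled
discrete winding-number argument (homotopy invariance of a discrete total-argument sum)
shows that `F` attains the value `a - 1`, which lies inside the crescent.  Since the image
of the open ball is connected and (by injectivity) disjoint from the crescent boundary
curve, this contradicts connectedness: the crescent interior and the complement of its
closure are disjoint open sets separated by the curve.
-/

noncomputable section
namespace ExtSqrtTwoAux


/-! ### Elementary `arg` lemmas -/

lemma re_pos_of_norm_sub_one_lt {q : ℂ} (h : ‖q - 1‖ < 1) : 0 < q.re := by
  have h0 : (0:ℝ) ≤ ‖q - 1‖ := norm_nonneg _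
  have hs : ‖q - 1‖^2 < 1 := by nlinarith
  have he : ‖q - 1‖^2 = Complex.normSq (q - 1) := by
    rw [Complex.sq_norm]
  rw [he, Complex.normSq_apply, Complex.sub_re, Complex.sub_im, Complex.one_re,
    Complex.one_im] at hs
  nlinarith

lemma abs_arg_lt_half {q : ℂ} (h : ‖q - 1‖ < 1) : |Complex.arg q| < π/2 :=
  Complex.abs_arg_lt_pi_div_two_iff.mpr (Or.inl (re_pos_of_norm_sub_one_lt h))

lemma arg_div_eq {u v : ℂ} (hu : u ≠ 0) (hv : v ≠ 0) (h : |Complex.arg u - Complex.arg v| < π) :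
    Complex.arg (u / v) = Complex.arg u - Complex.arg v := by
  have h1 : ((Complex.arg (u/v) : ℝ) : Real.Angle)
      = ((Complex.arg u - Complex.arg v : ℝ) : Real.Angle) := by
    rw [Complex.arg_div_coe_angle hu hv, Real.Angle.coe_sub]
  rw [Real.Angle.angle_eq_iff_two_pi_dvd_sub] at h1
  obtain ⟨k, hk⟩ := h1
  have hb1 := Complex.arg_le_pi (u/v)
  have hb2 := Complex.neg_pi_lt_arg (u/v)
  have hd := abs_lt.mp h
  have hπ := Real.pi_pos
  have hkabs : |(k:ℝ)| < 1 := by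
    rw [abs_lt]
    constructor <;> nlinarith
  have hk0 : k = 0 := by
    by_contra hne
    have : (1:ℝ) ≤ |(k:ℝ)| := by
      have := Int.one_le_abs hne
      calc (1:ℝ) = ((1:ℤ):ℝ) := by norm_num
      _ ≤ ((|k|:ℤ):ℝ) := by exact_mod_cast this
      _ = |(k:ℝ)| := by push_cast; ring
    linarith
  rw [hk0] at hk
  push_cast at hk
  linarith

lemma key {u1 v1 u2 v2 : ℂ}
    (h1 : ‖v1 - u1‖ < ‖u1‖) (h2 : ‖v2 - u2‖ < ‖u2‖)
    (h3 : ‖u2 - u1‖ < ‖u1‖) (h4 : ‖v2 - v1‖ < ‖v1‖) :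
    Complex.arg (v2/u2) - Complex.arg (v1/u1)
      = Complex.arg (v2/v1) - Complex.arg (u2/u1) := by
  have hu1 : u1 ≠ 0 := by
    rintro rfl; rw [sub_zero, norm_zero] at h1; exact (norm_nonneg v1).not_gt h1
  have hu2 : u2 ≠ 0 := by
    rintro rfl; rw [sub_zero, norm_zero] at h2; exact (norm_nonneg v2).not_gt h2
  have hv1 : v1 ≠ 0 := by
    rintro rfl; rw [sub_zero, norm_zero] at h4; exact (norm_nonneg v2).not_gt h4
  have hv2 : v2 ≠ 0 := by
    rintro rfl
    rw [zero_sub, norm_neg] at h4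
    exact lt_irrefl _ h4
  have ratio_small : ∀ (x y : ℂ), y ≠ 0 → ‖x - y‖ < ‖y‖ → ‖x/y - 1‖ < 1 := by
    intro x y hy hxy
    have : x/y - 1 = (x - y)/y := by field_simp
    rw [this, norm_div, div_lt_one (norm_pos_iff.mpr hy)]
    exact hxy
  have hr1 := ratio_small v1 u1 hu1 h1
  have hr2 := ratio_small v2 u2 hu2 h2
  have hr3 := ratio_small u2 u1 hu1 h3
  have hr4 := ratio_small v2 v1 hv1 h4
  have hb1 := abs_lt.mp (abs_arg_lt_half hr1)
  have hb2 := abs_lt.mp (abs_arg_lt_half hr2)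
  have hb3 := abs_lt.mp (abs_arg_lt_half hr3)
  have hb4 := abs_lt.mp (abs_arg_lt_half hr4)
  have hq1 : v1/u1 ≠ 0 := div_ne_zero hv1 hu1
  have hq2 : v2/u2 ≠ 0 := div_ne_zero hv2 hu2
  have hq3 : u2/u1 ≠ 0 := div_ne_zero hu2 hu1
  have hq4 : v2/v1 ≠ 0 := div_ne_zero hv2 hv1
  have e1 : Complex.arg ((v2/u2)/(v1/u1)) = Complex.arg (v2/u2) - Complex.arg (v1/u1) :=
    arg_div_eq hq2 hq1 (abs_lt.mpr ⟨by linarith, by linarith⟩)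
  have e2 : Complex.arg ((v2/v1)/(u2/u1)) = Complex.arg (v2/v1) - Complex.arg (u2/u1) :=
    arg_div_eq hq4 hq3 (abs_lt.mpr ⟨by linarith, by linarith⟩)
  have hratio : (v2/u2)/(v1/u1) = (v2/v1)/(u2/u1) := by
    field_simp
  rw [← e1, hratio, e2]

/-! ### A discrete winding sum and its homotopy invariance -/

/-- Discrete total winding sum along the grid `2πk/n`. -/
def A (n : ℕ) (ψ : ℝ → ℂ) : ℝ :=
  ∑ k ∈ Finset.range n,
    Complex.arg (ψ (2*π*((k+1 : ℕ) : ℝ)/n) / ψ (2*π*((k : ℕ) : ℝ)/n))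

lemma A_congr {n : ℕ} {ψ ψ' : ℝ → ℂ} (h : ∀ t, ψ t = ψ' t) : A n ψ = A n ψ' := by
  unfold A
  exact Finset.sum_congr rfl (fun k _ => by rw [h, h])

lemma A_const (n : ℕ) (c : ℂ) (hc : c ≠ 0) : A n (fun _ => c) = 0 := by
  unfold A
  simp [div_self hc, Complex.arg_one]

lemma A_circle {n : ℕ} (hn : 3 ≤ n) :
    A n (fun t : ℝ => Complex.exp ((t : ℂ) * Complex.I)) = 2*π := by
  have hπ := Real.pi_pos
  have hn0 : (n:ℝ) ≠ 0 := Nat.cast_ne_zero.mpr (by omega)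
  have hn3 : (3:ℝ) ≤ (n:ℝ) := by exact_mod_cast hn
  have hkey : ∀ k ∈ Finset.range n,
      Complex.arg (Complex.exp ((2*π*((k+1 : ℕ) : ℝ)/n : ℝ) * Complex.I)
        / Complex.exp ((2*π*((k : ℕ) : ℝ)/n : ℝ) * Complex.I)) = 2*π/n := by
    intro k _
    rw [← Complex.exp_sub]
    have harg : ((2*π*((k+1 : ℕ) : ℝ)/n : ℝ) : ℂ) * Complex.I
        - ((2*π*((k : ℕ) : ℝ)/n : ℝ) : ℂ) * Complex.I = ((2*π/n : ℝ) : ℂ) * Complex.I := by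
      push_cast
      field_simp
      ring
    rw [harg, Complex.exp_mul_I]
    have hnr : (0:ℝ) < n := by positivity
    have hpos : 0 < 2*π/n := by positivity
    refine Complex.arg_cos_add_sin_mul_I ⟨by linarith, ?_⟩
    rw [div_le_iff₀ hnr]
    nlinarith
  unfold A
  rw [Finset.sum_congr rfl hkey]
  rw [Finset.sum_const, Finset.card_range, nsmul_eq_mul]
  field_simp

lemma step (z w : ℕ → ℂ) (n : ℕ)
    (hz : ∀ k < n, ‖z (k+1) - z k‖ < ‖z k‖)
    (hw : ∀ k < n, ‖w (k+1) - w k‖ < ‖w k‖)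
    (hzw : ∀ k ≤ n, ‖w k - z k‖ < ‖z k‖) :
    (∑ k ∈ Finset.range n, Complex.arg (w (k+1) / w k))
      - ∑ k ∈ Finset.range n, Complex.arg (z (k+1) / z k)
    = Complex.arg (w n / z n) - Complex.arg (w 0 / z 0) := by
  rw [← Finset.sum_sub_distrib]
  have hcong : ∀ k ∈ Finset.range n,
      Complex.arg (w (k+1) / w k) - Complex.arg (z (k+1) / z k)
        = Complex.arg (w (k+1) / z (k+1)) - Complex.arg (w k / z k) := by
    intro k hk
    rw [Finset.mem_range] at hk
    exact key (hz k hk) (hw k hk) (hzw k hk.le) (hzw (k+1) hk)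
  rw [Finset.sum_congr rfl hcong]
  exact Finset.sum_range_sub (fun k => Complex.arg (w k / z k)) n

/-- Homotopy invariance of the discrete winding sum. -/
lemma chain (H : ℝ → ℝ → ℂ)
    (hc : ContinuousOn (fun p : ℝ × ℝ => H p.1 p.2) (Icc 0 1 ×ˢ Icc 0 (2*π)))
    (hne : ∀ u ∈ Icc (0:ℝ) 1, ∀ t ∈ Icc (0:ℝ) (2*π), H u t ≠ 0)
    (hloop : ∀ u ∈ Icc (0:ℝ) 1, H u (2*π) = H u 0) :
    ∃ N : ℕ, ∀ n, N ≤ n → A n (H 0) = A n (H 1) := by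
  have hπ := Real.pi_pos
  have hS : IsCompact (Icc (0:ℝ) 1 ×ˢ Icc (0:ℝ) (2*π)) := isCompact_Icc.prod isCompact_Icc
  have hSne : (Icc (0:ℝ) 1 ×ˢ Icc (0:ℝ) (2*π)).Nonempty := by
    refine ⟨(0, 0), ?_⟩
    constructor
    · exact ⟨le_refl _, zero_le_one⟩
    · exact ⟨le_refl _, by positivity⟩
  obtain ⟨p₀, hp₀S, hp₀min⟩ := hS.exists_isMinOn hSne (hc.norm)
  set m := ‖H p₀.1 p₀.2‖ with hm_def
  have hp₀S' := Set.mem_prod.mp hp₀S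
  have hm : 0 < m := by
    rw [hm_def, norm_pos_iff]
    exact hne p₀.1 hp₀S'.1 p₀.2 hp₀S'.2
  have hmin : ∀ u ∈ Icc (0:ℝ) 1, ∀ t ∈ Icc (0:ℝ) (2*π), m ≤ ‖H u t‖ := by
    intro u hu t ht
    exact isMinOn_iff.mp hp₀min ((u, t) : ℝ × ℝ) (Set.mem_prod.mpr ⟨hu, ht⟩)
  have huc := hS.uniformContinuousOn_of_continuous hc
  rw [Metric.uniformContinuousOn_iff] at huc
  obtain ⟨δ, hδ, hd⟩ := huc m hm
  obtain ⟨M, hM⟩ := exists_nat_one_div_lt hδ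
  obtain ⟨N', hN'⟩ := exists_nat_gt (2*π/δ)
  refine ⟨N' + 1, fun n hn => ?_⟩
  have hn0 : 0 < n := by omega
  have hnr : (0:ℝ) < n := by exact_mod_cast hn0
  have hstep : 2*π/n < δ := by
    have h1 : 2*π/δ < (n:ℝ) := lt_of_lt_of_le hN' (by exact_mod_cast Nat.le_of_succ_le hn)
    rw [div_lt_iff₀ hnr]
    calc 2*π = (2*π/δ) * δ := by field_simp
    _ < n * δ := by exact mul_lt_mul_of_pos_right h1 hδ
    _ = δ * n := by ring
  have htmem : ∀ k : ℕ, k ≤ n → (2*π*(k:ℝ)/n) ∈ Icc (0:ℝ) (2*π) := by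
    intro k hk
    constructor
    · positivity
    · rw [div_le_iff₀ hnr]
      have : (k:ℝ) ≤ (n:ℝ) := by exact_mod_cast hk
      nlinarith
  have pair : ∀ u ∈ Icc (0:ℝ) 1, ∀ u' ∈ Icc (0:ℝ) 1, dist u' u < δ →
      A n (H u) = A n (H u') := by
    intro u hu u' hu' hdu
    have hgrid : ∀ (v : ℝ), v ∈ Icc (0:ℝ) 1 → ∀ k < n,
        ‖H v (2*π*((k+1:ℕ):ℝ)/n) - H v (2*π*((k:ℕ):ℝ)/n)‖ < ‖H v (2*π*((k:ℕ):ℝ)/n)‖ := by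
      intro v hv k hk
      have ht1 := htmem (k+1) hk
      have ht0 := htmem k hk.le
      have hdista : dist ((v, 2*π*((k+1:ℕ):ℝ)/n) : ℝ × ℝ) ((v, 2*π*((k:ℕ):ℝ)/n) : ℝ × ℝ) < δ := by
        rw [Prod.dist_eq]
        simp only [dist_self]
        have hdt : dist (2*π*((k+1:ℕ):ℝ)/n) (2*π*((k:ℕ):ℝ)/n) = 2*π/n := by
          rw [Real.dist_eq]
          have : 2*π*((k+1:ℕ):ℝ)/n - 2*π*((k:ℕ):ℝ)/n = 2*π/n := by
            push_cast
            field_simp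
            ring
          rw [this, abs_of_pos (by positivity)]
        rw [hdt]
        simp only [max_eq_right (le_of_lt (by positivity : (0:ℝ) < 2*π/n))]
        exact hstep
      have := hd ((v, 2*π*((k+1:ℕ):ℝ)/n)) (Set.mem_prod.mpr ⟨hv, ht1⟩)
        ((v, 2*π*((k:ℕ):ℝ)/n)) (Set.mem_prod.mpr ⟨hv, ht0⟩) hdista
      rw [dist_eq_norm] at this
      exact lt_of_lt_of_le this (hmin v hv _ ht0)
    have hzw : ∀ k ≤ n, ‖H u' (2*π*((k:ℕ):ℝ)/n) - H u (2*π*((k:ℕ):ℝ)/n)‖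
        < ‖H u (2*π*((k:ℕ):ℝ)/n)‖ := by
      intro k hk
      have ht0 := htmem k hk
      have hdista : dist ((u', 2*π*((k:ℕ):ℝ)/n) : ℝ × ℝ) ((u, 2*π*((k:ℕ):ℝ)/n) : ℝ × ℝ) < δ := by
        rw [Prod.dist_eq]
        simp only [dist_self]
        simpa [max_eq_left dist_nonneg] using hdu
      have := hd ((u', 2*π*((k:ℕ):ℝ)/n)) (Set.mem_prod.mpr ⟨hu', ht0⟩)
        ((u, 2*π*((k:ℕ):ℝ)/n)) (Set.mem_prod.mpr ⟨hu, ht0⟩) hdista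
      rw [dist_eq_norm] at this
      exact lt_of_lt_of_le this (hmin u hu _ ht0)
    have hstep' := step (fun k : ℕ => H u (2*π*(k:ℝ)/n)) (fun k : ℕ => H u' (2*π*(k:ℝ)/n)) n
      (hgrid u hu) (hgrid u' hu') hzw
    have hTn : 2*π*((n:ℕ):ℝ)/n = 2*π := by field_simp
    have hT0 : 2*π*((0:ℕ):ℝ)/n = 0 := by simp
    simp only [hTn, hT0] at hstep'
    rw [hloop u hu, hloop u' hu', sub_self] at hstep'
    have : A n (H u') - A n (H u) = 0 := hstep'
    linarith
  have hM1 : (0:ℝ) < (M:ℝ)+1 := by positivity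
  have main : ∀ j : ℕ, j ≤ M+1 → A n (H ((j:ℝ)/((M:ℝ)+1))) = A n (H 0) := by
    intro j
    induction j with
    | zero => intro _; norm_num
    | succ j ih =>
      intro hj
      have hj' : j ≤ M+1 := by omega
      rw [← ih hj']
      have hmem : ∀ i : ℕ, i ≤ M+1 → ((i:ℝ)/((M:ℝ)+1)) ∈ Icc (0:ℝ) 1 := by
        intro i hi
        constructor
        · positivity
        · rw [div_le_one hM1]
          have : (i:ℝ) ≤ ((M:ℕ):ℝ)+1 := by exact_mod_cast hi
          linarith
      have hdist : dist (((j+1:ℕ):ℝ)/((M:ℝ)+1)) ((j:ℝ)/((M:ℝ)+1)) < δ := by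
        rw [Real.dist_eq]
        have : ((j+1:ℕ):ℝ)/((M:ℝ)+1) - (j:ℝ)/((M:ℝ)+1) = 1/((M:ℝ)+1) := by
          push_cast
          field_simp
          ring
        rw [this, abs_of_pos (by positivity)]
        exact hM
      exact (pair ((j:ℝ)/((M:ℝ)+1)) (hmem j hj') (((j+1:ℕ):ℝ)/((M:ℝ)+1)) (hmem (j+1) hj) hdist).symm
  have hone := main (M+1) le_rfl
  have hcast : (((M+1:ℕ)):ℝ)/((M:ℝ)+1) = 1 := by
    push_cast
    field_simp
  rw [hcast] at hone
  exact hone.symm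

/-! ### The crescent boundary map -/

/-- The crescent boundary map: fold the part of the plane right of `x = a` across it. -/
def fmap (a : ℝ) (z : ℂ) : ℂ := ((min z.re (2*a - z.re) : ℝ) : ℂ) + (z.im : ℂ) * Complex.I

lemma fmap_re (a : ℝ) (z : ℂ) : (fmap a z).re = min z.re (2*a - z.re) := by
  simp [fmap]

lemma fmap_im (a : ℝ) (z : ℂ) : (fmap a z).im = z.im := by
  simp [fmap]

lemma fmap_cont (a : ℝ) : Continuous (fmap a) := by
  unfold fmap
  apply Continuous.add
  · exact Complex.continuous_ofReal.comp (Complex.continuous_re.min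
      (continuous_const.sub Complex.continuous_re))
  · exact (Complex.continuous_ofReal.comp Complex.continuous_im).mul continuous_const

lemma exp_mem_sphere (t : ℝ) : Complex.exp ((t:ℂ) * Complex.I) ∈ sphere (0:ℂ) 1 := by
  rw [mem_sphere_zero_iff_norm]
  exact Complex.norm_exp_ofReal_mul_I t

lemma normSq_exp (t : ℝ) : (Complex.exp ((t:ℂ) * Complex.I)).re ^ 2
    + (Complex.exp ((t:ℂ) * Complex.I)).im ^ 2 = 1 := by
  have h := Complex.norm_exp_ofReal_mul_I t
  have h2 := Complex.sq_norm (Complex.exp ((t:ℂ) * Complex.I))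
  rw [h] at h2
  rw [Complex.normSq_apply] at h2
  nlinarith

/-- **Degree argument**: any continuous map on the closed disk agreeing with `fmap a` on
the circle attains the value `a - 1`. -/
lemma deg (a : ℝ) (ha : 0 < a) (ha2 : a ≤ 1/16) (φ : ℂ → ℂ)
    (hφ : ContinuousOn φ (closedBall 0 1))
    (heq : EqOn φ (fmap a) (sphere 0 1)) :
    ∃ z ∈ closedBall (0:ℂ) 1, φ z = ((a - 1 : ℝ) : ℂ) := by
  by_contra hcon
  push_neg at hcon
  set w0 : ℂ := ((a - 1 : ℝ) : ℂ) with hw0_def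
  have hπ := Real.pi_pos
  have hexp2π : Complex.exp (((2*π : ℝ):ℂ) * Complex.I)
      = Complex.exp (((0:ℝ):ℂ) * Complex.I) := by
    push_cast
    rw [Complex.exp_two_pi_mul_I]
    simp
  -- homotopy 1 : from constant loop to the boundary loop
  set H₁ : ℝ → ℝ → ℂ := fun u t => φ ((u:ℂ) * Complex.exp ((t:ℂ) * Complex.I)) - w0 with hH₁
  have hmem₁ : ∀ u ∈ Icc (0:ℝ) 1, ∀ t : ℝ,
      ((u:ℂ) * Complex.exp ((t:ℂ) * Complex.I)) ∈ closedBall (0:ℂ) 1 := by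
    intro u hu t
    rw [mem_closedBall, dist_zero_right, norm_mul,
      Complex.norm_exp_ofReal_mul_I, mul_one, Complex.norm_real, Real.norm_eq_abs]
    rw [_root_.abs_of_nonneg hu.1]
    exact hu.2
  have hc₁ : ContinuousOn (fun p : ℝ × ℝ => H₁ p.1 p.2) (Icc 0 1 ×ˢ Icc 0 (2*π)) := by
    apply ContinuousOn.sub _ continuousOn_const
    apply hφ.comp
    · apply Continuous.continuousOn
      exact (Complex.continuous_ofReal.comp continuous_fst).mul
        (Complex.continuous_exp.comp ((Complex.continuous_ofReal.comp continuous_snd).mul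
          continuous_const))
    · intro p hp
      exact hmem₁ p.1 (Set.mem_prod.mp hp).1 p.2
  have hne₁ : ∀ u ∈ Icc (0:ℝ) 1, ∀ t ∈ Icc (0:ℝ) (2*π), H₁ u t ≠ 0 := by
    intro u hu t _
    exact sub_ne_zero.mpr (hcon _ (hmem₁ u hu t))
  have hloop₁ : ∀ u ∈ Icc (0:ℝ) 1, H₁ u (2*π) = H₁ u 0 := by
    intro u _
    simp only [hH₁, hexp2π]
  obtain ⟨N₁, hN₁⟩ := chain H₁ hc₁ hne₁ hloop₁
  -- homotopy 2 : from the boundary loop to the circle-minus-w0 loop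
  set H₂ : ℝ → ℝ → ℂ := fun u t => (1 - (u:ℂ)) * fmap a (Complex.exp ((t:ℂ) * Complex.I))
      + (u:ℂ) * Complex.exp ((t:ℂ) * Complex.I) - w0 with hH₂
  have hc₂ : ContinuousOn (fun p : ℝ × ℝ => H₂ p.1 p.2) (Icc 0 1 ×ˢ Icc 0 (2*π)) := by
    apply Continuous.continuousOn
    have hexp : Continuous fun p : ℝ × ℝ => Complex.exp ((p.2:ℂ) * Complex.I) :=
      Complex.continuous_exp.comp ((Complex.continuous_ofReal.comp continuous_snd).mul
        continuous_const)
    exact (((continuous_const.sub (Complex.continuous_ofReal.comp continuous_fst)).mul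
      ((fmap_cont a).comp hexp)).add
      ((Complex.continuous_ofReal.comp continuous_fst).mul hexp)).sub continuous_const
  have hne₂ : ∀ u ∈ Icc (0:ℝ) 1, ∀ t ∈ Icc (0:ℝ) (2*π), H₂ u t ≠ 0 := by
    intro u hu t _
    simp only [hH₂]
    intro hzero
    rw [sub_eq_zero] at hzero
    set e := Complex.exp ((t:ℂ) * Complex.I) with he
    have hsq := normSq_exp t
    rw [← he] at hsq
    have hre := congrArg Complex.re hzero
    have him := congrArg Complex.im hzero
    simp only [Complex.add_re, Complex.add_im, Complex.mul_re, Complex.mul_im,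
      Complex.sub_re, Complex.sub_im, Complex.one_re, Complex.one_im,
      Complex.ofReal_re, Complex.ofReal_im, fmap_re, fmap_im, hw0_def] at hre him
    have heim : e.im = 0 := by linarith
    rw [heim] at hsq
    have hcase : e.re = 1 ∨ e.re = -1 := by
      rcases mul_self_eq_one_iff.mp (by nlinarith : e.re * e.re = 1) with h | h
      · exact Or.inl h
      · exact Or.inr h
    rcases hcase with h1 | h1
    · rw [h1] at hre
      rw [min_eq_right (by linarith : (2*a - 1 : ℝ) ≤ 1)] at hre
      have hu1 := hu.1
      have hu2 := hu.2
      nlinarith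
    · rw [h1] at hre
      rw [min_eq_left (by linarith : (-1 : ℝ) ≤ 2*a - (-1))] at hre
      nlinarith
  have hloop₂ : ∀ u ∈ Icc (0:ℝ) 1, H₂ u (2*π) = H₂ u 0 := by
    intro u _
    simp only [hH₂, hexp2π]
  obtain ⟨N₂, hN₂⟩ := chain H₂ hc₂ hne₂ hloop₂
  -- homotopy 3 : from circle-minus-w0 to the unit circle loop
  set H₃ : ℝ → ℝ → ℂ := fun u t => Complex.exp ((t:ℂ) * Complex.I) - (1 - (u:ℂ)) * w0 with hH₃
  have hc₃ : ContinuousOn (fun p : ℝ × ℝ => H₃ p.1 p.2) (Icc 0 1 ×ˢ Icc 0 (2*π)) := by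
    apply Continuous.continuousOn
    exact (Complex.continuous_exp.comp ((Complex.continuous_ofReal.comp continuous_snd).mul
      continuous_const)).sub ((continuous_const.sub
        (Complex.continuous_ofReal.comp continuous_fst)).mul continuous_const)
  have hne₃ : ∀ u ∈ Icc (0:ℝ) 1, ∀ t ∈ Icc (0:ℝ) (2*π), H₃ u t ≠ 0 := by
    intro u hu t _
    simp only [hH₃]
    intro hzero
    rw [sub_eq_zero] at hzero
    have habs := congrArg (norm : ℂ → ℝ) hzero
    rw [Complex.norm_exp_ofReal_mul_I] at habs
    have hco : (1 - (u:ℂ)) = ((1 - u : ℝ) : ℂ) := by push_cast; ring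
    rw [hco, hw0_def, ← Complex.ofReal_mul, Complex.norm_real, Real.norm_eq_abs] at habs
    have hu1 := hu.1
    have hu2 := hu.2
    have habs2 : |(1-u) * (a-1)| = (1-u) * (1-a) := by
      rw [abs_mul, _root_.abs_of_nonneg (by linarith : (0:ℝ) ≤ 1-u),
        _root_.abs_of_nonpos (by linarith : (a-1:ℝ) ≤ 0)]
      ring
    rw [habs2] at habs
    nlinarith
  have hloop₃ : ∀ u ∈ Icc (0:ℝ) 1, H₃ u (2*π) = H₃ u 0 := by
    intro u _
    simp only [hH₃, hexp2π]
  obtain ⟨N₃, hN₃⟩ := chain H₃ hc₃ hne₃ hloop₃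
  -- assemble
  set n := max (max N₁ N₂) (max N₃ 3) with hn_def
  have hnN₁ : N₁ ≤ n := le_trans (le_max_left _ _) (le_max_left _ _)
  have hnN₂ : N₂ ≤ n := le_trans (le_max_right _ _) (le_max_left _ _)
  have hnN₃ : N₃ ≤ n := le_trans (le_max_left _ _) (le_max_right _ _)
  have hn3 : 3 ≤ n := le_trans (le_max_right _ _) (le_max_right _ _)
  have e₁ := hN₁ n hnN₁
  have e₂ := hN₂ n hnN₂
  have e₃ := hN₃ n hnN₃
  have hA0 : A n (H₁ 0) = 0 := by
    have hcongr : ∀ t, H₁ 0 t = φ 0 - w0 := by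
      intro t
      simp only [hH₁]
      norm_num
    rw [A_congr hcongr]
    exact A_const n _ (sub_ne_zero.mpr (hcon 0 (mem_closedBall_self zero_le_one)))
  have hseam₁ : ∀ t, H₁ 1 t = H₂ 0 t := by
    intro t
    simp only [hH₁, hH₂]
    push_cast
    rw [one_mul, heq (exp_mem_sphere t)]
    ring
  have hseam₂ : ∀ t, H₂ 1 t = H₃ 0 t := by
    intro t
    simp only [hH₂, hH₃]
    push_cast
    ring
  have hAend : A n (H₃ 1) = 2*π := by
    have hcongr : ∀ t, H₃ 1 t = Complex.exp ((t:ℂ) * Complex.I) := by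
      intro t
      simp only [hH₃]
      push_cast
      ring
    rw [A_congr hcongr]
    exact A_circle hn3
  rw [hA0, A_congr hseam₁, e₂, A_congr hseam₂, e₃, hAend] at e₁
  linarith


/-! ### coordinate helpers -/

lemma sq_dist (w c : ℂ) : (dist w c)^2 = (w.re - c.re)^2 + (w.im - c.im)^2 := by
  rw [Complex.dist_eq, Complex.sq_norm, Complex.normSq_apply, Complex.sub_re, Complex.sub_im]
  ring

lemma norm_sq_eq (z : ℂ) : ‖z‖^2 = z.re^2 + z.im^2 := by
  rw [Complex.sq_norm, Complex.normSq_apply]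
  ring

lemma normSq_one_of_sphere {z : ℂ} (hz : z ∈ sphere (0:ℂ) 1) : z.re^2 + z.im^2 = 1 := by
  have h1 := mem_sphere_zero_iff_norm.mp hz
  have h2 := norm_sq_eq z
  rw [h1] at h2
  nlinarith

/-! ### properties of fmap -/

lemma fmap_lip (a : ℝ) (p q : ℂ) : dist (fmap a p) (fmap a q) ≤ dist p q := by
  rw [Complex.dist_eq, Complex.dist_eq, Complex.norm_def, Complex.norm_def]
  apply Real.sqrt_le_sqrt
  rw [Complex.normSq_apply, Complex.normSq_apply]
  simp only [Complex.sub_re, Complex.sub_im, fmap_re, fmap_im]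
  have hmin : |min p.re (2*a - p.re) - min q.re (2*a - q.re)| ≤ |p.re - q.re| := by
    refine le_trans (abs_min_sub_min_le_max _ _ _ _) ?_
    have h : (2*a - p.re) - (2*a - q.re) = -(p.re - q.re) := by ring
    rw [h, abs_neg, max_self]
  have h2 := mul_self_le_mul_self (abs_nonneg _) hmin
  rw [abs_mul_abs_self, abs_mul_abs_self] at h2
  nlinarith

lemma fmap_inj {a : ℝ} (ha : 0 < a) : InjOn (fmap a) (sphere (0:ℂ) 1) := by
  intro p hp q hq hpq
  have him : p.im = q.im := by
    have h := congrArg Complex.im hpq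
    rwa [fmap_im, fmap_im] at h
  have hre_eq : min p.re (2*a - p.re) = min q.re (2*a - q.re) := by
    have h := congrArg Complex.re hpq
    rwa [fmap_re, fmap_re] at h
  have hnp := normSq_one_of_sphere hp
  have hnq := normSq_one_of_sphere hq
  rw [him] at hnp
  have hsq : p.re^2 = q.re^2 := by linarith
  have hre : p.re = q.re := by
    rcases le_or_gt p.re a with h1 | h1 <;> rcases le_or_gt q.re a with h2 | h2
    · rw [min_eq_left (by linarith), min_eq_left (by linarith)] at hre_eq
      exact hre_eq
    · rw [min_eq_left (by linarith), min_eq_right (by linarith)] at hre_eq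
      nlinarith
    · rw [min_eq_right (by linarith), min_eq_left (by linarith)] at hre_eq
      nlinarith
    · rw [min_eq_right (by linarith), min_eq_right (by linarith)] at hre_eq
      linarith
  exact Complex.ext hre him

lemma fmap_I {a : ℝ} (ha : 0 ≤ a) : fmap a Complex.I = Complex.I := by
  unfold fmap
  rw [Complex.I_re, Complex.I_im, min_eq_left (by linarith)]
  simp

lemma fmap_negI {a : ℝ} (ha : 0 ≤ a) : fmap a (-Complex.I) = -Complex.I := by
  unfold fmap
  simp only [Complex.neg_re, Complex.neg_im, Complex.I_re, Complex.I_im, neg_zero]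
  rw [min_eq_left (by linarith)]
  simp


lemma dist_sq_le' {w v : ℂ} {r : ℝ} (h : dist w v ≤ r) :
    (w.re - v.re)^2 + (w.im - v.im)^2 ≤ r^2 := by
  have h0 := dist_nonneg (x := w) (y := v)
  have h2 := sq_dist w v
  nlinarith

lemma dist_sq_ge' {w v : ℂ} {r : ℝ} (hr : 0 ≤ r) (h : r ≤ dist w v) :
    r^2 ≤ (w.re - v.re)^2 + (w.im - v.im)^2 := by
  have h2 := sq_dist w v
  nlinarith [dist_nonneg (x := w) (y := v)]

lemma dist_sq_eq' {w v : ℂ} {r : ℝ} (h : dist w v = r) :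
    (w.re - v.re)^2 + (w.im - v.im)^2 = r^2 := by
  have h2 := sq_dist w v
  rw [h] at h2
  linarith

lemma arith1 {a x y : ℝ} (ha : 0 < a) (hn : x^2 + y^2 = 1)
    (hd : 1 ≤ (x - 2*a)^2 + y^2) : x ≤ a := by nlinarith

lemma arith2 {a x y : ℝ} (ha : 0 < a) (hle : x^2 + y^2 ≤ 1)
    (heq : (x - 2*a)^2 + y^2 = 1) : x ≤ a := by nlinarith

lemma arith3 {a x y : ℝ} (ha : 0 < a) (ha2 : a ≤ 1/16)
    (h1 : x^2 + y^2 ≤ 1) (h2 : 1 ≤ (x - 2*a)^2 + y^2)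
    (h3 : x^2 + y^2 ≤ 1 - 16*a) : False := by
  have hx : -1 ≤ x := by nlinarith [sq_nonneg (x+1), sq_nonneg y]
  nlinarith [mul_nonneg ha.le (by linarith : (0:ℝ) ≤ x + 1)]

end ExtSqrtTwoAux

open ExtSqrtTwoAux

set_option maxHeartbeats 1000000 in
/-- **No extension constant below √2.** For every `C < √2` there is an injective
1-Lipschitz map `f` of the unit circle into the plane such that every homeomorphism `F`
of the closed unit disk onto its image extending `f` satisfies `Lip(F) > C`; hence any
universal constant `C` with `Lip(F) ≤ C·Lip(f)` for homeomorphic extensions of circle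
embeddings must satisfy `C ≥ √2`. -/
theorem extension_constant_ge_sqrt_two (C : ℝ) (hC : C < Real.sqrt 2) :
    ∃ f : ℂ → ℂ, InjOn f (sphere (0:ℂ) 1) ∧
      (∀ p ∈ sphere (0:ℂ) 1, ∀ q ∈ sphere (0:ℂ) 1, dist (f p) (f q) ≤ dist p q) ∧
      ∀ F : ℂ → ℂ, ContinuousOn F (closedBall (0:ℂ) 1) →
        InjOn F (closedBall (0:ℂ) 1) →
        EqOn F f (sphere (0:ℂ) 1) →
        ∃ p ∈ closedBall (0:ℂ) 1, ∃ q ∈ closedBall (0:ℂ) 1,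
          C * dist p q < dist (F p) (F q) := by
  have hs2 : Real.sqrt 2 ^ 2 = 2 := Real.sq_sqrt (by norm_num)
  have hs2' : (0:ℝ) ≤ Real.sqrt 2 := Real.sqrt_nonneg 2
  set C' := max C 1 with hC'_def
  have hC'1 : 1 ≤ C' := le_max_right _ _
  have hC'lt : C' < Real.sqrt 2 := by
    apply max_lt hC
    nlinarith
  have hC'sq : C'^2 < 2 := by nlinarith
  set a := (2 - C'^2)/16 with ha_def
  have ha : 0 < a := by rw [ha_def]; linarith
  have ha2 : a ≤ 1/16 := by rw [ha_def]; nlinarith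
  have hCsqa : C'^2 = 2 - 16*a := by rw [ha_def]; ring
  refine ⟨fmap a, fmap_inj ha, fun p _ q _ => fmap_lip a p q, ?_⟩
  intro F hFc hFi hFeq
  by_contra hcon
  push_neg at hcon
  have hlip : ∀ p ∈ closedBall (0:ℂ) 1, ∀ q ∈ closedBall (0:ℂ) 1,
      dist (F p) (F q) ≤ C' * dist p q := by
    intro p hp q hq
    exact le_trans (hcon p hp q hq)
      (mul_le_mul_of_nonneg_right (le_max_left _ _) dist_nonneg)
  -- F fixes ±i
  have hI_s : Complex.I ∈ sphere (0:ℂ) 1 := by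
    rw [mem_sphere_zero_iff_norm, Complex.norm_I]
  have hnI_s : -Complex.I ∈ sphere (0:ℂ) 1 := by
    rw [mem_sphere_zero_iff_norm, norm_neg, Complex.norm_I]
  have hFI : F Complex.I = Complex.I := by rw [hFeq hI_s, fmap_I ha.le]
  have hFnI : F (-Complex.I) = -Complex.I := by rw [hFeq hnI_s, fmap_negI ha.le]
  have h0cb : (0:ℂ) ∈ closedBall (0:ℂ) 1 := mem_closedBall_self zero_le_one
  have hIcb := sphere_subset_closedBall hI_s
  have hnIcb := sphere_subset_closedBall hnI_s
  -- parallelogram estimate on F 0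
  have hdist0I : dist (0:ℂ) Complex.I = 1 := by
    rw [dist_eq_norm, zero_sub, norm_neg, Complex.norm_I]
  have hdist0nI : dist (0:ℂ) (-Complex.I) = 1 := by
    rw [dist_eq_norm, zero_sub, neg_neg, Complex.norm_I]
  have hd1 : dist (F 0) Complex.I ≤ C' := by
    have h := hlip 0 h0cb Complex.I hIcb
    rwa [hFI, hdist0I, mul_one] at h
  have hd2 : dist (F 0) (-Complex.I) ≤ C' := by
    have h := hlip 0 h0cb (-Complex.I) hnIcb
    rwa [hFnI, hdist0nI, mul_one] at h
  have hsq1 := dist_sq_le' hd1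
  rw [Complex.I_re, Complex.I_im, sub_zero] at hsq1
  have hsq2 := dist_sq_le' hd2
  rw [Complex.neg_re, Complex.neg_im, Complex.I_re, Complex.I_im, neg_zero, sub_zero] at hsq2
  have hF0sq : ((F 0).re)^2 + ((F 0).im)^2 ≤ C'^2 - 1 := by nlinarith [hsq1, hsq2]
  -- the degree argument produces an interior preimage of a - 1
  obtain ⟨z0, hz0cb, hz0⟩ := deg a ha ha2 F hFc hFeq
  have hz0ball : z0 ∈ ball (0:ℂ) 1 := by
    rw [mem_ball]
    rcases lt_or_eq_of_le (mem_closedBall.mp hz0cb) with h | h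
    · exact h
    · exfalso
      have hz0s : z0 ∈ sphere (0:ℂ) 1 := by rwa [mem_sphere]
      have hfz := hFeq hz0s
      rw [hz0] at hfz
      have him := congrArg Complex.im hfz
      rw [fmap_im] at him
      simp only [Complex.ofReal_im] at him
      have hre := congrArg Complex.re hfz
      rw [fmap_re] at hre
      simp only [Complex.ofReal_re] at hre
      have hn := normSq_one_of_sphere hz0s
      rw [← him] at hn
      have hcase : z0.re = 1 ∨ z0.re = -1 := mul_self_eq_one_iff.mp (by nlinarith)
      rcases hcase with h1 | h1 <;> rw [h1] at hre
      · rw [min_eq_right (by linarith)] at hre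
        linarith
      · rw [min_eq_left (by linarith)] at hre
        linarith
  -- the crescent interior Ω
  set c : ℂ := ((2*a : ℝ) : ℂ) with hc_def
  set Ω : Set ℂ := ball (0:ℂ) 1 ∩ (closedBall c 1)ᶜ with hΩ_def
  have hΩopen : IsOpen Ω := isOpen_ball.inter (isOpen_compl_iff.mpr isClosed_closedBall)
  have hcre : c.re = 2*a := by rw [hc_def]; simp
  have hcim : c.im = 0 := by rw [hc_def]; simp
  have hclosure_compl : closure ((closedBall c 1)ᶜ) ⊆ {w : ℂ | 1 ≤ dist w c} := by
    apply closure_minimal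
    · intro w hw
      simp only [mem_compl_iff, mem_closedBall, not_le] at hw
      exact le_of_lt hw
    · exact isClosed_le continuous_const (continuous_id.dist continuous_const)
  -- frontier of Ω lies on the crescent curve
  have hfront : frontier Ω ⊆ fmap a '' sphere (0:ℂ) 1 := by
    intro w hw
    have hw2 := frontier_inter_subset (ball (0:ℂ) 1) ((closedBall c 1)ᶜ) hw
    rcases hw2 with ⟨hw2a, hw2b⟩ | ⟨hw2a, hw2b⟩
    · rw [frontier_ball _ one_ne_zero] at hw2a
      have hge : 1 ≤ dist w c := hclosure_compl hw2b
      have hn := normSq_one_of_sphere hw2a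
      have hdsq := dist_sq_ge' zero_le_one hge
      rw [hcre, hcim, sub_zero, one_pow] at hdsq
      have hwa : w.re ≤ a := arith1 ha hn hdsq
      refine ⟨w, hw2a, ?_⟩
      unfold fmap
      rw [min_eq_left (by linarith)]
      exact Complex.re_add_im w
    · rw [closure_ball _ one_ne_zero, mem_closedBall] at hw2a
      rw [frontier_compl, frontier_closedBall _ one_ne_zero, mem_sphere] at hw2b
      have hle := dist_sq_le' hw2a
      rw [Complex.zero_re, Complex.zero_im, sub_zero, sub_zero, one_pow] at hle
      have heqd := dist_sq_eq' hw2b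
      rw [hcre, hcim, sub_zero, one_pow] at heqd
      have hwa : w.re ≤ a := arith2 ha hle heqd
      set z : ℂ := ((2*a - w.re : ℝ) : ℂ) + ((w.im : ℝ) : ℂ) * Complex.I with hz_def
      have hzre : z.re = 2*a - w.re := by rw [hz_def]; simp
      have hzim : z.im = w.im := by rw [hz_def]; simp
      have hzs : z ∈ sphere (0:ℂ) 1 := by
        rw [mem_sphere_zero_iff_norm]
        have h1 : ‖z‖^2 = 1 := by
          rw [norm_sq_eq, hzre, hzim]
          linear_combination heqd
        rcases sq_eq_one_iff.mp h1 with h | h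
        · exact h
        · exfalso
          linarith [norm_nonneg z]
      refine ⟨z, hzs, ?_⟩
      apply Complex.ext
      · rw [fmap_re, hzre]
        rw [show 2*a - (2*a - w.re) = w.re by ring]
        exact min_eq_right (by linarith)
      · rw [fmap_im, hzim]
  -- F 0 is not in the closure of Ω
  have hF0not : F 0 ∉ closure Ω := by
    intro hF0
    have h1 : F 0 ∈ closedBall (0:ℂ) 1 := by
      have hsub : closure Ω ⊆ closure (ball (0:ℂ) 1) := closure_mono inter_subset_left
      rw [closure_ball _ one_ne_zero] at hsub
      exact hsub hF0
    have h2 : 1 ≤ dist (F 0) c :=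
      hclosure_compl ((closure_mono inter_subset_right) hF0)
    have hle := dist_sq_le' (mem_closedBall.mp h1)
    rw [Complex.zero_re, Complex.zero_im, sub_zero, sub_zero, one_pow] at hle
    have hge := dist_sq_ge' zero_le_one h2
    rw [hcre, hcim, sub_zero, one_pow] at hge
    have h3 : ((F 0).re)^2 + ((F 0).im)^2 ≤ 1 - 16*a := by
      rw [hCsqa] at hF0sq
      linarith
    exact arith3 ha ha2 hle hge h3
  -- (a-1 : ℂ) lies in Ω
  have hw0mem : ((a - 1 : ℝ) : ℂ) ∈ Ω := by
    rw [hΩ_def]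
    constructor
    · rw [mem_ball, dist_zero_right, Complex.norm_real, Real.norm_eq_abs,
        _root_.abs_of_nonpos (by linarith)]
      linarith
    · simp only [mem_compl_iff, mem_closedBall, not_le]
      rw [hc_def, dist_eq_norm,
        show ((a - 1 : ℝ) : ℂ) - ((2*a:ℝ):ℂ) = ((-a - 1 : ℝ) : ℂ) by push_cast; ring,
        Complex.norm_real, Real.norm_eq_abs, _root_.abs_of_nonpos (by linarith)]
      linarith
  -- the image of the open ball is preconnected and avoids the crescent curve
  have hVpre : IsPreconnected (F '' ball (0:ℂ) 1) :=
    (convex_ball (0:ℂ) 1).isPreconnected.image F (hFc.mono ball_subset_closedBall)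
  have hVdisj : ∀ w ∈ F '' ball (0:ℂ) 1, w ∉ fmap a '' sphere (0:ℂ) 1 := by
    rintro w ⟨z, hz, rfl⟩ ⟨ζ, hζ, hζe⟩
    have heqz : F ζ = F z := by rw [hFeq hζ, hζe]
    have hzζ := hFi (sphere_subset_closedBall hζ) (ball_subset_closedBall hz) heqz
    rw [← hzζ, mem_ball, dist_zero_right] at hz
    rw [mem_sphere_zero_iff_norm] at hζ
    rw [hζ] at hz
    exact lt_irrefl _ hz
  have hsub : F '' ball (0:ℂ) 1 ⊆ Ω ∪ (closure Ω)ᶜ := by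
    intro w hw
    by_cases h : w ∈ closure Ω
    · left
      have hfr : w ∉ frontier Ω := fun hf => hVdisj w hw (hfront hf)
      rw [frontier, mem_diff] at hfr
      push_neg at hfr
      have h4 := hfr h
      rwa [hΩopen.interior_eq] at h4
    · right
      exact h
  have hne1 : (F '' ball (0:ℂ) 1 ∩ Ω).Nonempty :=
    ⟨((a-1:ℝ):ℂ), ⟨z0, hz0ball, hz0⟩, hw0mem⟩
  have hne2 : (F '' ball (0:ℂ) 1 ∩ (closure Ω)ᶜ).Nonempty :=
    ⟨F 0, ⟨0, mem_ball_self one_pos, rfl⟩, hF0not⟩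
  obtain ⟨x, _, hxΩ, hxc⟩ := hVpre Ω (closure Ω)ᶜ hΩopen
    (isClosed_closure.isOpen_compl) hsub hne1 hne2
  exact hxc (subset_closure hxΩ)
end
end

section
/- Let ψ : 𝕋 → 𝕋 be a normalized circle homeomorphism. Let σ ⊂ 𝕋 be an arc of length π/3 such that the image arc ψ(σ) has length at least π/3, and let e^{iθ} be the midpoint of σ. Set z₀ = e^{−π/6}·e^{iθ} (so the associated δ equals π/6) and let γ₁ = {e^{it} : θ−π/3 ≤ t ≤ θ−π/6} and γ₄ = {e^{it} : θ+π/6 ≤ t ≤ θ+π/3} be the arcs associated with z₀. Then dist(ψ(γ₁), ψ(γ₄)) ≥ 1. -/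
open Complex Metric Set Real

/-- Euclidean distance between two subsets of the plane. -/
noncomputable def setDist (A B : Set ℂ) : ℝ := sInf (Set.image2 dist A B)
private lemma exp_mem_sphere (t : ℝ) : Complex.exp (t * Complex.I) ∈ sphere (0:ℂ) 1 := by
  simp [mem_sphere_iff_norm, Complex.norm_exp_ofReal_mul_I]

private lemma exp_inj {s t : ℝ} (h : Complex.exp (s * Complex.I) = Complex.exp (t * Complex.I))
    (hst : |s - t| < 2 * π) : s = t := by
  obtain ⟨n, hn⟩ := Complex.exp_eq_exp_iff_exists_int.mp h
  have him := congrArg Complex.im hn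
  simp [Complex.mul_im] at him
  -- him : s = t + n * (2 * π)  (hopefully)
  have hn0 : n = 0 := by
    have h1 : |(n : ℝ)| * (2 * π) < 2 * π := by
      have : s - t = n * (2 * π) := by linarith
      calc |(n:ℝ)| * (2*π) = |(n:ℝ) * (2*π)| := by
            rw [abs_mul, abs_of_pos (by positivity : (0:ℝ) < 2*π)]
        _ = |s - t| := by rw [this]
        _ < 2*π := hst
    have h2 : |(n : ℝ)| < 1 := by
      have hp : (0:ℝ) < 2 * π := by positivity
      nlinarith [abs_nonneg (n:ℝ)]
    have h3 : |n| < 1 := by exact_mod_cast h2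
    rw [abs_lt] at h3; omega
  rw [hn0] at him; push_cast at him; linarith

private lemma arg_exp_self {s : ℝ} (h : s ∈ Set.Ioc (-π) π) :
    Complex.arg (Complex.exp (s * Complex.I)) = s := by
  rw [Complex.arg_exp_mul_I, toIocMod_eq_self]
  constructor
  · exact h.1
  · linarith [h.2]

private lemma exp_mem_slitPlane {s : ℝ} (h1 : -(2*π/3) ≤ s) (h2 : s ≤ 2*π/3) :
    Complex.exp (s * Complex.I) ∈ Complex.slitPlane := by
  rw [Complex.mem_slitPlane_iff, Complex.exp_ofReal_mul_I_re, Complex.exp_ofReal_mul_I_im]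
  by_cases hs : Real.sin s = 0
  · left
    obtain ⟨n, hn⟩ := Real.sin_eq_zero_iff.mp hs
    have hpi := Real.pi_pos
    have hn0 : n = 0 := by
      rcases lt_trichotomy n 0 with h | h | h
      · exfalso
        have hle : n ≤ -1 := by omega
        have : (n : ℝ) ≤ -1 := by exact_mod_cast hle
        nlinarith
      · exact h
      · exfalso
        have : (1 : ℝ) ≤ n := by exact_mod_cast h
        nlinarith
    rw [hn0] at hn
    simp at hn
    rw [← hn, Real.cos_zero]; norm_num
  · right; exact hs

private lemma dist_exp_exp (s t : ℝ) :
    dist (Complex.exp (s * Complex.I)) (Complex.exp (t * Complex.I))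
      = 2 * |Real.sin ((s - t) / 2)| := by
  rw [Complex.dist_eq, Complex.norm_def]
  have h1 : Complex.normSq (Complex.exp (s * Complex.I) - Complex.exp (t * Complex.I))
      = (2 * |Real.sin ((s - t) / 2)|) ^ 2 := by
    rw [Complex.normSq_apply, Complex.sub_re, Complex.sub_im,
      Complex.exp_ofReal_mul_I_re, Complex.exp_ofReal_mul_I_im,
      Complex.exp_ofReal_mul_I_re, Complex.exp_ofReal_mul_I_im,
      mul_pow, _root_.sq_abs]
    have hc : Real.cos (s - t) = 1 - 2 * Real.sin ((s-t)/2) ^ 2 := by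
      have h1 : Real.cos (s - t) = 2 * Real.cos ((s-t)/2) ^ 2 - 1 := by
        conv_lhs => rw [show s - t = 2 * ((s-t)/2) by ring]
        exact Real.cos_two_mul _
      have h2 := Real.sin_sq_add_cos_sq ((s-t)/2)
      nlinarith
    have hcsub := Real.cos_sub s t
    nlinarith [Real.sin_sq_add_cos_sq s, Real.sin_sq_add_cos_sq t]
  rw [h1, Real.sqrt_sq (by positivity)]

private lemma sin_half_ge {x : ℝ} (h1 : π/3 ≤ |x|) (h2 : |x| ≤ 4*π/3) :
    1 ≤ 2 * |Real.sin (x/2)| := by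
  have hpi := Real.pi_pos
  have habs : |Real.sin (x/2)| = Real.sin (|x|/2) := by
    rcases abs_cases x with ⟨h, _⟩ | ⟨h, _⟩
    · rw [h]
      exact _root_.abs_of_nonneg (Real.sin_nonneg_of_nonneg_of_le_pi (by positivity) (by
        rw [h] at h2; linarith))
    · rw [h]
      rw [_root_.abs_of_nonpos (by
        have : Real.sin (-(x/2)) ≥ 0 := Real.sin_nonneg_of_nonneg_of_le_pi (by
          rw [h] at h1; linarith) (by rw [h] at h2; linarith)
        rw [Real.sin_neg] at this; linarith)]
      rw [← Real.sin_neg]; congr 1; ring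
  rw [habs]
  set y := |x| / 2 with hy
  have hy1 : π/6 ≤ y := by rw [hy]; linarith
  have hy2 : y ≤ 2*π/3 := by rw [hy]; linarith
  have key : 1/2 ≤ Real.sin y := by
    rcases le_or_gt y (π/2) with hc | hc
    · calc (1:ℝ)/2 = Real.sin (π/6) := (Real.sin_pi_div_six).symm
        _ ≤ Real.sin y := Real.strictMonoOn_sin.monotoneOn
            ⟨by linarith, by linarith⟩ ⟨by linarith, hc⟩ hy1
    · have : Real.sin y = Real.sin (π - y) := (Real.sin_pi_sub y).symm
      rw [this]
      calc (1:ℝ)/2 = Real.sin (π/6) := (Real.sin_pi_div_six).symm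
        _ ≤ Real.sin (π - y) := Real.strictMonoOn_sin.monotoneOn
            ⟨by linarith, by linarith⟩ ⟨by linarith, by linarith⟩ (by linarith)
  linarith

/-- Let `ψ` be a normalized circle homeomorphism and `σ = {e^{it} : |t − θ| ≤ π/6}` an
arc of length `π/3` whose image `ψ(σ)` has length at least `π/3` (equivalently, contains
an arc of length `π/3`).  With `z₀ = e^{−π/6}e^{iθ}` (so `δ = π/6`) and the associated
arcs `γ₁ = {e^{it} : θ−π/3 ≤ t ≤ θ−π/6}`, `γ₄ = {e^{it} : θ+π/6 ≤ t ≤ θ+π/3}`,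
one has `dist(ψ(γ₁), ψ(γ₄)) ≥ 1`. -/
theorem dist_images_ge_one (ψ : ℂ → ℂ)
    (hcont : ContinuousOn ψ (sphere (0:ℂ) 1))
    (hbij : BijOn ψ (sphere (0:ℂ) 1) (sphere (0:ℂ) 1))
    (hnorm : IsNormalized ψ) (θ : ℝ)
    (hσ : ∃ θ'' : ℝ, arcCC θ'' (θ'' + π / 3) ⊆ ψ '' arcCC (θ - π / 6) (θ + π / 6)) :
    1 ≤ setDist (ψ '' arcCC (θ - π / 3) (θ - π / 6))
        (ψ '' arcCC (θ + π / 6) (θ + π / 3)) := by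
  have hpi := Real.pi_pos
  obtain ⟨θ'', hA⟩ := hσ
  obtain ⟨θ', hτ'⟩ := hnorm (θ - π / 3)
  have hbig : ψ '' arcCC (θ - π/3) (θ + π/3) ⊆ arcCC θ' (θ' + 4 * π / 3) := by
    have he : θ - π / 3 + 2 * π / 3 = θ + π / 3 := by ring
    rwa [he] at hτ'
  have hmem : ∀ s ∈ Icc (θ - π/3) (θ + π/3),
      ψ (Complex.exp (s * Complex.I)) ∈ arcCC θ' (θ' + 4 * π / 3) := by
    intro s hs
    refine hbig ⟨Complex.exp (s * Complex.I), ⟨s, ?_, rfl⟩, rfl⟩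
    exact ⟨by linarith [hs.1], by linarith [hs.2]⟩
  set c : ℝ := θ' + 2 * π / 3 with hc
  set g : ℂ → ℝ := fun w => c + Complex.arg (w * Complex.exp (-(c:ℂ) * Complex.I)) with hg
  have hexpc : ∀ t : ℝ, Complex.exp (t * Complex.I) * Complex.exp (-(c:ℂ) * Complex.I)
      = Complex.exp ((t - c : ℝ) * Complex.I) := by
    intro t
    rw [← Complex.exp_add]; congr 1; push_cast; ring
  have hgτ : ∀ t ∈ Icc θ' (θ' + 4 * π / 3), g (Complex.exp (t * Complex.I)) = t := by
    intro t ht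
    have hts : t - c ∈ Set.Ioc (-π) π := by
      constructor
      · rw [hc]; linarith [ht.1]
      · rw [hc]; linarith [ht.2]
    simp only [hg]
    rw [hexpc, arg_exp_self hts]; ring
  have hgw : ∀ w ∈ arcCC θ' (θ' + 4 * π / 3),
      Complex.exp ((g w : ℝ) * Complex.I) = w ∧ g w ∈ Icc θ' (θ' + 4 * π / 3) := by
    rintro _ ⟨t, ht, rfl⟩
    rw [hgτ t ht]; exact ⟨rfl, ht⟩
  set F : ℝ → ℝ := fun s => g (ψ (Complex.exp (s * Complex.I))) with hF
  have hFval : ∀ s ∈ Icc (θ - π/3) (θ + π/3),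
      Complex.exp ((F s : ℝ) * Complex.I) = ψ (Complex.exp (s * Complex.I)) :=
    fun s hs => (hgw _ (hmem s hs)).1
  have hFrange : ∀ s ∈ Icc (θ - π/3) (θ + π/3), F s ∈ Icc θ' (θ' + 4 * π / 3) :=
    fun s hs => (hgw _ (hmem s hs)).2
  clear_value F
  have hFcont : ContinuousOn F (Icc (θ - π/3) (θ + π/3)) := by
    intro s hs
    have h1 : ContinuousWithinAt (fun u : ℝ => ψ (Complex.exp (u * Complex.I)))
        (Icc (θ - π/3) (θ + π/3)) s := by
      refine ContinuousWithinAt.comp (hcont.continuousWithinAt (exp_mem_sphere s))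
        (Continuous.continuousWithinAt ?_) (fun u _ => exp_mem_sphere u)
      exact (Complex.continuous_ofReal.mul continuous_const).cexp
    obtain ⟨t, ht, hwt⟩ := hmem s hs
    have hslit : ψ (Complex.exp (s * Complex.I)) * Complex.exp (-(c:ℂ) * Complex.I)
        ∈ Complex.slitPlane := by
      rw [← hwt, hexpc]
      refine exp_mem_slitPlane ?_ ?_
      · rw [hc]; linarith [ht.1]
      · rw [hc]; linarith [ht.2]
    have harg : ContinuousAt Complex.arg
        (ψ (Complex.exp (s * Complex.I)) * Complex.exp (-(c:ℂ) * Complex.I)) :=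
      Complex.continuousAt_arg hslit
    have hmul : ContinuousAt (fun w : ℂ => w * Complex.exp (-(c:ℂ) * Complex.I))
        (ψ (Complex.exp (s * Complex.I))) := (continuous_mul_right _).continuousAt
    have h2 : ContinuousAt g (ψ (Complex.exp (s * Complex.I))) := by
      rw [hg]
      exact continuousAt_const.add
        (ContinuousAt.comp (f := fun w : ℂ => w * Complex.exp (-(c:ℂ) * Complex.I)) harg hmul)
    have h3 := ContinuousAt.comp_continuousWithinAt
      (f := fun u : ℝ => ψ (Complex.exp (u * Complex.I))) h2 h1
    rw [hF]
    exact h3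
  have hFinj : InjOn F (Icc (θ - π/3) (θ + π/3)) := by
    intro s hs t ht hst
    have h1 := hFval s hs
    have h2 := hFval t ht
    have h3 : ψ (Complex.exp (s * Complex.I)) = ψ (Complex.exp (t * Complex.I)) := by
      rw [← h1, ← h2, hst]
    have hxy := hbij.injOn (exp_mem_sphere s) (exp_mem_sphere t) h3
    refine exp_inj hxy ?_
    rw [abs_lt]
    constructor <;> [linarith [hs.1, ht.2]; linarith [hs.2, ht.1]]
  obtain ⟨xa, hxa, ha⟩ := hA ⟨θ'', ⟨le_refl _, by linarith⟩, rfl⟩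
  obtain ⟨ua, hua, rfl⟩ := hxa
  obtain ⟨xb, hxb, hb⟩ := hA ⟨θ'' + π/3, ⟨by linarith, le_refl _⟩, rfl⟩
  obtain ⟨ub, hub, rfl⟩ := hxb
  have ha' : ψ (Complex.exp ((ua : ℝ) * Complex.I)) = Complex.exp ((θ'' : ℝ) * Complex.I) := ha
  have hb' : ψ (Complex.exp ((ub : ℝ) * Complex.I))
      = Complex.exp ((θ'' + π/3 : ℝ) * Complex.I) := hb
  have huaI : ua ∈ Icc (θ - π/3) (θ + π/3) := ⟨by linarith [hua.1], by linarith [hua.2]⟩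
  have hubI : ub ∈ Icc (θ - π/3) (θ + π/3) := ⟨by linarith [hub.1], by linarith [hub.2]⟩
  have hkey : F ub = F ua + π / 3 := by
    have e1 : Complex.exp ((F ua : ℝ) * Complex.I) = Complex.exp ((θ'' : ℝ) * Complex.I) := by
      rw [hFval ua huaI, ha']
    have e2 : Complex.exp ((F ub : ℝ) * Complex.I)
        = Complex.exp ((θ'' + π/3 : ℝ) * Complex.I) := by
      rw [hFval ub hubI, hb']
    have e3 : Complex.exp ((F ub : ℝ) * Complex.I)
        = Complex.exp ((F ua + π/3 : ℝ) * Complex.I) := by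
      rw [e2]
      have h4 : ((F ua + π/3 : ℝ) : ℂ) * Complex.I
          = (F ua : ℝ) * Complex.I + ((π/3 : ℝ) : ℂ) * Complex.I := by push_cast; ring
      rw [h4, Complex.exp_add, e1, ← Complex.exp_add]
      congr 1; push_cast; ring
    have hb1 := hFrange ua huaI
    have hb2 := hFrange ub hubI
    refine exp_inj e3 ?_
    rw [abs_lt]
    constructor <;> [linarith [hb2.1, hb1.2]; linarith [hb2.2, hb1.1]]
  apply le_csInf
  · refine ⟨dist (ψ (Complex.exp ((θ - π/3 : ℝ) * Complex.I)))
        (ψ (Complex.exp ((θ + π/6 : ℝ) * Complex.I))), ?_⟩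
    exact mem_image2_of_mem
      (mem_image_of_mem ψ ⟨θ - π/3, ⟨le_refl _, by linarith⟩, rfl⟩)
      (mem_image_of_mem ψ ⟨θ + π/6, ⟨le_refl _, by linarith⟩, rfl⟩)
  rintro d ⟨p, hp, q, hq, rfl⟩
  obtain ⟨xp, hxp, rfl⟩ := hp
  obtain ⟨s, hs, rfl⟩ := hxp
  obtain ⟨xq, hxq, rfl⟩ := hq
  obtain ⟨t, ht, rfl⟩ := hxq
  have hsI : s ∈ Icc (θ - π/3) (θ + π/3) := ⟨hs.1, by linarith [hs.2]⟩
  have htI : t ∈ Icc (θ - π/3) (θ + π/3) := ⟨by linarith [ht.1], ht.2⟩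
  show 1 ≤ dist (ψ (Complex.exp (s * Complex.I))) (ψ (Complex.exp (t * Complex.I)))
  rw [← hFval s hsI, ← hFval t htI, dist_exp_exp]
  refine sin_half_ge ?_ ?_
  · rcases ContinuousOn.strictMonoOn_of_injOn_Icc' (by linarith : θ - π/3 ≤ θ + π/3)
        hFcont hFinj with hm | hm
    · have l1 : F s ≤ F ua := hm.monotoneOn hsI huaI (by linarith [hs.2, hua.1])
      have l2 : F ub ≤ F t := hm.monotoneOn hubI htI (by linarith [hub.2, ht.1])
      calc π/3 ≤ F t - F s := by linarith
        _ ≤ |F t - F s| := le_abs_self _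
        _ = |F s - F t| := abs_sub_comm _ _
    · have l1 : F ub ≤ F s := hm.antitoneOn hsI hubI (by linarith [hs.2, hub.1])
      have l2 : F t ≤ F ua := hm.antitoneOn huaI htI (by linarith [hua.2, ht.1])
      calc π/3 ≤ F s - F t := by linarith
        _ ≤ |F s - F t| := le_abs_self _
  · have hb1 := hFrange s hsI
    have hb2 := hFrange t htI
    rw [abs_le]
    constructor <;> [linarith [hb1.1, hb2.2]; linarith [hb1.2, hb2.1]]
end
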